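/- arXiv:1802.02362 — 8 statements merged into one kernel-verified Lean document; each statement's English description precedes it below -/
import Mathlib

section
/- Let f = (f^1, …, f^d) be functions with each f^i ∈ C²_{b,0}(U) and f^i(u) = u_i·(1 + o(|u|)) as u → 0 in U, for i = 1, …, d. Then every H ∈ C²_{b,0}(U) admits a unique decomposition H = Σ_{i=1}^d α^f_i(H) f^i + Σ_{i,j=1}^d β^f_{ij}(H) f^i f^j + H̄^f, where the α^f_i(H) are real numbers, (β^f_{ij}(H)) is a symmetric real d×d matrix, and H̄^f : U → ℝ is continuous, bounded, and satisfies H̄^f(u) = o(|f(u)|²) as u → 0 in U. -/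
open Filter Asymptotics Topology

lemma normsq_eq {d : ℕ} (u : EuclideanSpace ℝ (Fin d)) : ‖u‖ ^ 2 = ∑ i, (u i) ^ 2 := by
  rw [EuclideanSpace.norm_eq, Real.sq_sqrt (by positivity)]
  simp [Real.norm_eq_abs, sq_abs]

lemma abs_coord_le {d : ℕ} (u : EuclideanSpace ℝ (Fin d)) (i : Fin d) : |u i| ≤ ‖u‖ := by
  rw [EuclideanSpace.norm_eq]
  calc |u i| = Real.sqrt ((u i) ^ 2) := by rw [Real.sqrt_sq_eq_abs]
  _ ≤ _ := by
      apply Real.sqrt_le_sqrt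
      simp only [Real.norm_eq_abs, sq_abs]
      exact Finset.single_le_sum (fun j _ => sq_nonneg (u j)) (Finset.mem_univ i)

lemma key_poly {L Q : ℝ} (h : (fun t : ℝ => t * L + t ^ 2 * Q) =o[𝓝 0] fun t => t ^ 2) :
    L = 0 ∧ Q = 0 := by
  have hsq : (fun t : ℝ => t ^ 2) =O[𝓝 0] fun t : ℝ => t := by
    have ht : (fun t : ℝ => t) =o[𝓝 0] (fun _ : ℝ => (1 : ℝ)) :=
      (isLittleO_one_iff ℝ).2 (by exact (continuous_id.tendsto (0:ℝ)))
    have := ht.mul_isBigO (isBigO_refl (fun t : ℝ => t) (𝓝 0))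
    exact (this.congr (fun t => by ring) (fun t => by ring)).isBigO
  have hL : L = 0 := by
    have h1 : (fun t : ℝ => t * L + t ^ 2 * Q) =o[𝓝 0] fun t : ℝ => t := h.trans_isBigO hsq
    have h2 : Tendsto (fun t : ℝ => (t * L + t ^ 2 * Q) / t) (𝓝 0) (𝓝 0) :=
      (isLittleO_iff_tendsto (fun t ht => by simp [ht])).1 h1
    have h3 : Tendsto (fun t : ℝ => L + t * Q) (𝓝 0) (𝓝 L) := by
      have hc : Continuous (fun t : ℝ => L + t * Q) :=
        continuous_const.add (continuous_id.mul continuous_const)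
      simpa using hc.tendsto (0:ℝ)
    have h4 : Tendsto (fun t : ℝ => (t * L + t ^ 2 * Q) / t) (𝓝[≠] 0) (𝓝 L) := by
      refine Tendsto.congr' ?_ (h3.mono_left nhdsWithin_le_nhds)
      filter_upwards [self_mem_nhdsWithin] with t ht
      have ht' : t ≠ 0 := ht
      field_simp
    exact tendsto_nhds_unique h4 (h2.mono_left nhdsWithin_le_nhds)
  refine ⟨hL, ?_⟩
  rw [hL] at h
  have h2 : Tendsto (fun t : ℝ => (t * 0 + t ^ 2 * Q) / t ^ 2) (𝓝 0) (𝓝 0) :=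
    (isLittleO_iff_tendsto (fun t ht => by
      have : t = 0 := by nlinarith [sq_nonneg t, sq_abs t]
      simp [this])).1 h
  have h4 : Tendsto (fun t : ℝ => (t * 0 + t ^ 2 * Q) / t ^ 2) (𝓝[≠] 0) (𝓝 Q) := by
    refine Tendsto.congr' ?_ tendsto_const_nhds
    filter_upwards [self_mem_nhdsWithin] with t ht
    have ht' : t ≠ 0 := ht
    field_simp
    ring
  exact tendsto_nhds_unique h4 (h2.mono_left nhdsWithin_le_nhds)


/-- `H ∈ C²_{b,0}(U)` : `H` is continuous and bounded on `U` and admits a second order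
expansion `H(u) = Σ αᵢ uᵢ + Σ βᵢⱼ uᵢ uⱼ + o(|u|²)` as `u → 0` in `U`. -/
def MemCb20 {d : ℕ} (U : Set (EuclideanSpace ℝ (Fin d)))
    (H : EuclideanSpace ℝ (Fin d) → ℝ) : Prop :=
  ContinuousOn H U ∧ (∃ M : ℝ, ∀ u ∈ U, |H u| ≤ M) ∧
    ∃ (a : Fin d → ℝ) (b : Fin d → Fin d → ℝ),
      (fun u : EuclideanSpace ℝ (Fin d) =>
          H u - (∑ i, a i * u i) - ∑ i, ∑ j, b i j * u i * u j)
        =o[𝓝[U] 0] fun u => ‖u‖ ^ 2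

/-- Lemma 2.1 (unique decomposition with respect to a specific function `f`). -/
theorem stmt0 {d : ℕ} (hd : 1 ≤ d) (U : Set (EuclideanSpace ℝ (Fin d)))
    (hUc : IsClosed U) (hU0 : U ∈ 𝓝 (0 : EuclideanSpace ℝ (Fin d)))
    (f : Fin d → EuclideanSpace ℝ (Fin d) → ℝ)
    (hf : ∀ i, MemCb20 U (f i))
    (hfid : ∀ i, ∃ ε : EuclideanSpace ℝ (Fin d) → ℝ,
      (ε =o[𝓝[U] 0] fun u : EuclideanSpace ℝ (Fin d) => ‖u‖) ∧
        ∀ u ∈ U, f i u = u i * (1 + ε u))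
    (H : EuclideanSpace ℝ (Fin d) → ℝ) (hH : MemCb20 U H) :
    ∃ (α : Fin d → ℝ) (β : Fin d → Fin d → ℝ)
      (Hbar : EuclideanSpace ℝ (Fin d) → ℝ),
      ((∀ i j, β i j = β j i) ∧ ContinuousOn Hbar U ∧
        (∃ M : ℝ, ∀ u ∈ U, |Hbar u| ≤ M) ∧
        (Hbar =o[𝓝[U] 0] fun u : EuclideanSpace ℝ (Fin d) => ∑ i, (f i u) ^ 2) ∧
        ∀ u ∈ U, H u = (∑ i, α i * f i u) + (∑ i, ∑ j, β i j * f i u * f j u) + Hbar u) ∧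
      ∀ (α' : Fin d → ℝ) (β' : Fin d → Fin d → ℝ)
        (Hbar' : EuclideanSpace ℝ (Fin d) → ℝ),
        ((∀ i j, β' i j = β' j i) ∧ ContinuousOn Hbar' U ∧
          (∃ M : ℝ, ∀ u ∈ U, |Hbar' u| ≤ M) ∧
          (Hbar' =o[𝓝[U] 0] fun u : EuclideanSpace ℝ (Fin d) => ∑ i, (f i u) ^ 2) ∧
          ∀ u ∈ U, H u = (∑ i, α' i * f i u) + (∑ i, ∑ j, β' i j * f i u * f j u) + Hbar' u) →
        α' = α ∧ β' = β ∧ Set.EqOn Hbar' Hbar U := by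
  classical
  have hn : 𝓝[U] (0 : (EuclideanSpace ℝ (Fin d))) = 𝓝 0 := nhdsWithin_eq_nhds.2 hU0
  have h0U : (0 : (EuclideanSpace ℝ (Fin d))) ∈ U := mem_of_mem_nhds hU0
  have hUev : ∀ᶠ u in 𝓝 (0 : (EuclideanSpace ℝ (Fin d))), u ∈ U := hU0
  -- coordinates are O(‖u‖) and O(1)
  have hcoord : ∀ i, (fun u : (EuclideanSpace ℝ (Fin d)) => u i) =O[𝓝 0] fun u => ‖u‖ := fun i =>
    isBigO_of_le _ (fun u => by simpa [Real.norm_eq_abs] using abs_coord_le u i)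
  have hcoord0 : ∀ i, Tendsto (fun u : (EuclideanSpace ℝ (Fin d)) => u i) (𝓝 0) (𝓝 0) := fun i =>
    squeeze_zero_norm (fun u => abs_coord_le u i) tendsto_norm_zero
  have hcoordO1 : ∀ i, (fun u : (EuclideanSpace ℝ (Fin d)) => u i) =O[𝓝 0] (fun _ => (1:ℝ)) := fun i =>
    (hcoord0 i).isBigO_one ℝ
  -- f i u - u i = o(‖u‖²)
  have hA : ∀ i, (fun u : (EuclideanSpace ℝ (Fin d)) => f i u - u i) =o[𝓝 0] fun u => ‖u‖ ^ 2 := by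
    intro i
    obtain ⟨ε, hε, heq⟩ := hfid i
    rw [hn] at hε
    have h1 : (fun u : (EuclideanSpace ℝ (Fin d)) => u i * ε u) =o[𝓝 0] fun u => ‖u‖ ^ 2 := by
      have := (hcoord i).mul_isLittleO hε
      simpa [sq] using this
    refine h1.congr' ?_ EventuallyEq.rfl
    filter_upwards [hUev] with u hu
    rw [heq u hu]; ring
  have hA' : ∀ i, (fun u : (EuclideanSpace ℝ (Fin d)) => u i - f i u) =o[𝓝 0] fun u => ‖u‖ ^ 2 := fun i =>
    ((hA i).neg_left).congr_left (fun u => by ring)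
  -- f i tendsto 0, O(1)
  have hf0 : ∀ i, Tendsto (f i) (𝓝 (0 : (EuclideanSpace ℝ (Fin d)))) (𝓝 0) := by
    intro i
    obtain ⟨ε, hε, heq⟩ := hfid i
    rw [hn] at hε
    have hεO : Tendsto ε (𝓝 (0:(EuclideanSpace ℝ (Fin d)))) (𝓝 0) := by
      have h1 : ε =o[𝓝 (0:(EuclideanSpace ℝ (Fin d)))] (fun _ => (1:ℝ)) :=
        hε.trans_isBigO ((tendsto_norm_zero).isBigO_one ℝ)
      exact (isLittleO_one_iff ℝ).1 h1
    have h2 : Tendsto (fun u : (EuclideanSpace ℝ (Fin d)) => u i * (1 + ε u)) (𝓝 0) (𝓝 0) := by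
      have h3 : Tendsto (fun u : (EuclideanSpace ℝ (Fin d)) => (1:ℝ) + ε u) (𝓝 0) (𝓝 (1 + 0)) :=
        tendsto_const_nhds.add hεO
      have := (hcoord0 i).mul h3
      simpa using this
    refine Tendsto.congr' ?_ h2
    filter_upwards [hUev] with u hu
    exact (heq u hu).symm
  have hfO1 : ∀ i, (f i) =O[𝓝 (0:(EuclideanSpace ℝ (Fin d)))] (fun _ => (1:ℝ)) := fun i => (hf0 i).isBigO_one ℝ
  -- f i * f j - u i * u j = o(‖u‖²)
  have hB : ∀ i j, (fun u : (EuclideanSpace ℝ (Fin d)) => f i u * f j u - u i * u j) =o[𝓝 0] fun u => ‖u‖ ^ 2 := by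
    intro i j
    have h1 : (fun u : (EuclideanSpace ℝ (Fin d)) => (f i u - u i) * f j u) =o[𝓝 0] fun u => ‖u‖ ^ 2 := by
      have := (hA i).mul_isBigO (hfO1 j)
      simpa using this
    have h2 : (fun u : (EuclideanSpace ℝ (Fin d)) => u i * (f j u - u j)) =o[𝓝 0] fun u => ‖u‖ ^ 2 := by
      have := (hcoordO1 i).mul_isLittleO (hA j)
      simpa using this
    exact (h1.add h2).congr_left (fun u => by ring)
  have hB' : ∀ i j, (fun u : (EuclideanSpace ℝ (Fin d)) => u i * u j - f i u * f j u) =o[𝓝 0] fun u => ‖u‖ ^ 2 :=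
    fun i j => ((hB i j).neg_left).congr_left (fun u => by ring)
  -- equivalence of Σ f² and ‖u‖²
  have hEquiv : (fun u : (EuclideanSpace ℝ (Fin d)) => ∑ i, (f i u) ^ 2) ~[𝓝 0] fun u => ‖u‖ ^ 2 := by
    have h1 : (fun u : (EuclideanSpace ℝ (Fin d)) => ∑ i, ((f i u) ^ 2 - (u i) ^ 2)) =o[𝓝 0] fun u => ‖u‖ ^ 2 :=
      IsLittleO.fun_sum (fun i _ => (hB i i).congr_left (fun u => by ring))
    have h2 : (fun u : (EuclideanSpace ℝ (Fin d)) => (∑ i, (f i u) ^ 2) - ‖u‖ ^ 2) =o[𝓝 0] fun u => ‖u‖ ^ 2 := by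
      refine h1.congr_left (fun u => ?_)
      rw [normsq_eq u, Finset.sum_sub_distrib]
    exact h2
  have hO1 : (fun u : (EuclideanSpace ℝ (Fin d)) => ‖u‖ ^ 2) =O[𝓝 0] fun u => ∑ i, (f i u) ^ 2 := hEquiv.symm.isBigO
  have hO2 : (fun u : (EuclideanSpace ℝ (Fin d)) => ∑ i, (f i u) ^ 2) =O[𝓝 0] fun u => ‖u‖ ^ 2 := hEquiv.isBigO
  -- setup of the decomposition
  obtain ⟨hHc, ⟨MH, hMH⟩, a, b, hHo⟩ := hH
  rw [hn] at hHo
  set α : Fin d → ℝ := a with hαdef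
  set β : Fin d → Fin d → ℝ := fun i j => (b i j + b j i) / 2 with hβdef
  set Hbar : (EuclideanSpace ℝ (Fin d)) → ℝ :=
    (fun u => H u - (∑ i, α i * f i u) - ∑ i, ∑ j, β i j * f i u * f j u) with hHbardef
  have hβsym : ∀ i j, β i j = β j i := fun i j => by simp [hβdef]; ring
  have hsymb : ∀ u : (EuclideanSpace ℝ (Fin d)), (∑ i, ∑ j, β i j * u i * u j) = ∑ i, ∑ j, b i j * u i * u j := by
    intro u
    have hswap : (∑ i, ∑ j, b j i * u i * u j) = ∑ i, ∑ j, b i j * u i * u j := by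
      rw [Finset.sum_comm]
      exact Finset.sum_congr rfl fun i _ => Finset.sum_congr rfl fun j _ => by ring
    calc (∑ i, ∑ j, β i j * u i * u j)
        = (∑ i, ∑ j, (b i j * u i * u j / 2 + b j i * u i * u j / 2)) := by
          exact Finset.sum_congr rfl fun i _ => Finset.sum_congr rfl fun j _ => by
            simp [hβdef]; ring
      _ = (∑ i, ∑ j, b i j * u i * u j) / 2 + (∑ i, ∑ j, b j i * u i * u j) / 2 := by
          simp [Finset.sum_add_distrib, Finset.sum_div]
      _ = ∑ i, ∑ j, b i j * u i * u j := by rw [hswap]; ring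
  -- Hbar is o(‖u‖²)
  have hHbar_o : Hbar =o[𝓝 (0:(EuclideanSpace ℝ (Fin d)))] fun u => ‖u‖ ^ 2 := by
    have e1 : (fun u : (EuclideanSpace ℝ (Fin d)) => ∑ i, α i * (u i - f i u)) =o[𝓝 0] fun u => ‖u‖ ^ 2 :=
      IsLittleO.fun_sum (fun i _ => (hA' i).const_mul_left _)
    have e2 : (fun u : (EuclideanSpace ℝ (Fin d)) => ∑ i, ∑ j, β i j * (u i * u j - f i u * f j u))
        =o[𝓝 0] fun u => ‖u‖ ^ 2 :=
      IsLittleO.fun_sum (fun i _ => IsLittleO.fun_sum (fun j _ => (hB' i j).const_mul_left _))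
    have hfun : Hbar = fun u =>
        ((H u - (∑ i, α i * u i) - ∑ i, ∑ j, b i j * u i * u j)
          + ∑ i, α i * (u i - f i u)) + ∑ i, ∑ j, β i j * (u i * u j - f i u * f j u) := by
      funext u
      have hs1 : (∑ i, α i * (u i - f i u)) = (∑ i, α i * u i) - ∑ i, α i * f i u := by
        rw [← Finset.sum_sub_distrib]
        exact Finset.sum_congr rfl fun i _ => by ring
      have hs2 : (∑ i, ∑ j, β i j * (u i * u j - f i u * f j u))
          = (∑ i, ∑ j, β i j * u i * u j) - ∑ i, ∑ j, β i j * f i u * f j u := by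
        rw [← Finset.sum_sub_distrib]
        refine Finset.sum_congr rfl fun i _ => ?_
        rw [← Finset.sum_sub_distrib]
        exact Finset.sum_congr rfl fun j _ => by ring
      rw [hHbardef]
      simp only
      rw [hs1, hs2, hsymb u]
      ring
    rw [hfun]
    exact (hHo.add e1).add e2
  refine ⟨α, β, Hbar, ⟨hβsym, ?_, ?_, ?_, fun u hu => by rw [hHbardef]; ring⟩, ?_⟩
  · -- continuity
    exact (hHc.sub (continuousOn_finset_sum _ fun i _ => continuousOn_const.mul (hf i).1)).sub
      (continuousOn_finset_sum _ fun i _ => continuousOn_finset_sum _ fun j _ =>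
        (continuousOn_const.mul (hf i).1).mul (hf j).1)
  · -- boundedness
    choose Mf hMf using fun i => (hf i).2.1
    have hMf0 : ∀ i, 0 ≤ Mf i := fun i => le_trans (abs_nonneg _) (hMf i 0 h0U)
    refine ⟨MH + (∑ i, |α i| * Mf i) + ∑ i, ∑ j, |β i j| * Mf i * Mf j, fun u hu => ?_⟩
    have hb1 : |∑ i, α i * f i u| ≤ ∑ i, |α i| * Mf i := by
      refine (Finset.abs_sum_le_sum_abs _ _).trans (Finset.sum_le_sum fun i _ => ?_)
      rw [abs_mul]
      exact mul_le_mul_of_nonneg_left (hMf i u hu) (abs_nonneg _)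
    have hb2 : |∑ i, ∑ j, β i j * f i u * f j u| ≤ ∑ i, ∑ j, |β i j| * Mf i * Mf j := by
      refine (Finset.abs_sum_le_sum_abs _ _).trans (Finset.sum_le_sum fun i _ => ?_)
      refine (Finset.abs_sum_le_sum_abs _ _).trans (Finset.sum_le_sum fun j _ => ?_)
      rw [abs_mul, abs_mul]
      exact mul_le_mul (mul_le_mul_of_nonneg_left (hMf i u hu) (abs_nonneg _))
        (hMf j u hu) (abs_nonneg _) (mul_nonneg (abs_nonneg _) (hMf0 i))
    have htri : |Hbar u| ≤ |H u| + |∑ i, α i * f i u| + |∑ i, ∑ j, β i j * f i u * f j u| := by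
      rw [hHbardef]
      calc |H u - (∑ i, α i * f i u) - ∑ i, ∑ j, β i j * f i u * f j u|
          = |(H u + -(∑ i, α i * f i u)) + -(∑ i, ∑ j, β i j * f i u * f j u)| := by
            rw [sub_eq_add_neg, sub_eq_add_neg]
        _ ≤ |H u + -(∑ i, α i * f i u)| + |-(∑ i, ∑ j, β i j * f i u * f j u)| := abs_add_le _ _
        _ ≤ |H u| + |-(∑ i, α i * f i u)| + |-(∑ i, ∑ j, β i j * f i u * f j u)| := by
            gcongr; exact abs_add_le _ _
        _ = _ := by rw [abs_neg, abs_neg]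
    have := hMH u hu
    linarith
  · -- little-o against Σ f²
    rw [hn]
    exact hHbar_o.trans_isBigO hO1
  · -- uniqueness
    rintro α' β' Hbar' ⟨hsym', hc', ⟨M', hM'⟩, ho', heq'⟩
    rw [hn] at ho'
    have heq : ∀ u ∈ U,
        H u = (∑ i, α i * f i u) + (∑ i, ∑ j, β i j * f i u * f j u) + Hbar u :=
      fun u hu => by rw [hHbardef]; ring
    set c : Fin d → ℝ := fun i => α' i - α i with hcdef
    set D : Fin d → Fin d → ℝ := fun i j => β' i j - β i j with hDdef
    have hDsym : ∀ i j, D i j = D j i := fun i j => by simp [hDdef, hsym' i j, hβsym i j]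
    -- the difference combination is o(‖u‖²)
    have hdiff : (fun u : (EuclideanSpace ℝ (Fin d)) => Hbar u - Hbar' u) =o[𝓝 0] fun u => ‖u‖ ^ 2 :=
      hHbar_o.sub (ho'.trans_isBigO hO2)
    have hGo : (fun u : (EuclideanSpace ℝ (Fin d)) => (∑ i, c i * u i) + ∑ i, ∑ j, D i j * u i * u j)
        =o[𝓝 0] fun u => ‖u‖ ^ 2 := by
      have e1 : (fun u : (EuclideanSpace ℝ (Fin d)) => ∑ i, c i * (u i - f i u)) =o[𝓝 0] fun u => ‖u‖ ^ 2 :=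
        IsLittleO.fun_sum (fun i _ => (hA' i).const_mul_left _)
      have e2 : (fun u : (EuclideanSpace ℝ (Fin d)) => ∑ i, ∑ j, D i j * (u i * u j - f i u * f j u))
          =o[𝓝 0] fun u => ‖u‖ ^ 2 :=
        IsLittleO.fun_sum (fun i _ => IsLittleO.fun_sum (fun j _ => (hB' i j).const_mul_left _))
      refine (((hdiff.add e1).add e2).congr' ?_ EventuallyEq.rfl)
      filter_upwards [hUev] with u hu
      have h1 := heq u hu
      have h2 := heq' u hu
      have hc1 : (∑ i, c i * (u i - f i u)) = (∑ i, c i * u i) - ∑ i, c i * f i u := by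
        rw [← Finset.sum_sub_distrib]
        exact Finset.sum_congr rfl fun i _ => by ring
      have hc2 : (∑ i, ∑ j, D i j * (u i * u j - f i u * f j u))
          = (∑ i, ∑ j, D i j * u i * u j) - ∑ i, ∑ j, D i j * f i u * f j u := by
        rw [← Finset.sum_sub_distrib]
        refine Finset.sum_congr rfl fun i _ => ?_
        rw [← Finset.sum_sub_distrib]
        exact Finset.sum_congr rfl fun j _ => by ring
      have hc3 : (∑ i, c i * f i u) = (∑ i, α' i * f i u) - ∑ i, α i * f i u := by
        rw [← Finset.sum_sub_distrib]
        exact Finset.sum_congr rfl fun i _ => by simp only [hcdef]; ring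
      have hc4 : (∑ i, ∑ j, D i j * f i u * f j u)
          = (∑ i, ∑ j, β' i j * f i u * f j u) - ∑ i, ∑ j, β i j * f i u * f j u := by
        rw [← Finset.sum_sub_distrib]
        refine Finset.sum_congr rfl fun i _ => ?_
        rw [← Finset.sum_sub_distrib]
        exact Finset.sum_congr rfl fun j _ => by simp only [hDdef]; ring
      rw [hc1, hc2, hc3, hc4]
      linarith
    -- evaluate along lines
    have hkey : ∀ v : (EuclideanSpace ℝ (Fin d)), (∑ i, c i * v i) = 0 ∧ (∑ i, ∑ j, D i j * v i * v j) = 0 := by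
      intro v
      have htv : Tendsto (fun t : ℝ => t • v) (𝓝 0) (𝓝 (0 : (EuclideanSpace ℝ (Fin d)))) := by
        have hc : Continuous (fun t : ℝ => t • v) := continuous_id.smul continuous_const
        simpa using hc.tendsto (0:ℝ)
      have hcomp := hGo.comp_tendsto htv
      have heq1 : ∀ t : ℝ,
          ((∑ i, c i * (t • v) i) + ∑ i, ∑ j, D i j * (t • v) i * (t • v) j)
            = t * (∑ i, c i * v i) + t ^ 2 * (∑ i, ∑ j, D i j * v i * v j) := by
        intro t
        have hl : (∑ i, c i * (t • v) i) = t * ∑ i, c i * v i := by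
          rw [Finset.mul_sum]
          refine Finset.sum_congr rfl fun i _ => ?_
          rw [PiLp.smul_apply, smul_eq_mul]; ring
        have hq : (∑ i, ∑ j, D i j * (t • v) i * (t • v) j)
            = t ^ 2 * ∑ i, ∑ j, D i j * v i * v j := by
          rw [Finset.mul_sum]
          refine Finset.sum_congr rfl fun i _ => ?_
          rw [Finset.mul_sum]
          refine Finset.sum_congr rfl fun j _ => ?_
          rw [PiLp.smul_apply, PiLp.smul_apply, smul_eq_mul, smul_eq_mul]; ring
        rw [hl, hq]
      have heq2 : ∀ t : ℝ, ‖t • v‖ ^ 2 = t ^ 2 * ‖v‖ ^ 2 := by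
        intro t
        rw [norm_smul, mul_pow, Real.norm_eq_abs, sq_abs]
      have h' : (fun t : ℝ => t * (∑ i, c i * v i)
          + t ^ 2 * (∑ i, ∑ j, D i j * v i * v j)) =o[𝓝 0] fun t : ℝ => t ^ 2 := by
        have hO : (fun t : ℝ => t ^ 2 * ‖v‖ ^ 2) =O[𝓝 0] fun t : ℝ => t ^ 2 := by
          have := (isBigO_refl (fun t : ℝ => t ^ 2) (𝓝 0)).const_mul_left (‖v‖ ^ 2)
          exact this.congr_left fun t => by ring
        exact (hcomp.congr heq1 heq2).trans_isBigO hO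
      exact key_poly h'
    -- extract coefficients
    have hc0 : ∀ i, c i = 0 := by
      intro i
      have := (hkey (EuclideanSpace.single i 1)).1
      simpa [EuclideanSpace.single_apply] using this
    have hDdiag : ∀ i, D i i = 0 := by
      intro i
      have := (hkey (EuclideanSpace.single i 1)).2
      simpa [EuclideanSpace.single_apply, mul_ite, ite_mul, Finset.sum_ite_eq'] using this
    have hD0 : ∀ i j, D i j = 0 := by
      intro i j
      by_cases hij : i = j
      · subst hij; exact hDdiag i
      · have h2 := (hkey (EuclideanSpace.single i 1 + EuclideanSpace.single j 1)).2
        have hval : ∀ k, (EuclideanSpace.single i (1:ℝ) + EuclideanSpace.single j 1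
              : EuclideanSpace ℝ (Fin d)) k
            = (if k = i then (1:ℝ) else 0) + (if k = j then (1:ℝ) else 0) := by
          intro k
          simp [EuclideanSpace.single_apply, PiLp.add_apply]
        rw [Finset.sum_congr rfl (fun k _ => Finset.sum_congr rfl (fun l _ => by
          rw [hval k, hval l]))] at h2
        have hexp : (∑ k, ∑ l, D k l * ((if k = i then (1:ℝ) else 0) + (if k = j then 1 else 0))
            * ((if l = i then (1:ℝ) else 0) + (if l = j then 1 else 0)))
            = D i i + D i j + D j i + D j j := by
          simp [add_mul, mul_add, Finset.sum_add_distrib, mul_ite, ite_mul,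
            Finset.sum_ite_eq', hij, Ne.symm hij]
          ring
        rw [hexp] at h2
        have := hDsym i j
        have h3 := hDdiag i
        have h4 := hDdiag j
        linarith
    have hαeq : α' = α := funext fun i => sub_eq_zero.1 (hc0 i)
    have hβeq : β' = β := funext fun i => funext fun j => sub_eq_zero.1 (hD0 i j)
    refine ⟨hαeq, hβeq, fun u hu => ?_⟩
    have h1 := heq u hu
    have h2 := heq' u hu
    rw [hαeq, hβeq] at h2
    linarith
end

section
/- Assume (H0) and (H1). Then for each x ∈ 𝒳 there exists a linear functional G_x on C²_{b,0}(U), agreeing with the given values G_x(H) for H ∈ ℋ, such that for every H ∈ C²_{b,0}(U) one has lim_{N→∞} sup_{x∈𝒳} |G^N_x(H) − G_x(H)| = 0 and sup_{x∈𝒳} |G_x(H)| ≤ sup_{N≥1, x∈𝒳} |G^N_x(H)| < ∞. -/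
set_option maxHeartbeats 1600000

open MeasureTheory Filter Asymptotics Topology Set

namespace Cb20Aux

variable {d : ℕ} {U : Set (EuclideanSpace ℝ (Fin d))}

lemma memCb20_add {H₁ H₂ : EuclideanSpace ℝ (Fin d) → ℝ}
    (h₁ : MemCb20 U H₁) (h₂ : MemCb20 U H₂) : MemCb20 U (H₁ + H₂) := by
  obtain ⟨c₁, ⟨M₁, hM₁⟩, a₁, b₁, o₁⟩ := h₁
  obtain ⟨c₂, ⟨M₂, hM₂⟩, a₂, b₂, o₂⟩ := h₂
  refine ⟨c₁.add c₂, ⟨M₁ + M₂, fun u hu => ?_⟩, a₁ + a₂, b₁ + b₂, ?_⟩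
  · simpa using (abs_add_le _ _).trans (add_le_add (hM₁ u hu) (hM₂ u hu))
  · have := o₁.add o₂
    refine this.congr' (Filter.Eventually.of_forall fun u => ?_) (Filter.Eventually.of_forall fun u => rfl)
    simp only [Pi.add_apply, add_mul, Finset.sum_add_distrib]
    ring

lemma memCb20_smul (c : ℝ) {H : EuclideanSpace ℝ (Fin d) → ℝ}
    (h : MemCb20 U H) : MemCb20 U (c • H) := by
  obtain ⟨hc, ⟨M, hM⟩, a, b, o⟩ := h
  refine ⟨hc.const_smul c, ⟨|c| * M, fun u hu => ?_⟩, c • a, fun i j => c * b i j, ?_⟩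
  · simp only [Pi.smul_apply, smul_eq_mul, abs_mul]
    exact mul_le_mul_of_nonneg_left (hM u hu) (abs_nonneg c)
  · have := o.const_mul_left c
    refine this.congr' (Filter.Eventually.of_forall fun u => ?_) (Filter.Eventually.of_forall fun u => rfl)
    simp only [Pi.smul_apply, smul_eq_mul, Finset.mul_sum, mul_sub]
    congr 1
    · congr 1
      apply Finset.sum_congr rfl; intros; ring
    · apply Finset.sum_congr rfl; intros
      apply Finset.sum_congr rfl; intros; ring

lemma memCb20_zero : MemCb20 U (0 : EuclideanSpace ℝ (Fin d) → ℝ) := by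
  refine ⟨continuousOn_const, ⟨0, fun u _ => by simp⟩, 0, 0, ?_⟩
  simp only [Pi.zero_apply, zero_mul, Finset.sum_const_zero, sub_zero, zero_sub, neg_zero]
  exact isLittleO_zero _ _

lemma memCb20_span {ℋ : Set (EuclideanSpace ℝ (Fin d) → ℝ)}
    (hsub : ∀ H ∈ ℋ, MemCb20 U H) :
    ∀ H ∈ Submodule.span ℝ ℋ, MemCb20 U H := by
  intro H hH
  induction hH using Submodule.span_induction with
  | mem x hx => exact hsub x hx
  | zero => exact memCb20_zero
  | add x y _ _ hx hy => exact memCb20_add hx hy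
  | smul c x _ hx => exact memCb20_smul c hx

lemma meas_comp {Ω : Type*} [MeasurableSpace Ω] {H : EuclideanSpace ℝ (Fin d) → ℝ}
    (hUc : IsClosed U) (hH : ContinuousOn H U) {f : Ω → EuclideanSpace ℝ (Fin d)}
    (hf : Measurable f) (hfU : ∀ ω, f ω ∈ U) : Measurable fun ω => H (f ω) := by
  have _ := hUc
  have h1 : Continuous (U.restrict H) := continuousOn_iff_continuous_restrict.mp hH
  have h2 : Measurable (fun ω => (⟨f ω, hfU ω⟩ : U)) := hf.subtype_mk
  exact h1.measurable.comp h2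

lemma integrable_of_bound {Ω : Type*} [MeasurableSpace Ω] (P : Measure Ω) [IsProbabilityMeasure P]
    {f : Ω → ℝ} (hf : Measurable f) {M : ℝ} (hM : ∀ ω, |f ω| ≤ M) : Integrable f P :=
  (integrable_const M).mono' hf.aestronglyMeasurable
    (Filter.Eventually.of_forall fun ω => by simpa [Real.norm_eq_abs] using hM ω)

lemma abs_integral_le {Ω : Type*} [MeasurableSpace Ω] (P : Measure Ω) [IsProbabilityMeasure P]
    {f : Ω → ℝ} {M : ℝ} (hM : ∀ ω, |f ω| ≤ M) : |∫ ω, f ω ∂P| ≤ M := by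
  have := norm_integral_le_of_norm_le_const (μ := P) (C := M) (f := f)
    (Filter.Eventually.of_forall fun ω => by rw [Real.norm_eq_abs]; exact hM ω)
  rw [Real.norm_eq_abs] at this
  simpa using this

end Cb20Aux

section UCdef
variable {d : ℕ}
/-- uniform Cauchy property of `N ↦ GN N · H` on `𝒳`. -/
def UCauchy (𝒳 : Set (EuclideanSpace ℝ (Fin d)))
    (GN : ℕ → EuclideanSpace ℝ (Fin d) → (EuclideanSpace ℝ (Fin d) → ℝ) → ℝ)
    (H : EuclideanSpace ℝ (Fin d) → ℝ) : Prop :=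
  ∀ ε > (0:ℝ), ∃ N₀, ∀ N ≥ N₀, ∀ M ≥ N₀, ∀ x ∈ 𝒳, |GN N x H - GN M x H| ≤ ε
end UCdef

/-- Lemma 2.5: extension of the limiting characteristics to `C²_{b,0}(U)`. -/
theorem stmt1 {d : ℕ} (hd : 1 ≤ d)
    {Ω : Type*} [MeasurableSpace Ω] (P : Measure Ω) [IsProbabilityMeasure P]
    (𝒳 U : Set (EuclideanSpace ℝ (Fin d))) (h𝒳 : MeasurableSet 𝒳)
    (hUc : IsClosed U) (hU0 : U ∈ 𝓝 (0 : EuclideanSpace ℝ (Fin d)))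
    (v : ℕ → ℝ) (hv : ∀ N, 0 < v N)
    (F : ℕ → EuclideanSpace ℝ (Fin d) → Ω → EuclideanSpace ℝ (Fin d))
    (hFmeas : ∀ N, ∀ x ∈ 𝒳, Measurable (F N x))
    (hFU : ∀ N, ∀ x ∈ 𝒳, ∀ ω, F N x ω - x ∈ U)
    (GN : ℕ → EuclideanSpace ℝ (Fin d) → (EuclideanSpace ℝ (Fin d) → ℝ) → ℝ)
    (hGN : ∀ N x H, GN N x H = v N * ∫ ω, H (F N x ω - x) ∂P)
    -- Hypothesis (H0)
    (hH0 : ∀ ε > (0 : ℝ), ∃ b₀ : ℝ, ∀ b ≥ b₀, ∀ N ≥ 1, ∀ x ∈ 𝒳,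
      v N * (P {ω | b < ‖F N x ω - x‖}).toReal ≤ ε)
    -- specific function h
    (h : Fin d → EuclideanSpace ℝ (Fin d) → ℝ)
    (hhmem : ∀ i, MemCb20 U (h i))
    (hhid : ∀ i, ∃ ε : EuclideanSpace ℝ (Fin d) → ℝ,
      (ε =o[𝓝[U] 0] fun u : EuclideanSpace ℝ (Fin d) => ‖u‖) ∧
        ∀ u ∈ U, h i u = u i * (1 + ε u))
    (hhne : ∀ i, ∀ u ∈ U, u ≠ 0 → h i u ≠ 0)
    -- Hypothesis (H1)
    (ℋ : Set (EuclideanSpace ℝ (Fin d) → ℝ))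
    (hℋsub : ∀ H ∈ ℋ, MemCb20 U H)
    (hH11 : (∀ i, h i ∈ Submodule.span ℝ ℋ) ∧
      ∀ i j, (fun u => h i u * h j u) ∈ Submodule.span ℝ ℋ)
    (hH12 : ∀ g : EuclideanSpace ℝ (Fin d) → ℝ, ContinuousOn g U →
      (∃ K : Set (EuclideanSpace ℝ (Fin d)), IsCompact K ∧ ∀ u ∈ U, u ∉ K → g u = 0) →
      g 0 = 0 →
      ∃ gs : ℕ → EuclideanSpace ℝ (Fin d) → ℝ,
        (∀ n, MemCb20 U (gs n)) ∧
        (∀ ε > (0 : ℝ), ∃ n₀, ∀ n ≥ n₀, ∀ u ∈ U, |g u - gs n u| ≤ ε) ∧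
        ∀ n, (fun u => (∑ i, (h i u) ^ 2) * gs n u) ∈ Submodule.span ℝ ℋ)
    (G0 : EuclideanSpace ℝ (Fin d) → (EuclideanSpace ℝ (Fin d) → ℝ) → ℝ)
    (hH13i : ∀ H ∈ ℋ, ∀ ε > (0 : ℝ), ∃ N₀, ∀ N ≥ N₀, ∀ x ∈ 𝒳, |GN N x H - G0 x H| ≤ ε)
    (hH13ii : ∀ H ∈ ℋ, ∃ M : ℝ, ∀ x ∈ 𝒳, |G0 x H| ≤ M) :
    ∃ G : EuclideanSpace ℝ (Fin d) → (EuclideanSpace ℝ (Fin d) → ℝ) → ℝ,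
      (∀ x ∈ 𝒳, ∀ H ∈ ℋ, G x H = G0 x H) ∧
      (∀ x ∈ 𝒳, ∀ H₁ H₂ : EuclideanSpace ℝ (Fin d) → ℝ,
        MemCb20 U H₁ → MemCb20 U H₂ → G x (H₁ + H₂) = G x H₁ + G x H₂) ∧
      (∀ x ∈ 𝒳, ∀ (c : ℝ) (H : EuclideanSpace ℝ (Fin d) → ℝ),
        MemCb20 U H → G x (c • H) = c * G x H) ∧
      ∀ H : EuclideanSpace ℝ (Fin d) → ℝ, MemCb20 U H →
        (∀ ε > (0 : ℝ), ∃ N₀, ∀ N ≥ N₀, ∀ x ∈ 𝒳, |GN N x H - G x H| ≤ ε) ∧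
        (∃ M : ℝ, ∀ N ≥ 1, ∀ x ∈ 𝒳, |GN N x H| ≤ M) ∧
        (∀ M : ℝ, (∀ N ≥ 1, ∀ x ∈ 𝒳, |GN N x H| ≤ M) → ∀ x ∈ 𝒳, |G x H| ≤ M) := by
  classical
  have hU0' : (0 : EuclideanSpace ℝ (Fin d)) ∈ U := mem_of_mem_nhds hU0
  -- measurability / integrability of composed integrands
  have hmeas : ∀ (H : EuclideanSpace ℝ (Fin d) → ℝ), ContinuousOn H U → ∀ N, ∀ x ∈ 𝒳,
      Measurable fun ω => H (F N x ω - x) := fun H hc N x hx =>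
    Cb20Aux.meas_comp hUc hc ((hFmeas N x hx).sub measurable_const) (hFU N x hx)
  have hint : ∀ (H : EuclideanSpace ℝ (Fin d) → ℝ), ContinuousOn H U →
      ∀ (M : ℝ), (∀ u ∈ U, |H u| ≤ M) → ∀ N, ∀ x ∈ 𝒳,
      Integrable (fun ω => H (F N x ω - x)) P := fun H hc M hM N x hx =>
    Cb20Aux.integrable_of_bound P (hmeas H hc N x hx) (fun ω => hM _ (hFU N x hx ω))
  -- boundedness of GN
  have hGNb : ∀ (H : EuclideanSpace ℝ (Fin d) → ℝ) (M : ℝ), (∀ u ∈ U, |H u| ≤ M) →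
      ∀ N, ∀ x ∈ 𝒳, |GN N x H| ≤ v N * M := by
    intro H M hM N x hx
    rw [hGN, abs_mul, abs_of_pos (hv N)]
    exact mul_le_mul_of_nonneg_left
      (Cb20Aux.abs_integral_le P (fun ω => hM _ (hFU N x hx ω))) (hv N).le
  -- GN only depends on values on U
  have hGNcongr : ∀ (H₁ H₂ : EuclideanSpace ℝ (Fin d) → ℝ), (∀ u ∈ U, H₁ u = H₂ u) →
      ∀ N, ∀ x ∈ 𝒳, GN N x H₁ = GN N x H₂ := by
    intro H₁ H₂ he N x hx
    rw [hGN, hGN]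
    congr 1
    exact integral_congr_ae (Filter.Eventually.of_forall fun ω => he _ (hFU N x hx ω))
  -- additivity of GN
  have hGNadd : ∀ (H₁ H₂ : EuclideanSpace ℝ (Fin d) → ℝ),
      ContinuousOn H₁ U → (∃ M, ∀ u ∈ U, |H₁ u| ≤ M) →
      ContinuousOn H₂ U → (∃ M, ∀ u ∈ U, |H₂ u| ≤ M) →
      ∀ N, ∀ x ∈ 𝒳, GN N x (H₁ + H₂) = GN N x H₁ + GN N x H₂ := by
    intro H₁ H₂ hc₁ ⟨M₁, hM₁⟩ hc₂ ⟨M₂, hM₂⟩ N x hx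
    rw [hGN, hGN, hGN, ← mul_add]
    congr 1
    rw [← integral_add (hint H₁ hc₁ M₁ hM₁ N x hx) (hint H₂ hc₂ M₂ hM₂ N x hx)]
    rfl
  have hGNsmul : ∀ (c : ℝ) (H : EuclideanSpace ℝ (Fin d) → ℝ),
      ∀ N x, GN N x (c • H) = c * GN N x H := by
    intro c H N x
    rw [hGN, hGN]
    have : (fun ω => (c • H) (F N x ω - x)) = fun ω => c • H (F N x ω - x) := rfl
    rw [this, integral_smul]
    simp [smul_eq_mul]; ring
  -- every element of the span is C²b0
  have hmemspan : ∀ H ∈ Submodule.span ℝ ℋ, MemCb20 U H := Cb20Aux.memCb20_span hℋsub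
  -- Step A/B : uniform Cauchy on the span
  -- coordinate facts
  have hnormsq : ∀ u : EuclideanSpace ℝ (Fin d), ‖u‖^2 = ∑ i, u i ^ 2 := by
    intro u
    rw [EuclideanSpace.norm_eq, Real.sq_sqrt (Finset.sum_nonneg fun i _ => sq_nonneg _)]
    simp [Real.norm_eq_abs, sq_abs]
  have habs_le : ∀ (u : EuclideanSpace ℝ (Fin d)) (i : Fin d), |u i| ≤ ‖u‖ := by
    intro u i
    have h1 : u i ^ 2 ≤ ‖u‖^2 := by
      rw [hnormsq]
      exact Finset.single_le_sum (f := fun j => u j ^ 2) (fun j _ => sq_nonneg _)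
        (Finset.mem_univ i)
    calc |u i| = Real.sqrt (u i ^ 2) := (Real.sqrt_sq_eq_abs _).symm
      _ ≤ Real.sqrt (‖u‖^2) := Real.sqrt_le_sqrt h1
      _ = ‖u‖ := by rw [Real.sqrt_sq (norm_nonneg _)]
  obtain ⟨εf, hεo, hεid⟩ : ∃ εf : Fin d → EuclideanSpace ℝ (Fin d) → ℝ,
      (∀ i, εf i =o[𝓝[U] 0] fun u : EuclideanSpace ℝ (Fin d) => ‖u‖) ∧
      ∀ i, ∀ u ∈ U, h i u = u i * (1 + εf i u) := by
    choose εf h1 h2 using hhid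
    exact ⟨εf, h1, h2⟩
  have hnormt : Tendsto (fun u : EuclideanSpace ℝ (Fin d) => ‖u‖) (𝓝[U] 0) (𝓝 0) := by
    have := (continuous_norm (E := EuclideanSpace ℝ (Fin d))).tendsto
      (0 : EuclideanSpace ℝ (Fin d))
    rw [norm_zero] at this
    exact this.mono_left nhdsWithin_le_nhds
  have hε1 : ∀ i, εf i =o[𝓝[U] 0] (fun _ => (1:ℝ)) := fun i =>
    (hεo i).trans_isBigO (hnormt.isBigO_one ℝ)
  have hεt : ∀ i, Tendsto (εf i) (𝓝[U] 0) (𝓝 0) := fun i => (isLittleO_one_iff ℝ).1 (hε1 i)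
  have hcoordO : ∀ i, (fun u : EuclideanSpace ℝ (Fin d) => u i) =O[𝓝[U] 0] fun u => ‖u‖ :=
    fun i => Asymptotics.isBigO_of_le _ (fun u => by
      simpa [Real.norm_eq_abs, abs_of_nonneg (norm_nonneg u)] using habs_le u i)
  -- the function D = |h|²
  set D : EuclideanSpace ℝ (Fin d) → ℝ := fun u => ∑ i, (h i u)^2 with hDdef
  have hDc : ContinuousOn D U := by
    rw [hDdef]
    exact continuousOn_finset_sum _ fun i _ => ((hhmem i).1.pow 2)
  obtain ⟨Mh, hMh⟩ : ∃ Mh : Fin d → ℝ, ∀ i, ∀ u ∈ U, |h i u| ≤ Mh i := by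
    choose Mh hMh using fun i => (hhmem i).2.1
    exact ⟨Mh, hMh⟩
  set MD : ℝ := ∑ i, (Mh i)^2 with hMDdef
  have hMD : ∀ u ∈ U, |D u| ≤ MD := by
    intro u hu
    rw [hDdef, hMDdef]
    have h1 : ∀ i : Fin d, (h i u)^2 ≤ (Mh i)^2 := fun i => by
      rw [← sq_abs (h i u)]
      exact pow_le_pow_left₀ (abs_nonneg _) (hMh i u hu) 2
    rw [abs_of_nonneg (Finset.sum_nonneg fun i _ => sq_nonneg _)]
    exact Finset.sum_le_sum fun i _ => h1 i
  have hMD0 : 0 ≤ MD := le_trans (abs_nonneg _) (hMD 0 hU0')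
  have hD0 : ∀ u ∈ U, 0 ≤ D u := fun u _ => Finset.sum_nonneg fun i _ => sq_nonneg _
  have hDpos : ∀ u ∈ U, u ≠ 0 → 0 < D u := by
    intro u hu hne
    have hne0 := hhne ⟨0, hd⟩ u hu hne
    have h2 : 0 < (h ⟨0, hd⟩ u)^2 := by positivity
    exact lt_of_lt_of_le h2 (Finset.single_le_sum (f := fun i => (h i u)^2)
      (fun i _ => sq_nonneg _) (Finset.mem_univ (⟨0, hd⟩ : Fin d)))
  have hDspan : D ∈ Submodule.span ℝ ℋ := by
    rw [hDdef]
    have he : (fun u : EuclideanSpace ℝ (Fin d) => ∑ i, (h i u)^2)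
        = ∑ i : Fin d, (fun u => h i u * h i u) := by
      funext u
      simp [Finset.sum_apply, sq]
    rw [he]
    exact Submodule.sum_mem _ fun i _ => hH11.2 i i
  have hGNDpos : ∀ N, ∀ x ∈ 𝒳, 0 ≤ GN N x D := by
    intro N x hx
    rw [hGN]
    exact mul_nonneg (hv N).le (integral_nonneg fun ω => hD0 _ (hFU N x hx ω))
  have hUCmem : ∀ H ∈ ℋ, UCauchy 𝒳 GN H := by
    intro H hH ε hε
    obtain ⟨N₀, hN₀⟩ := hH13i H hH (ε/2) (by linarith)
    refine ⟨N₀, fun N hN M hM x hx => ?_⟩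
    have e1 := hN₀ N hN x hx
    have e2 := hN₀ M hM x hx
    calc |GN N x H - GN M x H|
        = |(GN N x H - G0 x H) + -(GN M x H - G0 x H)| := by ring_nf
      _ ≤ |GN N x H - G0 x H| + |-(GN M x H - G0 x H)| := abs_add_le _ _
      _ ≤ ε := by rw [abs_neg]; linarith
  have hUCspan : ∀ H ∈ Submodule.span ℝ ℋ, UCauchy 𝒳 GN H := by
    intro H hH
    induction hH using Submodule.span_induction with
    | mem H' hH' => exact hUCmem H' hH'
    | zero =>
      intro ε hε
      refine ⟨0, fun N _ M _ x _ => ?_⟩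
      have hz : ∀ K, GN K x (0 : EuclideanSpace ℝ (Fin d) → ℝ) = 0 := by
        intro K
        rw [hGN]
        simp
      rw [hz, hz]
      simpa using hε.le
    | add H₁ H₂ h₁ h₂ ih₁ ih₂ =>
      intro ε hε
      obtain ⟨N₁, hN₁⟩ := ih₁ (ε/2) (by linarith)
      obtain ⟨N₂, hN₂⟩ := ih₂ (ε/2) (by linarith)
      refine ⟨max N₁ N₂, fun N hN M hM x hx => ?_⟩
      have m₁ := hmemspan H₁ h₁
      have m₂ := hmemspan H₂ h₂
      rw [hGNadd H₁ H₂ m₁.1 m₁.2.1 m₂.1 m₂.2.1 N x hx,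
        hGNadd H₁ H₂ m₁.1 m₁.2.1 m₂.1 m₂.2.1 M x hx]
      have e1 := hN₁ N (le_trans (le_max_left _ _) hN) M (le_trans (le_max_left _ _) hM) x hx
      have e2 := hN₂ N (le_trans (le_max_right _ _) hN) M (le_trans (le_max_right _ _) hM) x hx
      calc |GN N x H₁ + GN N x H₂ - (GN M x H₁ + GN M x H₂)|
          = |(GN N x H₁ - GN M x H₁) + (GN N x H₂ - GN M x H₂)| := by ring_nf
        _ ≤ |GN N x H₁ - GN M x H₁| + |GN N x H₂ - GN M x H₂| := abs_add_le _ _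
        _ ≤ ε := by linarith
    | smul c H' h' ih =>
      intro ε hε
      obtain ⟨N₀, hN₀⟩ := ih (ε/(|c|+1)) (by positivity)
      refine ⟨N₀, fun N hN M hM x hx => ?_⟩
      rw [hGNsmul, hGNsmul, ← mul_sub, abs_mul]
      have e1 := hN₀ N hN M hM x hx
      have hc1 : |c| ≤ |c| + 1 := by linarith [abs_nonneg c]
      calc |c| * |GN N x H' - GN M x H'| ≤ (|c|+1) * (ε/(|c|+1)) := by
            apply mul_le_mul hc1 e1 (abs_nonneg _)
            positivity
        _ = ε := by field_simp
  -- Step C : uniform Cauchy for all of C²b0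
  have hUCall : ∀ (H : EuclideanSpace ℝ (Fin d) → ℝ), MemCb20 U H → UCauchy 𝒳 GN H := by
    intro H hH
    obtain ⟨hHc, ⟨MH, hMH⟩, a, bq, hlo⟩ := hH
    set L : EuclideanSpace ℝ (Fin d) → ℝ :=
      fun u => (∑ i, a i * h i u) + ∑ i, ∑ j, bq i j * (h i u * h j u) with hLdef
    have hLspan : L ∈ Submodule.span ℝ ℋ := by
      rw [hLdef]
      have e1 : (fun u : EuclideanSpace ℝ (Fin d) =>
            (∑ i, a i * h i u) + ∑ i, ∑ j, bq i j * (h i u * h j u))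
          = (∑ i : Fin d, a i • h i)
            + ∑ i : Fin d, ∑ j : Fin d, bq i j • (fun u => h i u * h j u) := by
        funext u
        simp [Finset.sum_apply, smul_eq_mul]
      rw [e1]
      exact Submodule.add_mem _
        (Submodule.sum_mem _ fun i _ => Submodule.smul_mem _ _ (hH11.1 i))
        (Submodule.sum_mem _ fun i _ => Submodule.sum_mem _ fun j _ =>
          Submodule.smul_mem _ _ (hH11.2 i j))
    have hLmem : MemCb20 U L := hmemspan L hLspan
    obtain ⟨ML, hML⟩ := hLmem.2.1
    set K : EuclideanSpace ℝ (Fin d) → ℝ := fun u => H u - L u with hKdef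
    have hKc : ContinuousOn K U := hHc.sub hLmem.1
    set MK : ℝ := MH + ML with hMKdef
    have hMK : ∀ u ∈ U, |K u| ≤ MK := fun u hu =>
      (abs_sub _ _).trans (add_le_add (hMH u hu) (hML u hu))
    have hMK0 : 0 ≤ MK := le_trans (abs_nonneg _) (hMK 0 hU0')
    have hKo : K =o[𝓝[U] 0] fun u => ‖u‖^2 := by
      have hnn : (fun u : EuclideanSpace ℝ (Fin d) => ‖u‖ * ‖u‖)
          = fun u : EuclideanSpace ℝ (Fin d) => ‖u‖^2 := funext fun u => (sq ‖u‖).symm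
      have T1 : ∀ i : Fin d, (fun u : EuclideanSpace ℝ (Fin d) => h i u - u i)
          =o[𝓝[U] 0] fun u => ‖u‖^2 := by
        intro i
        have heq : (fun u : EuclideanSpace ℝ (Fin d) => u i * εf i u)
            =ᶠ[𝓝[U] 0] fun u => h i u - u i := by
          filter_upwards [eventually_mem_nhdsWithin] with u hu
          rw [hεid i u hu]; ring
        have base := (hcoordO i).mul_isLittleO (hεo i)
        rw [hnn] at base
        exact base.congr' heq EventuallyEq.rfl
      have T2 : ∀ i j : Fin d,
          (fun u : EuclideanSpace ℝ (Fin d) => h i u * h j u - u i * u j)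
          =o[𝓝[U] 0] fun u => ‖u‖^2 := by
        intro i j
        have heq : (fun u : EuclideanSpace ℝ (Fin d) =>
              (u i * u j) * (εf i u + εf j u + εf i u * εf j u))
            =ᶠ[𝓝[U] 0] fun u => h i u * h j u - u i * u j := by
          filter_upwards [eventually_mem_nhdsWithin] with u hu
          rw [hεid i u hu, hεid j u hu]; ring
        have hOij : (fun u : EuclideanSpace ℝ (Fin d) => u i * u j) =O[𝓝[U] 0]
            fun u => ‖u‖^2 := by
          have := (hcoordO i).mul (hcoordO j)
          rwa [hnn] at this
        have hsmall : (fun u : EuclideanSpace ℝ (Fin d) =>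
            εf i u + εf j u + εf i u * εf j u) =o[𝓝[U] 0] (fun _ => (1:ℝ)) := by
          rw [isLittleO_one_iff]
          have := ((hεt i).add (hεt j)).add ((hεt i).mul (hεt j))
          simpa using this
        have base := hOij.mul_isLittleO hsmall
        have e1 : (fun u : EuclideanSpace ℝ (Fin d) => ‖u‖^2 * 1)
            = fun u : EuclideanSpace ℝ (Fin d) => ‖u‖^2 := funext fun u => mul_one _
        rw [e1] at base
        exact base.congr' heq EventuallyEq.rfl
      have hsum1 : (fun u : EuclideanSpace ℝ (Fin d) => ∑ i, a i * (h i u - u i))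
          =o[𝓝[U] 0] fun u => ‖u‖^2 :=
        IsLittleO.fun_sum fun i _ => (T1 i).const_mul_left (a i)
      have hsum2 : (fun u : EuclideanSpace ℝ (Fin d) =>
            ∑ i, ∑ j, bq i j * (h i u * h j u - u i * u j))
          =o[𝓝[U] 0] fun u => ‖u‖^2 :=
        IsLittleO.fun_sum fun i _ => IsLittleO.fun_sum fun j _ => (T2 i j).const_mul_left (bq i j)
      have comb := (hlo.sub hsum1).sub hsum2
      refine comb.congr' (Filter.Eventually.of_forall fun u => ?_) EventuallyEq.rfl
      simp only [hKdef, hLdef, mul_sub, Finset.sum_sub_distrib]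
      ring
    have hK0 : K 0 = 0 := by
      have h1 := hKo.def one_pos
      have h2 := h1.self_of_nhdsWithin hU0'
      simpa using h2
    set g : EuclideanSpace ℝ (Fin d) → ℝ := fun u => if u = 0 then 0 else K u / D u with hgdef
    have hg0 : g 0 = 0 := by rw [hgdef]; simp
    have hgU : ∀ u ∈ U, K u = D u * g u := by
      intro u hu
      by_cases h0 : u = 0
      · subst h0; rw [hg0, hK0, mul_zero]
      · rw [hgdef]
        simp only [if_neg h0]
        rw [eq_comm, mul_comm, div_mul_cancel₀ _ (hDpos u hu h0).ne']
    have hgc : ContinuousOn g U := by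
      intro u hu
      by_cases h0 : u = 0
      · subst h0
        have hq : Tendsto (fun w : EuclideanSpace ℝ (Fin d) => K w / ‖w‖^2)
            (𝓝[U] 0) (𝓝 0) := hKo.tendsto_div_nhds_zero
        have hev : ∀ᶠ w in 𝓝[U] 0, ‖g w‖ ≤ 4 * |K w / ‖w‖^2| := by
          have hevε : ∀ᶠ w in 𝓝[U] 0, ∀ i : Fin d, |εf i w| < 1/2 := by
            rw [eventually_all]
            intro i
            have ht := (hεt i).abs
            rw [abs_zero] at ht
            exact ht.eventually_lt_const (by norm_num)
          filter_upwards [hevε, eventually_mem_nhdsWithin] with w hw hwU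
          by_cases hw0 : w = 0
          · subst hw0
            simp [hg0]
          · have hD4 : ‖w‖^2 / 4 ≤ D w := by
              rw [hDdef, hnormsq]
              have hterm : ∀ i : Fin d, w i ^2 * (1/4) ≤ (h i w)^2 := by
                intro i
                rw [hεid i w hwU]
                have h1 : |εf i w| ≤ 1/2 := (hw i).le
                have h2 : (1/2 : ℝ) ≤ 1 + εf i w := by
                  have := abs_le.1 h1
                  linarith [this.1]
                calc w i ^2 * (1/4) = w i ^2 * (1/2)^2 := by norm_num
                  _ ≤ w i^2 * (1 + εf i w)^2 := by
                      apply mul_le_mul_of_nonneg_left _ (sq_nonneg _)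
                      exact pow_le_pow_left₀ (by norm_num) h2 2
                  _ = (w i * (1 + εf i w))^2 := by ring
              calc (∑ i, w i ^2) / 4 = ∑ i, w i^2 * (1/4) := by
                    rw [Finset.sum_div]
                    exact Finset.sum_congr rfl fun i _ => by ring
                _ ≤ ∑ i, (h i w)^2 := Finset.sum_le_sum fun i _ => hterm i
            have hDw : 0 < D w := hDpos w hwU hw0
            have hn2 : (0:ℝ) < ‖w‖^2 := by
              have : 0 < ‖w‖ := norm_pos_iff.2 hw0
              positivity
            have hgw : g w = K w / D w := by rw [hgdef]; simp [hw0]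
            have e3 : |K w| / D w ≤ 4 * |K w| / ‖w‖^2 := by
              rw [div_le_div_iff₀ hDw hn2]
              nlinarith [abs_nonneg (K w), hD4]
            rw [hgw, Real.norm_eq_abs, abs_div, abs_of_pos hDw, abs_div, abs_of_pos hn2]
            calc |K w| / D w ≤ 4 * |K w| / ‖w‖^2 := e3
              _ = 4 * (|K w| / ‖w‖^2) := by ring
        have hts : Tendsto g (𝓝[U] 0) (𝓝 0) :=
          squeeze_zero_norm' hev (by simpa using (hq.abs.const_mul (4:ℝ)))
        show Tendsto g (𝓝[U] 0) (𝓝 (g 0))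
        rw [hg0]
        exact hts
      · have hW : ContinuousWithinAt (fun w => K w / D w) U u :=
          (hKc u hu).div (hDc u hu) (hDpos u hu h0).ne'
        apply hW.congr
        · intro y hy
          by_cases hy0 : y = 0
          · subst hy0
            rw [hg0, hK0, zero_div]
          · rw [hgdef]
            simp [hy0]
        · rw [hgdef]
          simp [h0]
    have hUCK : UCauchy 𝒳 GN K := by
      intro ε hε
      set ε₁ := ε/(4*(MK+1)) with hε₁def
      have h4pos : (0:ℝ) < 4*(MK+1) := by linarith
      have hε₁pos : 0 < ε₁ := div_pos hε h4pos
      obtain ⟨b₀, hb₀⟩ := hH0 ε₁ hε₁pos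
      set b := max b₀ 0 with hbdef
      set χ : EuclideanSpace ℝ (Fin d) → ℝ := fun u => max 0 (min 1 (b + 1 - ‖u‖)) with hχdef
      have hχc : Continuous χ :=
        continuous_const.max (continuous_const.min (continuous_const.sub continuous_norm))
      have hχ0le : ∀ u, 0 ≤ χ u := fun u => le_max_left _ _
      have hχle1 : ∀ u, χ u ≤ 1 := fun u => max_le zero_le_one (min_le_left _ _)
      have hχ1 : ∀ u : EuclideanSpace ℝ (Fin d), ‖u‖ ≤ b → χ u = 1 := by
        intro u hub
        simp only [hχdef]
        rw [min_eq_left (by linarith), max_eq_right zero_le_one]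
      have hχzero : ∀ u : EuclideanSpace ℝ (Fin d), b + 1 ≤ ‖u‖ → χ u = 0 := by
        intro u hub
        simp only [hχdef]
        rw [max_eq_left]
        exact le_trans (min_le_right _ _) (by linarith)
      set gc : EuclideanSpace ℝ (Fin d) → ℝ := fun u => g u * χ u with hgcdef
      have hgccont : ContinuousOn gc U := hgc.mul hχc.continuousOn
      have hgcsupp : ∃ Kc : Set (EuclideanSpace ℝ (Fin d)),
          IsCompact Kc ∧ ∀ u ∈ U, u ∉ Kc → gc u = 0 := by
        refine ⟨Metric.closedBall 0 (b+1), isCompact_closedBall _ _, fun u _ hnot => ?_⟩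
        have hbu : b + 1 ≤ ‖u‖ := by
          rw [Metric.mem_closedBall, dist_zero_right] at hnot
          linarith [not_le.1 hnot]
        simp only [hgcdef]
        rw [hχzero u hbu, mul_zero]
      have hgc0 : gc 0 = 0 := by
        simp only [hgcdef]
        rw [hg0, zero_mul]
      obtain ⟨gs, hgsmem, hgsapp, hgsspan⟩ := hH12 gc hgccont hgcsupp hgc0
      obtain ⟨ND, hND⟩ := hUCspan D hDspan 1 one_pos
      set C := v ND * MD + 2 with hCdef
      have hC0 : 0 < C := by nlinarith [hv ND, hMD0]
      have hGND : ∀ N ≥ ND, ∀ x ∈ 𝒳, GN N x D ≤ C - 1 := by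
        intro N hN x hx
        have e1 := abs_le.1 (hND N hN ND le_rfl x hx)
        have e2 := abs_le.1 (hGNb D MD hMD ND x hx)
        rw [hCdef]
        linarith [e1.2, e2.2]
      obtain ⟨n₀, hn₀⟩ := hgsapp (ε/(8*C)) (by positivity)
      have happ : ∀ u ∈ U, |gc u - gs n₀ u| ≤ ε/(8*C) := hn₀ n₀ le_rfl
      obtain ⟨hggc, ⟨Mgg, hMgg⟩, -⟩ := hgsmem n₀
      have hMgg0 : 0 ≤ Mgg := le_trans (abs_nonneg _) (hMgg 0 hU0')
      set DG : EuclideanSpace ℝ (Fin d) → ℝ := fun u => D u * gs n₀ u with hDGdef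
      have hDGspan : DG ∈ Submodule.span ℝ ℋ := by
        have hsp := hgsspan n₀
        simp only [hDGdef, hDdef]
        exact hsp
      have hDGc : ContinuousOn DG U := hDc.mul hggc
      have hMDG : ∀ u ∈ U, |DG u| ≤ MD * Mgg := by
        intro u hu
        simp only [hDGdef]
        rw [abs_mul]
        exact mul_le_mul (hMD u hu) (hMgg u hu) (abs_nonneg _) hMD0
      obtain ⟨N₁, hN₁⟩ := hUCspan DG hDGspan (ε/4) (by linarith)
      set N₂ := max (max ND N₁) 1 with hN₂def
      have hkey : ∀ N ≥ N₂, ∀ x ∈ 𝒳, |GN N x K - GN N x DG| ≤ 3*ε/8 := by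
        intro N hN x hx
        have hN1 : 1 ≤ N := le_trans (le_max_right _ _) hN
        have hND' : ND ≤ N := le_trans (le_trans (le_max_left _ _) (le_max_left _ _)) hN
        set A : EuclideanSpace ℝ (Fin d) → ℝ := fun u => K u * χ u - DG u with hAdef
        set B : EuclideanSpace ℝ (Fin d) → ℝ := fun u => K u * (1 - χ u) with hBdef
        have hABK : ∀ u, K u - DG u = A u + B u := fun u => by
          simp only [hAdef, hBdef]
          ring
        have hAc : ContinuousOn A U := (hKc.mul hχc.continuousOn).sub hDGc
        have hAb : ∀ u ∈ U, |A u| ≤ MK + MD * Mgg := by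
          intro u hu
          simp only [hAdef]
          refine (abs_sub _ _).trans (add_le_add ?_ (hMDG u hu))
          rw [abs_mul]
          calc |K u| * |χ u| ≤ MK * 1 := by
                refine mul_le_mul (hMK u hu) ?_ (abs_nonneg _) hMK0
                rw [abs_of_nonneg (hχ0le u)]
                exact hχle1 u
            _ = MK := mul_one _
        have hBc : ContinuousOn B U := hKc.mul (continuous_const.sub hχc).continuousOn
        have hBb : ∀ u ∈ U, |B u| ≤ MK := by
          intro u hu
          simp only [hBdef]
          rw [abs_mul]
          calc |K u| * |1 - χ u| ≤ MK * 1 := by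
                refine mul_le_mul (hMK u hu) ?_ (abs_nonneg _) hMK0
                rw [abs_le]
                constructor <;> [linarith [hχle1 u]; linarith [hχ0le u]]
            _ = MK := mul_one _
        have hiA := hint A hAc _ hAb N x hx
        have hiB := hint B hBc MK hBb N x hx
        have hiK := hint K hKc MK hMK N x hx
        have hiDG := hint DG hDGc _ hMDG N x hx
        have hiD := hint D hDc MD hMD N x hx
        have hsplit : GN N x K - GN N x DG
            = v N * (∫ ω, A (F N x ω - x) ∂P) + v N * (∫ ω, B (F N x ω - x) ∂P) := by
          rw [hGN, hGN, ← mul_sub, ← mul_add]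
          congr 1
          rw [← integral_sub hiK hiDG, ← integral_add hiA hiB]
          exact integral_congr_ae (Filter.Eventually.of_forall fun ω => hABK (F N x ω - x))
        have hA1 : |∫ ω, A (F N x ω - x) ∂P| ≤ (ε/(8*C)) * ∫ ω, D (F N x ω - x) ∂P := by
          have hpt : ∀ ω, |A (F N x ω - x)| ≤ (ε/(8*C)) * D (F N x ω - x) := by
            intro ω
            have hu := hFU N x hx ω
            have e1 : K (F N x ω - x) * χ (F N x ω - x)
                = D (F N x ω - x) * gc (F N x ω - x) := by
              simp only [hgcdef]
              rw [hgU _ hu]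
              ring
            have e2 : A (F N x ω - x)
                = D (F N x ω - x) * (gc (F N x ω - x) - gs n₀ (F N x ω - x)) := by
              simp only [hAdef, hDGdef]
              rw [e1]
              ring
            rw [e2, abs_mul, abs_of_nonneg (hD0 _ hu), mul_comm]
            exact mul_le_mul_of_nonneg_right (happ _ hu) (hD0 _ hu)
          calc |∫ ω, A (F N x ω - x) ∂P| ≤ ∫ ω, |A (F N x ω - x)| ∂P := by
                simpa [Real.norm_eq_abs] using
                  norm_integral_le_integral_norm (μ := P) (fun ω => A (F N x ω - x))
            _ ≤ ∫ ω, (ε/(8*C)) * D (F N x ω - x) ∂P :=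
                integral_mono hiA.abs (hiD.const_mul _) hpt
            _ = (ε/(8*C)) * ∫ ω, D (F N x ω - x) ∂P := integral_const_mul _ _
        set S := {ω | b < ‖F N x ω - x‖} with hSdef
        have hSmeas : MeasurableSet S :=
          measurableSet_lt measurable_const ((hFmeas N x hx).sub measurable_const).norm
        have hBpt : ∀ ω, |B (F N x ω - x)| ≤ S.indicator (fun _ => MK) ω := by
          intro ω
          by_cases hbω : b < ‖F N x ω - x‖
          · rw [Set.indicator_of_mem (by exact hbω)]
            exact hBb _ (hFU N x hx ω)
          · rw [Set.indicator_of_notMem (by exact hbω)]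
            have hχeq : χ (F N x ω - x) = 1 := hχ1 _ (not_lt.1 hbω)
            simp only [hBdef]
            rw [hχeq]
            simp
        have hB1 : |∫ ω, B (F N x ω - x) ∂P| ≤ MK * (P S).toReal := by
          calc |∫ ω, B (F N x ω - x) ∂P| ≤ ∫ ω, |B (F N x ω - x)| ∂P := by
                simpa [Real.norm_eq_abs] using
                  norm_integral_le_integral_norm (μ := P) (fun ω => B (F N x ω - x))
            _ ≤ ∫ ω, S.indicator (fun _ => MK) ω ∂P :=
                integral_mono hiB.abs ((integrable_const MK).indicator hSmeas) hBpt
            _ = (P S).toReal * MK := by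
                rw [integral_indicator_const _ hSmeas]
                simp [smul_eq_mul, measureReal_def]
            _ = MK * (P S).toReal := mul_comm _ _
        have hDle : v N * ∫ ω, D (F N x ω - x) ∂P ≤ C := by
          have hh := hGND N hND' x hx
          rw [hGN] at hh
          linarith
        have hDge : 0 ≤ v N * ∫ ω, D (F N x ω - x) ∂P := by
          have hh := hGNDpos N x hx
          rwa [hGN] at hh
        have hH0app : v N * (P S).toReal ≤ ε₁ := hb₀ b (le_max_left _ _) N hN1 x hx
        rw [hsplit]
        have eA : |v N * ∫ ω, A (F N x ω - x) ∂P| ≤ ε/8 := by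
          rw [abs_mul, abs_of_pos (hv N)]
          calc v N * |∫ ω, A (F N x ω - x) ∂P|
              ≤ v N * ((ε/(8*C)) * ∫ ω, D (F N x ω - x) ∂P) :=
                mul_le_mul_of_nonneg_left hA1 (hv N).le
            _ = (ε/(8*C)) * (v N * ∫ ω, D (F N x ω - x) ∂P) := by ring
            _ ≤ (ε/(8*C)) * C := mul_le_mul_of_nonneg_left hDle (by positivity)
            _ = ε/8 := by
                field_simp
        have eB : |v N * ∫ ω, B (F N x ω - x) ∂P| ≤ ε/4 := by
          rw [abs_mul, abs_of_pos (hv N)]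
          calc v N * |∫ ω, B (F N x ω - x) ∂P|
              ≤ v N * (MK * (P S).toReal) := mul_le_mul_of_nonneg_left hB1 (hv N).le
            _ = MK * (v N * (P S).toReal) := by ring
            _ ≤ MK * ε₁ := mul_le_mul_of_nonneg_left hH0app hMK0
            _ ≤ ε/4 := by
                rw [hε₁def]
                have h1 : MK * (ε/(4*(MK+1))) ≤ (MK+1) * (ε/(4*(MK+1))) :=
                  mul_le_mul_of_nonneg_right (by linarith) (by positivity)
                have h2 : (MK+1) * (ε/(4*(MK+1))) = ε/4 := by
                  field_simp
                linarith
        calc |v N * (∫ ω, A (F N x ω - x) ∂P) + v N * (∫ ω, B (F N x ω - x) ∂P)|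
            ≤ |v N * ∫ ω, A (F N x ω - x) ∂P| + |v N * ∫ ω, B (F N x ω - x) ∂P| := abs_add_le _ _
          _ ≤ 3*ε/8 := by linarith
      refine ⟨N₂, fun N hN M hM x hx => ?_⟩
      have e1 := hkey N hN x hx
      have e2 := hkey M hM x hx
      have e3 := hN₁ N (le_trans (le_trans (le_max_right _ _) (le_max_left _ _)) hN)
        M (le_trans (le_trans (le_max_right _ _) (le_max_left _ _)) hM) x hx
      have e2' : |GN M x DG - GN M x K| ≤ 3*ε/8 := by
        rw [abs_sub_comm]
        exact e2
      calc |GN N x K - GN M x K|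
          = |(GN N x K - GN N x DG) + ((GN N x DG - GN M x DG) + (GN M x DG - GN M x K))| := by
            ring_nf
        _ ≤ |GN N x K - GN N x DG| + |(GN N x DG - GN M x DG) + (GN M x DG - GN M x K)| :=
            abs_add_le _ _
        _ ≤ |GN N x K - GN N x DG| + (|GN N x DG - GN M x DG| + |GN M x DG - GN M x K|) := by
            linarith [abs_add_le (GN N x DG - GN M x DG) (GN M x DG - GN M x K)]
        _ ≤ ε := by linarith
    -- combine
    intro ε hε
    obtain ⟨N₁, hN₁⟩ := hUCspan L hLspan (ε/2) (by linarith)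
    obtain ⟨N₂, hN₂⟩ := hUCK (ε/2) (by linarith)
    refine ⟨max N₁ N₂, fun N hN M hM x hx => ?_⟩
    have hsplit : ∀ N', GN N' x H = GN N' x L + GN N' x K := by
      intro N'
      have hHeq : ∀ u ∈ U, H u = (L + K) u := fun u _ => by
        simp only [Pi.add_apply, hKdef]
        ring
      rw [hGNcongr H (L + K) hHeq N' x hx,
        hGNadd L K hLmem.1 ⟨ML, hML⟩ hKc ⟨MK, hMK⟩ N' x hx]
    rw [hsplit N, hsplit M]
    have e1 := hN₁ N (le_trans (le_max_left _ _) hN) M (le_trans (le_max_left _ _) hM) x hx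
    have e2 := hN₂ N (le_trans (le_max_right _ _) hN) M (le_trans (le_max_right _ _) hM) x hx
    calc |GN N x L + GN N x K - (GN M x L + GN M x K)|
        = |(GN N x L - GN M x L) + (GN N x K - GN M x K)| := by ring_nf
      _ ≤ |GN N x L - GN M x L| + |GN N x K - GN M x K| := abs_add_le _ _
      _ ≤ ε := by linarith
  -- the limit functional
  set G : EuclideanSpace ℝ (Fin d) → (EuclideanSpace ℝ (Fin d) → ℝ) → ℝ :=
    fun x H => limUnder atTop fun N => GN N x H with hGdef
  have htend : ∀ (H : EuclideanSpace ℝ (Fin d) → ℝ), MemCb20 U H → ∀ x ∈ 𝒳,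
      Tendsto (fun N => GN N x H) atTop (𝓝 (G x H)) := by
    intro H hH x hx
    have hc : CauchySeq fun N => GN N x H := by
      rw [Metric.cauchySeq_iff]
      intro ε hε
      obtain ⟨N₀, hN₀⟩ := hUCall H hH (ε/2) (by linarith)
      exact ⟨N₀, fun m hm n hn => by
        rw [Real.dist_eq]; exact lt_of_le_of_lt (hN₀ m hm n hn x hx) (by linarith)⟩
    exact hc.tendsto_limUnder
  have hconv : ∀ (H : EuclideanSpace ℝ (Fin d) → ℝ), MemCb20 U H →
      ∀ ε > (0:ℝ), ∃ N₀, ∀ N ≥ N₀, ∀ x ∈ 𝒳, |GN N x H - G x H| ≤ ε := by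
    intro H hH ε hε
    obtain ⟨N₀, hN₀⟩ := hUCall H hH (ε/2) (by linarith)
    refine ⟨N₀, fun N hN x hx => ?_⟩
    have h1 : Tendsto (fun M => |GN N x H - GN M x H|) atTop (𝓝 |GN N x H - G x H|) :=
      (tendsto_const_nhds.sub (htend H hH x hx)).abs
    have h2 : ∀ᶠ M in atTop, |GN N x H - GN M x H| ≤ ε/2 :=
      eventually_atTop.2 ⟨N₀, fun M hM => hN₀ N hN M hM x hx⟩
    linarith [le_of_tendsto h1 h2]
  refine ⟨G, ?_, ?_, ?_, ?_⟩
  · -- agrees with G0 on ℋ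
    intro x hx H hH
    have ht : Tendsto (fun N => GN N x H) atTop (𝓝 (G0 x H)) := by
      rw [Metric.tendsto_atTop]
      intro ε hε
      obtain ⟨N₀, hN₀⟩ := hH13i H hH (ε/2) (by linarith)
      exact ⟨N₀, fun N hN => by
        rw [Real.dist_eq]; exact lt_of_le_of_lt (hN₀ N hN x hx) (by linarith)⟩
    exact ht.limUnder_eq
  · -- additivity
    intro x hx H₁ H₂ h₁ h₂
    have ht : Tendsto (fun N => GN N x (H₁ + H₂)) atTop (𝓝 (G x H₁ + G x H₂)) := by
      have := (htend H₁ h₁ x hx).add (htend H₂ h₂ x hx)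
      exact this.congr fun N => (hGNadd H₁ H₂ h₁.1 h₁.2.1 h₂.1 h₂.2.1 N x hx).symm
    exact ht.limUnder_eq
  · -- homogeneity
    intro x hx c H hH
    have ht : Tendsto (fun N => GN N x (c • H)) atTop (𝓝 (c * G x H)) := by
      have := (htend H hH x hx).const_mul c
      exact this.congr fun N => (hGNsmul c H N x).symm
    exact ht.limUnder_eq
  · intro H hH
    refine ⟨hconv H hH, ?_, ?_⟩
    · -- uniform bound over N ≥ 1
      obtain ⟨M₀, hM₀⟩ := hH.2.1
      have hM₀0 : 0 ≤ M₀ := le_trans (abs_nonneg _) (hM₀ 0 hU0')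
      obtain ⟨N₀, hN₀⟩ := hconv H hH 1 one_pos
      set N₁ := max N₀ 1 with hN₁
      set S := ∑ k ∈ Finset.range (N₁+1), v k with hS
      have hS0 : 0 ≤ S * M₀ :=
        mul_nonneg (Finset.sum_nonneg fun k _ => (hv k).le) hM₀0
      refine ⟨S * M₀ + (v N₁ * M₀ + 2), fun N hN x hx => ?_⟩
      rcases le_or_gt N₁ N with hcase | hcase
      · have e1 : |GN N x H - G x H| ≤ 1 := hN₀ N (le_trans (le_max_left _ _) hcase) x hx
        have e2 : |GN N₁ x H - G x H| ≤ 1 := hN₀ N₁ (le_max_left _ _) x hx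
        have e3 : |GN N₁ x H| ≤ v N₁ * M₀ := hGNb H M₀ hM₀ N₁ x hx
        have t1 : |GN N x H| ≤ |GN N x H - G x H| + |G x H| := by
          calc |GN N x H| = |(GN N x H - G x H) + G x H| := by ring_nf
          _ ≤ |GN N x H - G x H| + |G x H| := abs_add_le _ _
        have t2 : |G x H| ≤ |GN N₁ x H - G x H| + |GN N₁ x H| := by
          calc |G x H| = |-(GN N₁ x H - G x H) + GN N₁ x H| := by ring_nf
          _ ≤ |-(GN N₁ x H - G x H)| + |GN N₁ x H| := abs_add_le _ _
          _ = |GN N₁ x H - G x H| + |GN N₁ x H| := by rw [abs_neg]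
        linarith
      · have e1 : |GN N x H| ≤ v N * M₀ := hGNb H M₀ hM₀ N x hx
        have e2 : v N ≤ S := Finset.single_le_sum (f := v) (fun k _ => (hv k).le)
          (Finset.mem_range.2 (by omega))
        have e3 : v N * M₀ ≤ S * M₀ := mul_le_mul_of_nonneg_right e2 hM₀0
        have e4 : 0 ≤ v N₁ * M₀ := mul_nonneg (hv N₁).le hM₀0
        linarith
    · -- transfer of bounds to the limit
      intro M hM x hx
      exact le_of_tendsto (htend H hH x hx).abs
        (eventually_atTop.2 ⟨1, fun N hN => hM N hN x hx⟩)
end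

section
/- Let 𝒳 be a nonempty set, let (v_N)_N be positive reals with v_N → ∞, and let G^N : 𝒳 → ℝ (N ≥ 1) and G : 𝒳 → ℝ be functions such that lim_{N→∞} sup_{x∈𝒳} |G^N(x) − G(x)| = 0 and α := sup_{N≥1} sup_{x∈𝒳} |G^N(x)| < ∞. Then for every T > 0 and every family of sequences (x^N_k)_{k≥0} in 𝒳, sup_{0≤t≤T} | (1/v_N) Σ_{k=1}^{⌊v_N t⌋} G^N(x^N_{k−1}) − ∫_0^t G(x^N_{⌊v_N s⌋}) ds | → 0 as N → ∞. (Applied pathwise along a Markov chain X^N with transition characteristics G^N, this gives the almost sure uniform convergence of the compensator sums φ^N_t(H) = Σ_{k≤⌊v_N t⌋} E[H(X^N_k − X^N_{k−1}) | ℱ^N_{k−1}] to ∫_0^t G_{X^N_{⌊v_N s⌋}}(H) ds.) -/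
open Filter Set Topology

open MeasureTheory

lemma step_intble (v : ℝ) (f : ℕ → ℝ) (C : ℝ) (hC : ∀ k, |f k| ≤ C)
    (a b : ℝ) : IntervalIntegrable (fun s => f ⌊v * s⌋₊) volume a b := by
  have hm : Measurable (fun s : ℝ => f ⌊v * s⌋₊) :=
    measurable_from_top.comp (Nat.measurable_floor.comp (measurable_const.mul measurable_id))
  refine IntervalIntegrable.mono_fun' (g := fun _ => C) intervalIntegrable_const
    hm.aestronglyMeasurable ?_
  filter_upwards with s
  simpa using hC _

lemma piece (v : ℝ) (hv : 0 < v) (f : ℕ → ℝ) (k : ℕ) (b : ℝ)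
    (hb1 : (k : ℝ) / v ≤ b) (hb2 : b ≤ ((k : ℝ) + 1) / v) :
    ∫ s in ((k : ℝ) / v)..b, f ⌊v * s⌋₊ = (b - (k : ℝ) / v) * f k := by
  have hcong : ∀ᵐ s ∂volume, s ∈ uIoc ((k : ℝ) / v) b → f ⌊v * s⌋₊ = (fun _ => f k) s := by
    have hsub : {s : ℝ | ¬(s ∈ uIoc ((k : ℝ) / v) b → f ⌊v * s⌋₊ = f k)} ⊆ {((k : ℝ) + 1) / v} := by
      intro s hs
      simp only [mem_setOf_eq, Classical.not_imp] at hs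
      obtain ⟨hmem, hne⟩ := hs
      rw [uIoc_of_le hb1] at hmem
      by_contra hb
      apply hne
      have h1 : (k : ℝ) < v * s := by
        have := hmem.1
        rw [div_lt_iff₀ hv] at this
        linarith [mul_comm s v]
      have h2 : v * s < (k : ℝ) + 1 := by
        have hlt : s < ((k : ℝ) + 1) / v := lt_of_le_of_ne (hmem.2.trans hb2) (by simpa using hb)
        rw [lt_div_iff₀ hv] at hlt
        linarith [mul_comm s v]
      have : ⌊v * s⌋₊ = k := by
        rw [Nat.floor_eq_iff ((Nat.cast_nonneg k).trans h1.le)]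
        exact ⟨le_of_lt h1, by exact_mod_cast h2⟩
      rw [this]
    have : volume {s : ℝ | ¬(s ∈ uIoc ((k : ℝ) / v) b → f ⌊v * s⌋₊ = f k)} = 0 :=
      measure_mono_null hsub (measure_singleton _)
    exact (MeasureTheory.ae_iff).2 this
  rw [intervalIntegral.integral_congr_ae hcong, intervalIntegral.integral_const]
  simp [smul_eq_mul]

lemma step_integral (v : ℝ) (hv : 0 < v) (f : ℕ → ℝ) (C : ℝ) (hC : ∀ k, |f k| ≤ C)
    (t : ℝ) (ht : 0 ≤ t) :
    ∫ s in (0 : ℝ)..t, f ⌊v * s⌋₊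
      = (1 / v) * ∑ k ∈ Finset.range ⌊v * t⌋₊, f k
        + (t - (⌊v * t⌋₊ : ℝ) / v) * f ⌊v * t⌋₊ := by
  set n := ⌊v * t⌋₊ with hn
  have hnle : (n : ℝ) ≤ v * t := Nat.floor_le (by positivity)
  have hnlt : v * t < (n : ℝ) + 1 := Nat.lt_floor_add_one _
  have hnv : (n : ℝ) / v ≤ t := by rw [div_le_iff₀ hv]; linarith [mul_comm t v]
  have htlt : t ≤ ((n : ℝ) + 1) / v := by rw [le_div_iff₀ hv]; linarith [mul_comm t v]
  have h0 : ∫ s in (0 : ℝ)..t, f ⌊v * s⌋₊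
      = (∫ s in (0 : ℝ)..((n : ℝ) / v), f ⌊v * s⌋₊)
        + ∫ s in ((n : ℝ) / v)..t, f ⌊v * s⌋₊ := by
    rw [intervalIntegral.integral_add_adjacent_intervals (step_intble v f C hC _ _)
      (step_intble v f C hC _ _)]
  have h1 : ∫ s in (0 : ℝ)..((n : ℝ) / v), f ⌊v * s⌋₊
      = (1 / v) * ∑ k ∈ Finset.range n, f k := by
    have hsum := intervalIntegral.sum_integral_adjacent_intervals
      (a := fun k : ℕ => (k : ℝ) / v) (n := n)
      (f := fun s => f ⌊v * s⌋₊) (μ := volume)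
      (fun k _ => step_intble v f C hC _ _)
    simp only [Nat.cast_zero, zero_div] at hsum
    rw [← hsum, Finset.mul_sum]
    refine Finset.sum_congr rfl fun k _ => ?_
    have hle : (k : ℝ) / v ≤ ((k : ℝ) + 1) / v := by gcongr <;> linarith
    have hp := piece v hv f k (((k : ℝ) + 1) / v) hle (le_refl _)
    push_cast
    rw [hp]
    field_simp
    ring
  have h2 : ∫ s in ((n : ℝ) / v)..t, f ⌊v * s⌋₊ = (t - (n : ℝ) / v) * f n :=
    piece v hv f n t hnv htlt
  rw [h0, h1, h2]

/-- Proposition 2.7 (key proposition): uniform convergence of the Riemann-sum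
compensators to the time integral of the limiting characteristics, along any family
of sequences in `𝒳`. -/
theorem stmt3 {𝒳 : Type*} [Nonempty 𝒳]
    (v : ℕ → ℝ) (hvpos : ∀ N, 0 < v N) (hvtop : Tendsto v atTop atTop)
    (GN : ℕ → 𝒳 → ℝ) (G : 𝒳 → ℝ)
    (hconv : ∀ ε > (0 : ℝ), ∃ N₀, ∀ N ≥ N₀, ∀ x : 𝒳, |GN N x - G x| ≤ ε)
    (hbdd : ∃ α : ℝ, ∀ N ≥ 1, ∀ x : 𝒳, |GN N x| ≤ α) :
    ∀ T > (0 : ℝ), ∀ xs : ℕ → ℕ → 𝒳, ∀ ε > (0 : ℝ), ∃ N₀, ∀ N ≥ N₀,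
      ∀ t ∈ Icc (0 : ℝ) T,
        |(1 / v N) * ∑ k ∈ Finset.range ⌊v N * t⌋₊, GN N (xs N k) -
          ∫ s in (0 : ℝ)..t, G (xs N ⌊v N * s⌋₊)| ≤ ε := by
  obtain ⟨α, hα⟩ := hbdd
  intro T hT xs ε hε
  -- a bound on G
  obtain ⟨N₁, hN₁⟩ := hconv 1 one_pos
  have hGbd : ∀ x : 𝒳, |G x| ≤ α + 1 := by
    intro x
    have h1 := hN₁ (max N₁ 1) (le_max_left _ _) x
    have h2 := hα (max N₁ 1) (le_max_right _ _) x
    calc |G x| = |GN (max N₁ 1) x - (GN (max N₁ 1) x - G x)| := by ring_nf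
      _ ≤ |GN (max N₁ 1) x| + |GN (max N₁ 1) x - G x| := abs_sub _ _
      _ ≤ α + 1 := add_le_add h2 h1
  have hα0 : 0 ≤ α := (abs_nonneg _).trans (hα 1 le_rfl Classical.ofNonempty)
  obtain ⟨N₂, hN₂⟩ := hconv (ε / (2 * T)) (by positivity)
  obtain ⟨N₃, hN₃⟩ := (hvtop.eventually_ge_atTop (2 * (α + 1) / ε)).exists_forall_of_atTop
  refine ⟨max (max N₂ N₃) 1, fun N hN t ht => ?_⟩
  have hN2 : N ≥ N₂ := le_trans (le_trans (le_max_left _ _) (le_max_left _ _)) hN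
  have hN3 : N ≥ N₃ := le_trans (le_trans (le_max_right _ _) (le_max_left _ _)) hN
  have hN1' : N ≥ 1 := le_trans (le_max_right _ _) hN
  have hv := hvpos N
  have hvge : v N ≥ 2 * (α + 1) / ε := hN₃ N hN3
  set n := ⌊v N * t⌋₊ with hn
  have hint := step_integral (v N) hv (fun k => G (xs N k)) (α + 1)
    (fun k => hGbd _) t ht.1
  rw [hint]
  have hnle : (n : ℝ) ≤ v N * t := Nat.floor_le (mul_nonneg hv.le ht.1)
  have hnlt : v N * t < (n : ℝ) + 1 := Nat.lt_floor_add_one _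
  have hnv : (n : ℝ) / v N ≤ t := by rw [div_le_iff₀ hv]; linarith [mul_comm t (v N)]
  have htub : t - (n : ℝ) / v N ≤ 1 / v N := by
    rw [sub_le_iff_le_add, ← add_div, le_div_iff₀ hv]
    linarith [mul_comm t (v N)]
  have key : (1 / v N) * ∑ k ∈ Finset.range n, GN N (xs N k) -
      ((1 / v N) * ∑ k ∈ Finset.range n, G (xs N k)
        + (t - (n : ℝ) / v N) * G (xs N n))
      = (1 / v N) * ∑ k ∈ Finset.range n, (GN N (xs N k) - G (xs N k))
        - (t - (n : ℝ) / v N) * G (xs N n) := by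
    rw [Finset.sum_sub_distrib]; ring
  rw [key]
  have h1 : |(1 / v N) * ∑ k ∈ Finset.range n, (GN N (xs N k) - G (xs N k))|
      ≤ ε / 2 := by
    rw [abs_mul]
    have hsum : |∑ k ∈ Finset.range n, (GN N (xs N k) - G (xs N k))|
        ≤ (n : ℝ) * (ε / (2 * T)) := by
      calc |∑ k ∈ Finset.range n, (GN N (xs N k) - G (xs N k))|
          ≤ ∑ k ∈ Finset.range n, |GN N (xs N k) - G (xs N k)| :=
            Finset.abs_sum_le_sum_abs _ _
        _ ≤ ∑ _k ∈ Finset.range n, (ε / (2 * T)) :=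
            Finset.sum_le_sum fun k _ => hN₂ N hN2 _
        _ = (n : ℝ) * (ε / (2 * T)) := by simp [mul_comm]
    calc |1 / v N| * |∑ k ∈ Finset.range n, (GN N (xs N k) - G (xs N k))|
        ≤ (1 / v N) * ((n : ℝ) * (ε / (2 * T))) := by
          rw [abs_of_pos (by positivity)]
          exact mul_le_mul_of_nonneg_left hsum (by positivity)
      _ = ((n : ℝ) / v N) * (ε / (2 * T)) := by ring
      _ ≤ T * (ε / (2 * T)) := by
          apply mul_le_mul_of_nonneg_right (hnv.trans ht.2) (by positivity)
      _ = ε / 2 := by field_simp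
  have h2 : |(t - (n : ℝ) / v N) * G (xs N n)| ≤ ε / 2 := by
    rw [abs_mul, abs_of_nonneg (by linarith [hnv] : (0:ℝ) ≤ t - (n : ℝ) / v N)]
    calc (t - (n : ℝ) / v N) * |G (xs N n)|
        ≤ (1 / v N) * (α + 1) :=
          mul_le_mul htub (hGbd _) (abs_nonneg _) (by positivity)
      _ ≤ ε / 2 := by
          rw [div_mul_eq_mul_div, div_le_iff₀ hv]
          have : 2 * (α + 1) / ε * (ε / 2) ≤ v N * (ε / 2) :=
            mul_le_mul_of_nonneg_right hvge (by positivity)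
          calc 1 * (α + 1) = 2 * (α + 1) / ε * (ε / 2) := by field_simp
            _ ≤ v N * (ε / 2) := this
            _ = ε / 2 * v N := mul_comm _ _
  calc |(1 / v N) * ∑ k ∈ Finset.range n, (GN N (xs N k) - G (xs N k))
        - (t - (n : ℝ) / v N) * G (xs N n)|
      ≤ |(1 / v N) * ∑ k ∈ Finset.range n, (GN N (xs N k) - G (xs N k))|
        + |(t - (n : ℝ) / v N) * G (xs N n)| := abs_sub _ _
    _ ≤ ε / 2 + ε / 2 := add_le_add h1 h2
    _ = ε := by ring
end

section
/- Assume Assumption A. Then for every continuous bounded function f : (−1,∞) → ℝ with f(w) = o(w²) as w → 0, the function f is ν_E-integrable and lim_{N→∞} N·E[f(E^N)] = ∫_{(−1,∞)} f(w) dν_E(w). -/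
open MeasureTheory Filter Set Topology Asymptotics

private lemma comp_integrable {Ω : Type*} [MeasurableSpace Ω] (P : Measure Ω)
    [IsProbabilityMeasure P] (X : Ω → ℝ) (hX : Measurable X) (hXv : ∀ ω, -1 < X ω)
    (g : ℝ → ℝ) (hg : ContinuousOn g (Ioi (-1))) (M : ℝ)
    (hgM : ∀ w ∈ Ioi (-1:ℝ), |g w| ≤ M) :
    Integrable (fun ω => g (X ω)) P := by
  have h1 : Measurable fun ω => (⟨X ω, hXv ω⟩ : Ioi (-1:ℝ)) := hX.subtype_mk
  have h2 : Continuous ((Ioi (-1:ℝ)).restrict g) := continuousOn_iff_continuous_restrict.mp hg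
  have hm : Measurable fun ω => g (X ω) := h2.measurable.comp h1
  refine (integrable_const M).mono' hm.aestronglyMeasurable (ae_of_all _ fun ω => ?_)
  simpa [Real.norm_eq_abs] using hgM _ (hXv ω)

private lemma abs_le_const_mul_min {g : ℝ → ℝ} {δ M ε : ℝ} (hδ : 0 < δ) (hε : 0 ≤ ε)
    (hM : 0 ≤ M)
    (hsm : ∀ w : ℝ, |w| < δ → |g w| ≤ ε * w ^ 2)
    (hgM : ∀ w ∈ Ioi (-1:ℝ), |g w| ≤ M) :
    ∀ w ∈ Ioi (-1:ℝ), |g w| ≤ (ε + M / (min δ 1 / 2) ^ 2) * min (w ^ 2) 1 := by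
  intro w hw
  set c := min δ 1 / 2 with hc
  have hc0 : 0 < c := by
    have : 0 < min δ 1 := lt_min hδ one_pos
    positivity
  have hcδ : c < δ := by
    have h1 : min δ 1 ≤ δ := min_le_left _ _
    have : 0 < min δ 1 := lt_min hδ one_pos
    simp only [hc]; linarith
  have hc1 : c ≤ 1 / 2 := by
    have : min δ 1 ≤ 1 := min_le_right _ _
    simp only [hc]; linarith
  have hdivnn : 0 ≤ M / c ^ 2 := div_nonneg hM (by positivity)
  rcases le_or_gt |w| c with h | h
  · have hlt : |w| < δ := lt_of_le_of_lt h hcδ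
    have hg1 : |g w| ≤ ε * w ^ 2 := hsm w hlt
    have hw2 : w ^ 2 ≤ 1 := by nlinarith [abs_nonneg w, sq_abs w]
    rw [min_eq_left hw2]
    nlinarith [sq_nonneg w]
  · have h1 : c ^ 2 ≤ w ^ 2 := by nlinarith [abs_nonneg w, sq_abs w]
    have h2 : c ^ 2 ≤ 1 := by nlinarith
    have hmin : c ^ 2 ≤ min (w ^ 2) 1 := le_min h1 h2
    have hd : M / c ^ 2 * c ^ 2 = M := div_mul_cancel₀ _ (by positivity)
    have := hgM w hw
    nlinarith [min_le_right (w ^ 2) 1, sq_nonneg c]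

noncomputable def phiCut (δ w : ℝ) : ℝ := min 1 (max 0 (2 / δ * |w| - 1))

lemma phiCut_continuous (δ : ℝ) : Continuous (phiCut δ) := by
  unfold phiCut
  exact continuous_const.min (continuous_const.max
    ((continuous_const.mul continuous_abs).sub continuous_const))

lemma phiCut_nonneg (δ w : ℝ) : 0 ≤ phiCut δ w := le_min one_pos.le (le_max_left _ _)

lemma phiCut_le_one (δ w : ℝ) : phiCut δ w ≤ 1 := min_le_left _ _

lemma phiCut_eq_zero {δ w : ℝ} (hδ : 0 < δ) (h : |w| ≤ δ / 2) : phiCut δ w = 0 := by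
  have h1 : 2 / δ * |w| ≤ 1 := by
    rw [div_mul_eq_mul_div, div_le_one hδ]; linarith
  unfold phiCut
  rw [max_eq_left (by linarith), min_eq_right (by norm_num)]

lemma phiCut_eq_one {δ w : ℝ} (hδ : 0 < δ) (h : δ ≤ |w|) : phiCut δ w = 1 := by
  have h1 : 2 ≤ 2 / δ * |w| := by
    rw [div_mul_eq_mul_div, le_div_iff₀ hδ]; nlinarith
  unfold phiCut
  rw [min_eq_left]; exact le_max_of_le_right (by linarith)

lemma phiCut_abs_le_one (δ w : ℝ) : |phiCut δ w| ≤ 1 :=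
  abs_le.mpr ⟨by linarith [phiCut_nonneg δ w], phiCut_le_one δ w⟩

private lemma integrableOn_of_min_bound {νE : Measure ℝ}
    (hνEint : IntegrableOn (fun w => min (w ^ 2) 1) (Ioi (-1)) νE)
    {g : ℝ → ℝ} (hg : ContinuousOn g (Ioi (-1))) {C : ℝ}
    (hC : ∀ w ∈ Ioi (-1:ℝ), |g w| ≤ C * min (w ^ 2) 1) :
    IntegrableOn g (Ioi (-1)) νE := by
  refine (hνEint.const_mul C).mono' (hg.aestronglyMeasurable measurableSet_Ioi) ?_
  rw [ae_restrict_iff' measurableSet_Ioi]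
  exact ae_of_all _ fun w hw => by simpa [Real.norm_eq_abs] using hC w hw

set_option maxHeartbeats 1000000 in
/-- Under Assumption A, the convergence `N·E[f(Eᴺ)] → ∫ f dν_E` extends to every
continuous bounded `f : (-1,∞) → ℝ` with `f(w) = o(w²)` as `w → 0`. -/
theorem stmt5 {Ω : Type*} [MeasurableSpace Ω] (P : Measure Ω) [IsProbabilityMeasure P]
    (EN : ℕ → Ω → ℝ) (hENmeas : ∀ N, Measurable (EN N))
    (hENval : ∀ N ω, -1 < EN N ω)
    -- truncation function h_E on (-1, ∞)
    (hE : ℝ → ℝ) (hEcont : ContinuousOn hE (Ioi (-1)))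
    (hEbdd : ∃ M : ℝ, ∀ w ∈ Ioi (-1 : ℝ), |hE w| ≤ M)
    (hEid : ∃ δ > (0 : ℝ), ∀ w : ℝ, |w| < δ → hE w = w)
    (hEne : ∀ w ∈ Ioi (-1 : ℝ), w ≠ 0 → hE w ≠ 0)
    -- Assumption A
    (αE σE : ℝ) (hσE : 0 ≤ σE)
    (νE : Measure ℝ) (hνE0 : νE (Iic (-1)) = 0)
    (hνEint : IntegrableOn (fun w => min (w ^ 2) 1) (Ioi (-1)) νE)
    (βE : ℝ) (hβE : βE = σE ^ 2 + ∫ w in Ioi (-1 : ℝ), hE w ^ 2 ∂νE)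
    (hA1 : Tendsto (fun N : ℕ => (N : ℝ) * ∫ ω, hE (EN N ω) ∂P) atTop (𝓝 αE))
    (hA2 : Tendsto (fun N : ℕ => (N : ℝ) * ∫ ω, hE (EN N ω) ^ 2 ∂P) atTop (𝓝 βE))
    (hA3 : ∀ f : ℝ → ℝ, ContinuousOn f (Ioi (-1)) →
      (∃ M : ℝ, ∀ w ∈ Ioi (-1 : ℝ), |f w| ≤ M) →
      (∃ δ > (0 : ℝ), ∀ w : ℝ, |w| < δ → f w = 0) →
      Tendsto (fun N : ℕ => (N : ℝ) * ∫ ω, f (EN N ω) ∂P) atTop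
        (𝓝 (∫ w in Ioi (-1 : ℝ), f w ∂νE))) :
    ∀ f : ℝ → ℝ, ContinuousOn f (Ioi (-1)) →
      (∃ M : ℝ, ∀ w ∈ Ioi (-1 : ℝ), |f w| ≤ M) →
      (f =o[𝓝[≠] (0 : ℝ)] fun w => w ^ 2) →
      IntegrableOn f (Ioi (-1)) νE ∧
      Tendsto (fun N : ℕ => (N : ℝ) * ∫ ω, f (EN N ω) ∂P) atTop
        (𝓝 (∫ w in Ioi (-1 : ℝ), f w ∂νE)) := by
  intro f hfc hfbdd hfo
  obtain ⟨M, hfM⟩ := hfbdd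
  obtain ⟨MH, hMH⟩ := hEbdd
  obtain ⟨δE, hδEpos, hEid'⟩ := hEid
  have hmem0 : (0:ℝ) ∈ Ioi (-1:ℝ) := by norm_num
  have hM0 : 0 ≤ M := (abs_nonneg (f 0)).trans (hfM 0 hmem0)
  -- f 0 = 0
  have hca : ContinuousAt f 0 := hfc.continuousAt (isOpen_Ioi.mem_nhds hmem0)
  have ht2 : Tendsto f (𝓝[≠] (0:ℝ)) (𝓝 0) :=
    hfo.isBigO.trans_tendsto
      (((continuous_pow 2).tendsto' 0 0 (by norm_num)).mono_left nhdsWithin_le_nhds)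
  have hf0 : f 0 = 0 :=
    tendsto_nhds_unique (hca.tendsto.mono_left nhdsWithin_le_nhds) ht2
  -- epsilon-delta form of the little-o
  have hsmall : ∀ ε : ℝ, 0 < ε → ∃ δ > (0:ℝ), ∀ w : ℝ, |w| < δ → |f w| ≤ ε * w ^ 2 := by
    intro ε hε
    have h := hfo.def hε
    rw [eventually_nhdsWithin_iff, Metric.eventually_nhds_iff] at h
    obtain ⟨δ, hδ, hδ'⟩ := h
    refine ⟨δ, hδ, fun w hw => ?_⟩
    rcases eq_or_ne w 0 with rfl | hw0
    · simp [hf0]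
    · have := hδ' (by simpa [Real.dist_eq] using hw) (by simpa using hw0)
      simpa [Real.norm_eq_abs, abs_of_nonneg (sq_nonneg w)] using this
  -- integrability of f
  obtain ⟨δ1, hδ1, hδ1f⟩ := hsmall 1 one_pos
  have hfInt : IntegrableOn f (Ioi (-1)) νE :=
    integrableOn_of_min_bound hνEint hfc
      (abs_le_const_mul_min hδ1 zero_le_one hM0 hδ1f hfM)
  -- integrability of hE^2
  have hH2cont : ContinuousOn (fun w => hE w ^ 2) (Ioi (-1:ℝ)) := hEcont.pow 2
  have hH2M : ∀ w ∈ Ioi (-1:ℝ), |hE w ^ 2| ≤ MH ^ 2 := fun w hw => by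
    rw [abs_pow]; exact pow_le_pow_left₀ (abs_nonneg _) (hMH w hw) 2
  have hH2sm : ∀ w : ℝ, |w| < δE → |hE w ^ 2| ≤ 1 * w ^ 2 := fun w hw => by
    rw [hEid' w hw, one_mul, abs_of_nonneg (sq_nonneg w)]
  have hKInt : IntegrableOn (fun w => hE w ^ 2) (Ioi (-1)) νE :=
    integrableOn_of_min_bound hνEint hH2cont
      (abs_le_const_mul_min hδEpos zero_le_one (sq_nonneg MH) hH2sm hH2M)
  set K := ∫ w in Ioi (-1:ℝ), hE w ^ 2 ∂νE with hKdef
  have hK0 : 0 ≤ K := setIntegral_nonneg measurableSet_Ioi fun w _ => sq_nonneg _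
  refine ⟨hfInt, ?_⟩
  set L := ∫ w in Ioi (-1:ℝ), f w ∂νE with hLdef
  rw [Metric.tendsto_nhds]
  intro ε hε
  have hden : (0:ℝ) < σE ^ 2 + 2 * K + 3 := by positivity
  set ε' := ε / (σE ^ 2 + 2 * K + 3) with hε'def
  have hε'pos : 0 < ε' := div_pos hε hden
  obtain ⟨δ0, hδ0, hδ0f⟩ := hsmall ε' hε'pos
  set δ := min δ0 δE with hδdef
  have hδpos : 0 < δ := lt_min hδ0 hδEpos
  set F := fun w => f w * phiCut δ w with hF
  set Hφ := fun w => hE w ^ 2 * phiCut δ w with hHφ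
  -- key pointwise inequality
  have key : ∀ w ∈ Ioi (-1:ℝ), |f w - F w| ≤ ε' * (hE w ^ 2 - Hφ w) := by
    intro w hw
    simp only [hF, hHφ]
    rcases lt_or_ge |w| δ with h | h
    · have hid : hE w = w := hEid' w (h.trans_le (min_le_right _ _))
      have hfb : |f w| ≤ ε' * w ^ 2 := hδ0f w (h.trans_le (min_le_left _ _))
      have hφ0 : 0 ≤ phiCut δ w := phiCut_nonneg δ w
      have hφ1 : phiCut δ w ≤ 1 := phiCut_le_one δ w
      have h1φ : |1 - phiCut δ w| = 1 - phiCut δ w := abs_of_nonneg (by linarith)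
      have habs : |f w - f w * phiCut δ w| = |f w| * (1 - phiCut δ w) := by
        rw [show f w - f w * phiCut δ w = f w * (1 - phiCut δ w) from by ring,
          abs_mul, h1φ]
      rw [habs, hid]
      calc |f w| * (1 - phiCut δ w) ≤ (ε' * w ^ 2) * (1 - phiCut δ w) :=
            mul_le_mul_of_nonneg_right hfb (by linarith)
        _ = ε' * (w ^ 2 - w ^ 2 * phiCut δ w) := by ring
    · have h1 : phiCut δ w = 1 := phiCut_eq_one hδpos h
      simp [h1]
  -- properties of F and Hφ
  have hFcont : ContinuousOn F (Ioi (-1:ℝ)) := hfc.mul (phiCut_continuous δ).continuousOn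
  have hFM : ∀ w ∈ Ioi (-1:ℝ), |F w| ≤ M := fun w hw => by
    simp only [hF]
    calc |f w * phiCut δ w| = |f w| * |phiCut δ w| := abs_mul _ _
      _ ≤ M * 1 := mul_le_mul (hfM w hw) (phiCut_abs_le_one δ w) (abs_nonneg _) hM0
      _ = M := mul_one M
  have hFvan : ∀ w : ℝ, |w| < δ / 2 → F w = 0 := fun w hw => by
    simp only [hF]; rw [phiCut_eq_zero hδpos hw.le, mul_zero]
  have hHφcont : ContinuousOn Hφ (Ioi (-1:ℝ)) := hH2cont.mul (phiCut_continuous δ).continuousOn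
  have hHφM : ∀ w ∈ Ioi (-1:ℝ), |Hφ w| ≤ MH ^ 2 := fun w hw => by
    simp only [hHφ]
    calc |hE w ^ 2 * phiCut δ w| = |hE w ^ 2| * |phiCut δ w| := abs_mul _ _
      _ ≤ MH ^ 2 * 1 := mul_le_mul (hH2M w hw) (phiCut_abs_le_one δ w) (abs_nonneg _) (sq_nonneg MH)
      _ = MH ^ 2 := mul_one _
  have hHφvan : ∀ w : ℝ, |w| < δ / 2 → Hφ w = 0 := fun w hw => by
    simp only [hHφ]; rw [phiCut_eq_zero hδpos hw.le, mul_zero]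
  -- hA3 applications
  have hFtend : Tendsto (fun N : ℕ => (N : ℝ) * ∫ ω, F (EN N ω) ∂P) atTop
      (𝓝 (∫ w in Ioi (-1 : ℝ), F w ∂νE)) :=
    hA3 F hFcont ⟨M, hFM⟩ ⟨δ / 2, by linarith, hFvan⟩
  have hHφtend : Tendsto (fun N : ℕ => (N : ℝ) * ∫ ω, Hφ (EN N ω) ∂P) atTop
      (𝓝 (∫ w in Ioi (-1 : ℝ), Hφ w ∂νE)) :=
    hA3 Hφ hHφcont ⟨MH ^ 2, hHφM⟩ ⟨δ / 2, by linarith, hHφvan⟩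
  set IF := ∫ w in Ioi (-1:ℝ), F w ∂νE with hIFdef
  set IHφ := ∫ w in Ioi (-1:ℝ), Hφ w ∂νE with hIHφdef
  have hIHφ0 : 0 ≤ IHφ :=
    setIntegral_nonneg measurableSet_Ioi fun w _ => by
      simp only [hHφ]; exact mul_nonneg (sq_nonneg _) (phiCut_nonneg _ _)
  -- νE-integrability of F and Hφ
  have hFν : IntegrableOn F (Ioi (-1)) νE := by
    refine hfInt.abs.mono' (hFcont.aestronglyMeasurable measurableSet_Ioi)
      (ae_of_all _ fun w => ?_)
    simp only [hF, Real.norm_eq_abs, abs_mul]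
    exact mul_le_of_le_one_right (abs_nonneg _) (phiCut_abs_le_one δ w)
  have hHφν : IntegrableOn Hφ (Ioi (-1)) νE := by
    refine hKInt.mono' (hHφcont.aestronglyMeasurable measurableSet_Ioi)
      (ae_of_all _ fun w => ?_)
    simp only [hHφ, Real.norm_eq_abs, abs_mul, abs_of_nonneg (sq_nonneg (hE w))]
    exact mul_le_of_le_one_right (sq_nonneg _) (phiCut_abs_le_one δ w)
  -- |IF - L| ≤ ε' * K
  have h4 : |IF - L| ≤ ε' * K := by
    calc |IF - L| = |∫ w in Ioi (-1:ℝ), (f w - F w) ∂νE| := by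
          rw [integral_sub hfInt hFν, abs_sub_comm]
      _ ≤ ∫ w in Ioi (-1:ℝ), |f w - F w| ∂νE := by
          simpa [Real.norm_eq_abs] using
            norm_integral_le_integral_norm (μ := νE.restrict (Ioi (-1))) (fun w => f w - F w)
      _ ≤ ∫ w in Ioi (-1:ℝ), ε' * (hE w ^ 2 - Hφ w) ∂νE := by
          have hi1 : IntegrableOn (fun w => |f w - F w|) (Ioi (-1:ℝ)) νE := (hfInt.sub hFν).abs
          have hi2 : IntegrableOn (fun w => ε' * (hE w ^ 2 - Hφ w)) (Ioi (-1:ℝ)) νE :=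
            (hKInt.sub hHφν).const_mul ε'
          exact setIntegral_mono_on hi1 hi2 measurableSet_Ioi key
      _ = ε' * (K - IHφ) := by rw [integral_const_mul, integral_sub hKInt hHφν]
      _ ≤ ε' * K := by nlinarith [hε'pos.le, hIHφ0]
  -- limit of the remainder control
  have hdD : Tendsto (fun N : ℕ => (N:ℝ) * ∫ ω, hE (EN N ω) ^ 2 ∂P
      - (N:ℝ) * ∫ ω, Hφ (EN N ω) ∂P) atTop (𝓝 (βE - IHφ)) := hA2.sub hHφtend
  have hDlt : βE - IHφ < σE ^ 2 + K + 1 := by rw [hβE]; linarith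
  have E2 : ∀ᶠ N : ℕ in atTop, (N:ℝ) * ∫ ω, hE (EN N ω) ^ 2 ∂P
      - (N:ℝ) * ∫ ω, Hφ (EN N ω) ∂P < σE ^ 2 + K + 1 := hdD.eventually_lt_const hDlt
  have E1 : ∀ᶠ N : ℕ in atTop, dist ((N:ℝ) * ∫ ω, F (EN N ω) ∂P) IF < ε' :=
    (Metric.tendsto_nhds.mp hFtend) ε' hε'pos
  filter_upwards [E1, E2] with N h1 h2
  -- per-N integrabilities
  have hint_f : Integrable (fun ω => f (EN N ω)) P :=
    comp_integrable P (EN N) (hENmeas N) (hENval N) f hfc M hfM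
  have hint_F : Integrable (fun ω => F (EN N ω)) P :=
    comp_integrable P (EN N) (hENmeas N) (hENval N) F hFcont M hFM
  have hint_H2 : Integrable (fun ω => hE (EN N ω) ^ 2) P :=
    comp_integrable P (EN N) (hENmeas N) (hENval N) (fun w => hE w ^ 2) hH2cont (MH ^ 2) hH2M
  have hint_Hφ : Integrable (fun ω => Hφ (EN N ω)) P :=
    comp_integrable P (EN N) (hENmeas N) (hENval N) Hφ hHφcont (MH ^ 2) hHφM
  have hN0 : (0:ℝ) ≤ (N:ℝ) := Nat.cast_nonneg N
  have hb : |∫ ω, (f (EN N ω) - F (EN N ω)) ∂P|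
      ≤ ε' * ((∫ ω, hE (EN N ω) ^ 2 ∂P) - ∫ ω, Hφ (EN N ω) ∂P) := by
    calc |∫ ω, (f (EN N ω) - F (EN N ω)) ∂P|
        ≤ ∫ ω, |f (EN N ω) - F (EN N ω)| ∂P := by
          simpa [Real.norm_eq_abs] using
            norm_integral_le_integral_norm (μ := P) (fun ω => f (EN N ω) - F (EN N ω))
      _ ≤ ∫ ω, ε' * (hE (EN N ω) ^ 2 - Hφ (EN N ω)) ∂P :=
          integral_mono (hint_f.sub hint_F).abs ((hint_H2.sub hint_Hφ).const_mul ε')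
            (fun ω => key _ (hENval N ω))
      _ = ε' * ((∫ ω, hE (EN N ω) ^ 2 ∂P) - ∫ ω, Hφ (EN N ω) ∂P) := by
          rw [integral_const_mul, integral_sub hint_H2 hint_Hφ]
  have h3 : |(N:ℝ) * ∫ ω, (f (EN N ω) - F (EN N ω)) ∂P| ≤ ε' * (σE ^ 2 + K + 1) := by
    calc |(N:ℝ) * ∫ ω, (f (EN N ω) - F (EN N ω)) ∂P|
        = (N:ℝ) * |∫ ω, (f (EN N ω) - F (EN N ω)) ∂P| := by rw [abs_mul, abs_of_nonneg hN0]
      _ ≤ (N:ℝ) * (ε' * ((∫ ω, hE (EN N ω) ^ 2 ∂P) - ∫ ω, Hφ (EN N ω) ∂P)) :=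
          mul_le_mul_of_nonneg_left hb hN0
      _ = ε' * ((N:ℝ) * (∫ ω, hE (EN N ω) ^ 2 ∂P) - (N:ℝ) * ∫ ω, Hφ (EN N ω) ∂P) := by ring
      _ ≤ ε' * (σE ^ 2 + K + 1) := mul_le_mul_of_nonneg_left h2.le hε'pos.le
  have hdec : (N:ℝ) * ∫ ω, f (EN N ω) ∂P
      = (N:ℝ) * ∫ ω, F (EN N ω) ∂P + (N:ℝ) * ∫ ω, (f (EN N ω) - F (EN N ω)) ∂P := by
    rw [integral_sub hint_f hint_F]; ring
  rw [Real.dist_eq] at h1 ⊢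
  rw [hdec]
  have hre : (N:ℝ) * (∫ ω, F (EN N ω) ∂P) + (N:ℝ) * (∫ ω, (f (EN N ω) - F (EN N ω)) ∂P) - L
      = ((N:ℝ) * (∫ ω, F (EN N ω) ∂P) - IF)
        + ((N:ℝ) * ∫ ω, (f (EN N ω) - F (EN N ω)) ∂P) + (IF - L) := by ring
  rw [hre]
  have htri := abs_add_three ((N:ℝ) * (∫ ω, F (EN N ω) ∂P) - IF)
    ((N:ℝ) * ∫ ω, (f (EN N ω) - F (EN N ω)) ∂P) (IF - L)
  have hfin : ε' * (σE ^ 2 + 2 * K + 3) = ε := div_mul_cancel₀ ε hden.ne'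
  nlinarith [htri, h1, h3, h4, hε'pos]
end

section
/- For every real k ≥ 0 there exists a constant C > 0 such that for all integers N ≥ 1 and all p, z ∈ [0,1]: | log( e^{−k(1−z)/N} p + e^{kz/N}(1−p) ) − (k/N)(z − p) − (k²/(2N²)) p(1−p) | ≤ C / N³. -/
open Set

private lemma quad_le_exp {x : ℝ} (hx : 0 ≤ x) : 1 + x + x^2/2 ≤ Real.exp x := by
  have h := Real.sum_le_exp_of_nonneg hx 3
  norm_num [Finset.sum_range_succ] at h
  linarith

private lemma exp_neg_le {x : ℝ} (hx : 0 ≤ x) : Real.exp (-x) ≤ 1 - x + x^2/2 := by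
  have h1 := quad_le_exp hx
  have h2 : Real.exp (-x) * Real.exp x = 1 := by rw [← Real.exp_add]; simp
  have h3 : (0:ℝ) < Real.exp (-x) := Real.exp_pos _
  nlinarith [sq_nonneg (x*x), mul_le_mul_of_nonneg_left h1 h3.le]

private lemma expNeg_hasDeriv (t : ℝ) :
    HasDerivAt (fun s : ℝ => Real.exp (-s)) (-Real.exp (-t)) t := by
  simpa [Function.comp_def] using (Real.hasDerivAt_exp (-t)).comp t ((hasDerivAt_id t).neg)

private lemma le_exp_neg {x : ℝ} (hx : 0 ≤ x) : 1 - x + x^2/2 - x^3/6 ≤ Real.exp (-x) := by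
  set f : ℝ → ℝ := fun t => Real.exp (-t) + (t - t^2/2 + t^3/6) with hf
  have hder : ∀ t : ℝ, HasDerivAt f (-Real.exp (-t) + (1 - t + t^2/2)) t := by
    intro t
    have h1 := expNeg_hasDeriv t
    have h2 : HasDerivAt (fun s : ℝ => s - s^2/2 + s^3/6) (1 - t + t^2/2) t := by
      have h := ((hasDerivAt_id t).sub ((hasDerivAt_pow 2 t).div_const 2)).add
        ((hasDerivAt_pow 3 t).div_const 6)
      refine h.congr_deriv ?_
      ring
    exact h1.add h2
  have hmono : MonotoneOn f (Ici (0:ℝ)) := by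
    apply monotoneOn_of_deriv_nonneg (convex_Ici 0)
    · exact Continuous.continuousOn (by fun_prop)
    · intro t _
      exact (hder t).differentiableAt.differentiableWithinAt
    · intro t ht
      rw [(hder t).deriv]
      have ht' : 0 ≤ t := le_of_lt (by simpa using ht)
      nlinarith [exp_neg_le ht']
  have h := hmono (mem_Ici.2 le_rfl) (mem_Ici.2 hx) hx
  simp only [hf] at h
  norm_num at h
  nlinarith [h]

set_option maxHeartbeats 1600000 in
/-- Taylor expansion used in the Wright–Fisher computation: uniformly in
`p, z ∈ [0,1]`, `log(e^{-k(1-z)/N} p + e^{kz/N}(1-p)) = (k/N)(z-p) + (k²/2N²)p(1-p) + O(1/N³)`. -/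
theorem stmt7 (k : ℝ) (hk : 0 ≤ k) :
    ∃ C > (0 : ℝ), ∀ N : ℕ, 1 ≤ N → ∀ p ∈ Icc (0 : ℝ) 1, ∀ z ∈ Icc (0 : ℝ) 1,
      |Real.log (Real.exp (-k * (1 - z) / N) * p + Real.exp (k * z / N) * (1 - p)) -
          (k / N) * (z - p) - k ^ 2 / (2 * (N : ℝ) ^ 2) * (p * (1 - p))| ≤
        C / (N : ℝ) ^ 3 := by
  refine ⟨k^3 * (Real.exp k + 1) + 1, by positivity, ?_⟩
  intro N hN p hp z hz
  obtain ⟨hp0, hp1⟩ := hp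
  obtain ⟨hz0, hz1⟩ := hz
  have hN0 : (0:ℝ) < N := by exact_mod_cast Nat.pos_of_ne_zero (by omega)
  obtain ⟨x, hxdef⟩ : ∃ x : ℝ, x = k / N := ⟨_, rfl⟩
  have hx0 : 0 ≤ x := by rw [hxdef]; positivity
  have hxk : x ≤ k := by
    rw [hxdef]
    apply div_le_self hk
    exact_mod_cast hN
  have he1 : Real.exp (-x) ≤ 1 := Real.exp_le_one_iff.2 (by linarith)
  have hepos : 0 < Real.exp (-x) := Real.exp_pos _
  obtain ⟨w, hwdef⟩ : ∃ w : ℝ, w = p * (1 - Real.exp (-x)) := ⟨_, rfl⟩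
  have hw0 : 0 ≤ w := by rw [hwdef]; nlinarith
  have hA : Real.exp (-x) ≤ 1 - w := by rw [hwdef]; nlinarith
  have hApos : 0 < 1 - w := lt_of_lt_of_le hepos hA
  have hw1 : w < 1 := by linarith
  -- rewrite the log
  have hsplit : Real.exp (-k * (1 - z) / N) * p + Real.exp (k * z / N) * (1 - p)
      = Real.exp (x * z) * (1 - w) := by
    rw [hwdef, hxdef, show -k * (1 - z) / (N:ℝ) = k/N * z + (-(k/N)) by ring,
      show k * z / (N:ℝ) = k/N * z by ring, Real.exp_add]
    ring
  have hlog : Real.log (Real.exp (-k * (1 - z) / N) * p + Real.exp (k * z / N) * (1 - p))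
      = x * z + Real.log (1 - w) := by
    rw [hsplit, Real.log_mul (Real.exp_ne_zero _) (ne_of_gt hApos), Real.log_exp]
  -- log Taylor estimate
  have habs : |w| < 1 := by rwa [abs_of_nonneg hw0]
  have hlogest := Real.abs_log_sub_add_sum_range_le habs 2
  rw [abs_of_nonneg hw0] at hlogest
  have hsum : (∑ i ∈ Finset.range 2, w ^ (i+1) / (i+1)) = w + w^2/2 := by
    norm_num [Finset.sum_range_succ]
  rw [hsum] at hlogest
  have hwx : w ≤ x := by rw [hwdef]; nlinarith [Real.add_one_le_exp (-x)]
  have hek : Real.exp (-k) ≤ 1 - w := le_trans (Real.exp_le_exp.2 (by linarith)) hA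
  have hlog3 : |w + w^2/2 + Real.log (1 - w)| ≤ x^3 * Real.exp k := by
    refine le_trans hlogest ?_
    have hkey : w^3 ≤ x^3 * Real.exp k * (1 - w) := by
      have h1 : w^3 * 1 ≤ w^3 * (Real.exp k * (1 - w)) := by
        apply mul_le_mul_of_nonneg_left _ (by positivity)
        have := mul_le_mul_of_nonneg_left hek (Real.exp_pos k).le
        rw [← Real.exp_add] at this
        simpa using this
      have h2 : w^3 * (Real.exp k * (1-w)) ≤ x^3 * (Real.exp k * (1-w)) := by
        apply mul_le_mul_of_nonneg_right _ (by positivity)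
        exact pow_le_pow_left₀ hw0 hwx 3
      calc w^3 = w^3 * 1 := by ring
        _ ≤ w^3 * (Real.exp k * (1-w)) := h1
        _ ≤ x^3 * (Real.exp k * (1-w)) := h2
        _ = x^3 * Real.exp k * (1-w) := by ring
    rw [div_le_iff₀ hApos]
    exact hkey
  -- polynomial estimate
  obtain ⟨s, hsdef⟩ : ∃ s : ℝ, s = x - 1 + Real.exp (-x) := ⟨_, rfl⟩
  have hs0 : 0 ≤ s := by rw [hsdef]; nlinarith [Real.add_one_le_exp (-x)]
  have hsx : s ≤ x := by rw [hsdef]; linarith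
  have hsq : s ≤ x^2/2 := by have := exp_neg_le hx0; rw [hsdef]; linarith
  have hr1 : x^2/2 - s ≤ x^3/6 := by have := le_exp_neg hx0; rw [hsdef]; linarith
  have hweq : w = p * (x - s) := by rw [hwdef, hsdef]; ring
  have hP : |x*p - w - w^2/2 - x^2/2 * (p*(1-p))| ≤ x^3 * 1 := by
    have hPeq : x*p - w - w^2/2 - x^2/2 * (p*(1-p))
        = p * (s - x^2/2) + p^2 * (s * (2*x - s)) / 2 := by
      rw [hweq]; ring
    have hT0 : 0 ≤ s * (2*x - s) := mul_nonneg hs0 (by linarith)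
    have hT : s * (2*x - s) ≤ x^3 := by
      nlinarith [sq_nonneg s, mul_le_mul_of_nonneg_right hsq (by linarith : (0:ℝ) ≤ 2*x)]
    have hp2 : p^2 ≤ 1 := by nlinarith
    have hup2 : p^2 * (s * (2*x - s)) ≤ x^3 := by
      calc p^2 * (s * (2*x - s)) ≤ 1 * (s * (2*x - s)) :=
            mul_le_mul_of_nonneg_right hp2 hT0
        _ = s * (2*x - s) := one_mul _
        _ ≤ x^3 := hT
    have hlo2 : 0 ≤ p^2 * (s * (2*x - s)) := mul_nonneg (sq_nonneg p) hT0
    have hfac : s - x^2/2 ≤ 0 := by linarith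
    have hlo1 : -(x^3/6) ≤ p * (s - x^2/2) := by
      have h1 : (1 - p) * (s - x^2/2) ≤ 0 :=
        mul_nonpos_of_nonneg_of_nonpos (by linarith) hfac
      nlinarith
    have hup1 : p * (s - x^2/2) ≤ 0 := mul_nonpos_of_nonneg_of_nonpos hp0 hfac
    rw [hPeq, abs_le]
    constructor
    · linarith
    · linarith
  -- combine
  have hx2 : k ^ 2 / (2 * (N : ℝ) ^ 2) = x^2/2 := by
    rw [hxdef, div_pow]; ring
  have hEeq : Real.log (Real.exp (-k * (1 - z) / N) * p + Real.exp (k * z / N) * (1 - p)) -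
      (k / N) * (z - p) - k ^ 2 / (2 * (N : ℝ) ^ 2) * (p * (1 - p))
      = (w + w^2/2 + Real.log (1-w)) + (x*p - w - w^2/2 - x^2/2 * (p*(1-p))) := by
    rw [hlog, hx2, ← hxdef]
    ring
  rw [hEeq]
  have htri := abs_add_le (w + w^2/2 + Real.log (1-w)) (x*p - w - w^2/2 - x^2/2 * (p*(1-p)))
  have hx3 : x^3 = k^3 / (N:ℝ)^3 := by rw [hxdef, div_pow]
  have hfin : x^3 * Real.exp k + x^3 * 1 ≤ (k^3 * (Real.exp k + 1) + 1) / (N:ℝ)^3 := by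
    rw [hx3]
    have heq : k^3/(N:ℝ)^3 * Real.exp k + k^3/(N:ℝ)^3 * 1
        = (k^3 * (Real.exp k + 1)) / (N:ℝ)^3 := by ring
    rw [heq]
    gcongr
    linarith
  calc |(w + w^2/2 + Real.log (1-w)) + (x*p - w - w^2/2 - x^2/2 * (p*(1-p)))|
      ≤ |w + w^2/2 + Real.log (1-w)| + |x*p - w - w^2/2 - x^2/2 * (p*(1-p))| := htri
    _ ≤ x^3 * Real.exp k + x^3 * 1 := add_le_add hlog3 hP
    _ ≤ (k^3 * (Real.exp k + 1) + 1) / (N:ℝ)^3 := hfin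
end

section
/- Assume Assumption A1. Then for every real ℓ ≥ 1, v_N · E[1 − e^{−ℓ E^N}] converges as N → ∞ to γ_ℓ^E = α_E ℓ − (1/2) σ_E² ℓ² + ∫_{(−1,∞)} (1 − e^{−ℓ w} − ℓ h_E(w)) dν_E(w). -/
open MeasureTheory Filter Set Topology

lemma aux_measQ {Ω : Type*} [MeasurableSpace Ω] {X : Ω → ℝ} (hX : Measurable X)
    (hXv : ∀ ω, -1 < X ω) {f : ℝ → ℝ} (hf : ContinuousOn f (Ioi (-1))) :
    Measurable fun ω => f (X ω) := by
  have h1 : Measurable fun ω => (⟨X ω, hXv ω⟩ : Ioi (-1 : ℝ)) := hX.subtype_mk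
  exact (continuousOn_iff_continuous_restrict.mp hf).measurable.comp h1

lemma aux_intP {Ω : Type*} [MeasurableSpace Ω] (P : Measure Ω) [IsProbabilityMeasure P]
    {f : Ω → ℝ} (hm : Measurable f) {M : ℝ} (hb : ∀ ω, |f ω| ≤ M) : Integrable f P := by
  refine (integrable_const M).mono' hm.aestronglyMeasurable (ae_of_all _ ?_)
  simpa [Real.norm_eq_abs] using hb

lemma aux_intNu {νE : Measure ℝ} (hνEint : IntegrableOn (fun w => min (w ^ 2) 1) (Ioi (-1)) νE)
    {f : ℝ → ℝ} (hf : ContinuousOn f (Ioi (-1))) {K : ℝ}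
    (hb : ∀ w ∈ Ioi (-1 : ℝ), |f w| ≤ K * min (w ^ 2) 1) :
    IntegrableOn f (Ioi (-1)) νE := by
  refine (hνEint.const_mul K).mono' (hf.aestronglyMeasurable measurableSet_Ioi) ?_
  rw [ae_restrict_iff' measurableSet_Ioi]
  exact ae_of_all _ fun w hw => by simpa [Real.norm_eq_abs] using hb w hw

lemma aux_absint {α : Type*} [MeasurableSpace α] (μ : Measure α) (f : α → ℝ) :
    |∫ a, f a ∂μ| ≤ ∫ a, |f a| ∂μ := by
  simpa [Real.norm_eq_abs] using norm_integral_le_integral_norm (μ := μ) f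

lemma aux_cubic {x : ℝ} (h : |x| ≤ 1) : |Real.exp x - (1 + x + x ^ 2 / 2)| ≤ |x| ^ 3 := by
  have := Real.exp_bound h (n := 3) (by norm_num)
  have h2 : (∑ m ∈ Finset.range 3, x ^ m / m.factorial) = 1 + x + x ^ 2 / 2 := by
    norm_num [Finset.sum_range_succ, Nat.factorial]
  rw [h2] at this
  calc |Real.exp x - (1 + x + x ^ 2 / 2)| ≤ |x| ^ 3 * (Nat.succ 3 / ((3).factorial * 3)) := this
    _ ≤ |x| ^ 3 * 1 := by
        apply mul_le_mul_of_nonneg_left (by norm_num [Nat.factorial]) (by positivity)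
    _ = |x| ^ 3 := by ring

lemma aux_dom {f : ℝ → ℝ} {B C r : ℝ} (hr0 : 0 < r) (hr1 : r ≤ 1)
    (hb : ∀ w ∈ Ioi (-1 : ℝ), |f w| ≤ B) (hsmall : ∀ w : ℝ, |w| < r → |f w| ≤ C * w ^ 2) :
    ∀ w ∈ Ioi (-1 : ℝ), |f w| ≤ max C (B / r ^ 2) * min (w ^ 2) 1 := by
  intro w hw
  rcases lt_or_ge (|w|) r with h | h
  · have hw2 : w ^ 2 ≤ 1 := by
      have : |w| ^ 2 ≤ 1 ^ 2 := pow_le_pow_left₀ (abs_nonneg w) (le_trans h.le hr1) 2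
      simpa [sq_abs] using this
    rw [min_eq_left hw2]
    exact le_trans (hsmall w h) (mul_le_mul_of_nonneg_right (le_max_left _ _) (sq_nonneg w))
  · have hB0 : 0 ≤ B := le_trans (abs_nonneg _) (hb 0 (by norm_num))
    have hr2 : r ^ 2 ≤ min (w ^ 2) 1 := by
      refine le_min ?_ (by nlinarith)
      have : r ^ 2 ≤ |w| ^ 2 := pow_le_pow_left₀ hr0.le h 2
      simpa [sq_abs] using this
    calc |f w| ≤ B := hb w hw
      _ = B / r ^ 2 * r ^ 2 := by field_simp
      _ ≤ B / r ^ 2 * min (w ^ 2) 1 := by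
          exact mul_le_mul_of_nonneg_left hr2 (by positivity)
      _ ≤ max C (B / r ^ 2) * min (w ^ 2) 1 := by
          exact mul_le_mul_of_nonneg_right (le_max_right _ _)
            (le_min (sq_nonneg w) zero_le_one)

set_option maxHeartbeats 1000000 in
/-- Under Assumption A1, `v_N · E[1 - e^{-ℓ Eᴺ}] → γ_ℓ^E` for every `ℓ ≥ 1`. -/
theorem stmt9 {Ω : Type*} [MeasurableSpace Ω] (P : Measure Ω) [IsProbabilityMeasure P]
    (EN : ℕ → Ω → ℝ) (hENmeas : ∀ N, Measurable (EN N))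
    (hENval : ∀ N ω, -1 < EN N ω)
    (v : ℕ → ℝ) (hvpos : ∀ N, 0 < v N) (hvtop : Tendsto v atTop atTop)
    -- truncation function h_E on (-1, ∞)
    (hE : ℝ → ℝ) (hEcont : ContinuousOn hE (Ioi (-1)))
    (hEbdd : ∃ M : ℝ, ∀ w ∈ Ioi (-1 : ℝ), |hE w| ≤ M)
    (hEid : ∃ δ > (0 : ℝ), ∀ w : ℝ, |w| < δ → hE w = w)
    (hEne : ∀ w ∈ Ioi (-1 : ℝ), w ≠ 0 → hE w ≠ 0)
    -- Assumption A1
    (αE σE : ℝ) (hσE : 0 ≤ σE)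
    (νE : Measure ℝ) (hνE0 : νE (Iic (-1)) = 0)
    (hνEint : IntegrableOn (fun w => min (w ^ 2) 1) (Ioi (-1)) νE)
    (βE : ℝ) (hβE : βE = σE ^ 2 + ∫ w in Ioi (-1 : ℝ), hE w ^ 2 ∂νE)
    (hA1 : Tendsto (fun N : ℕ => v N * ∫ ω, hE (EN N ω) ∂P) atTop (𝓝 αE))
    (hA2 : Tendsto (fun N : ℕ => v N * ∫ ω, hE (EN N ω) ^ 2 ∂P) atTop (𝓝 βE))
    (hA3 : ∀ f : ℝ → ℝ, ContinuousOn f (Ioi (-1)) →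
      (∃ M : ℝ, ∀ w ∈ Ioi (-1 : ℝ), |f w| ≤ M) →
      (∃ δ > (0 : ℝ), ∀ w : ℝ, |w| < δ → f w = 0) →
      Tendsto (fun N : ℕ => v N * ∫ ω, f (EN N ω) ∂P) atTop
        (𝓝 (∫ w in Ioi (-1 : ℝ), f w ∂νE))) :
    ∀ ℓ : ℝ, 1 ≤ ℓ →
      Tendsto (fun N : ℕ => v N * ∫ ω, (1 - Real.exp (-ℓ * EN N ω)) ∂P) atTop
        (𝓝 (αE * ℓ - 1 / 2 * σE ^ 2 * ℓ ^ 2 +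
          ∫ w in Ioi (-1 : ℝ), (1 - Real.exp (-ℓ * w) - ℓ * hE w) ∂νE)) := by
  intro ℓ hℓ
  have hℓ0 : 0 < ℓ := lt_of_lt_of_le one_pos hℓ
  obtain ⟨M, hM⟩ := hEbdd
  obtain ⟨δ₀, hδ₀pos, hδ₀⟩ := hEid
  have hM0 : 0 ≤ M := le_trans (abs_nonneg _) (hM 0 (by norm_num))
  set δ : ℝ := min δ₀ 1 with hδdef
  have hδpos : 0 < δ := lt_min hδ₀pos one_pos
  have hδ1 : δ ≤ 1 := min_le_right _ _
  have hδid : ∀ w : ℝ, |w| < δ → hE w = w := fun w hw => hδ₀ w (hw.trans_le (min_le_left _ _))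
  -- the function g
  set g : ℝ → ℝ := fun w => 1 - Real.exp (-ℓ * w) - ℓ * hE w + ℓ ^ 2 / 2 * hE w ^ 2 with hgdef
  have gcont : ContinuousOn g (Ioi (-1)) := by
    apply ContinuousOn.add
    · exact (continuousOn_const.sub
        ((Real.continuous_exp.comp (continuous_const.mul continuous_id)).continuousOn)).sub
        (continuousOn_const.mul hEcont)
    · exact continuousOn_const.mul (hEcont.pow 2)
  set B : ℝ := 1 + Real.exp ℓ + ℓ * M + ℓ ^ 2 / 2 * M ^ 2 with hBdef
  have gbound : ∀ w ∈ Ioi (-1 : ℝ), |g w| ≤ B := by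
    intro w hw
    have h1 : Real.exp (-ℓ * w) ≤ Real.exp ℓ := by
      apply Real.exp_le_exp.mpr
      have : (-1 : ℝ) < w := hw
      nlinarith
    have h2 : 0 < Real.exp (-ℓ * w) := Real.exp_pos _
    have h3 : |1 - Real.exp (-ℓ * w)| ≤ 1 + Real.exp ℓ := by
      rw [abs_le]; constructor <;> nlinarith [Real.exp_pos ℓ]
    have h4 : |ℓ * hE w| ≤ ℓ * M := by
      rw [abs_mul, abs_of_pos hℓ0]
      exact mul_le_mul_of_nonneg_left (hM w hw) hℓ0.le
    have h5 : |ℓ ^ 2 / 2 * hE w ^ 2| ≤ ℓ ^ 2 / 2 * M ^ 2 := by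
      rw [abs_mul, abs_of_pos (by positivity : (0:ℝ) < ℓ ^ 2 / 2), abs_pow]
      have := pow_le_pow_left₀ (abs_nonneg (hE w)) (hM w hw) 2
      simpa [sq_abs] using mul_le_mul_of_nonneg_left this (by positivity : (0:ℝ) ≤ ℓ ^ 2 / 2)
    calc |g w| ≤ |1 - Real.exp (-ℓ * w) - ℓ * hE w| + |ℓ ^ 2 / 2 * hE w ^ 2| := abs_add_le _ _
      _ ≤ (|1 - Real.exp (-ℓ * w)| + |ℓ * hE w|) + |ℓ ^ 2 / 2 * hE w ^ 2| := by
          exact add_le_add_left (abs_sub _ _) _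
      _ ≤ B := by rw [hBdef]; linarith
  have gsmall : ∀ w : ℝ, |w| < δ → ℓ * |w| ≤ 1 → |g w| ≤ ℓ ^ 3 * |w| * w ^ 2 := by
    intro w hw hlw
    have hid := hδid w hw
    have hx : |(-ℓ * w)| ≤ 1 := by
      rw [abs_mul, abs_neg, abs_of_pos hℓ0]; exact hlw
    have hc := aux_cubic hx
    have heq : g w = -(Real.exp (-ℓ * w) - (1 + (-ℓ * w) + (-ℓ * w) ^ 2 / 2)) := by
      rw [hgdef]; simp only; rw [hid]; ring
    rw [heq, abs_neg]
    calc |Real.exp (-ℓ * w) - (1 + (-ℓ * w) + (-ℓ * w) ^ 2 / 2)| ≤ |(-ℓ * w)| ^ 3 := hc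
      _ = ℓ ^ 3 * |w| * w ^ 2 := by
          rw [abs_mul, abs_neg, abs_of_pos hℓ0, mul_pow]
          rw [show |w| ^ 3 = |w| * w ^ 2 by rw [pow_succ, sq_abs]; ring]
          ring
  -- small-ball quadratic bound for g
  set r : ℝ := min δ (1 / ℓ) with hrdef
  have hrpos : 0 < r := lt_min hδpos (by positivity)
  have hr1 : r ≤ 1 := le_trans (min_le_left _ _) hδ1
  have hlw_of_lt_r : ∀ w : ℝ, |w| < r → ℓ * |w| ≤ 1 := by
    intro w hw
    have h1 : |w| ≤ 1 / ℓ := le_of_lt (hw.trans_le (min_le_right _ _))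
    calc ℓ * |w| ≤ ℓ * (1 / ℓ) := mul_le_mul_of_nonneg_left h1 hℓ0.le
      _ = 1 := by field_simp
  have gsmall' : ∀ w : ℝ, |w| < r → |g w| ≤ ℓ ^ 2 * w ^ 2 := by
    intro w hw
    have h1 : |w| < δ := hw.trans_le (min_le_left _ _)
    have h2 := hlw_of_lt_r w hw
    have h3 := gsmall w h1 h2
    have h4 : ℓ ^ 3 * |w| * w ^ 2 ≤ ℓ ^ 2 * w ^ 2 := by
      nlinarith [sq_nonneg w, mul_le_mul_of_nonneg_left
        (mul_le_mul_of_nonneg_right h2 (sq_nonneg w)) (sq_nonneg ℓ)]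
    exact h3.trans h4
  have gnuInt : IntegrableOn g (Ioi (-1)) νE :=
    aux_intNu hνEint gcont (aux_dom hrpos hr1 gbound gsmall')
  have gK := aux_dom hrpos hr1 gbound gsmall'
  -- integrability of hE^2 wrt ν
  have h2small : ∀ w : ℝ, |w| < δ → |hE w ^ 2| ≤ 1 * w ^ 2 := by
    intro w hw; rw [hδid w hw, one_mul, abs_of_nonneg (sq_nonneg w)]
  have h2bound : ∀ w ∈ Ioi (-1 : ℝ), |hE w ^ 2| ≤ M ^ 2 := by
    intro w hw
    rw [abs_pow]
    exact pow_le_pow_left₀ (abs_nonneg _) (hM w hw) 2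
  have h2nuInt : IntegrableOn (fun w => hE w ^ 2) (Ioi (-1)) νE :=
    aux_intNu hνEint (hEcont.pow 2) (aux_dom hδpos hδ1 h2bound h2small)
  set I : ℝ := ∫ w in Ioi (-1 : ℝ), hE w ^ 2 ∂νE with hIdef
  have hI0 : 0 ≤ I := integral_nonneg fun w => sq_nonneg _
  -- Ω-side integrability
  have hB0 : 0 ≤ B := le_trans (abs_nonneg _) (gbound 0 (by norm_num))
  have measH : ∀ N, Measurable fun ω => hE (EN N ω) :=
    fun N => aux_measQ (hENmeas N) (hENval N) hEcont
  have intH : ∀ N, Integrable (fun ω => hE (EN N ω)) P :=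
    fun N => aux_intP P (measH N) fun ω => hM _ (hENval N ω)
  have measH2 : ∀ N, Measurable fun ω => hE (EN N ω) ^ 2 :=
    fun N => aux_measQ (hENmeas N) (hENval N) (hEcont.pow 2)
  have intH2 : ∀ N, Integrable (fun ω => hE (EN N ω) ^ 2) P :=
    fun N => aux_intP P (measH2 N) fun ω => h2bound _ (hENval N ω)
  have measG : ∀ N, Measurable fun ω => g (EN N ω) :=
    fun N => aux_measQ (hENmeas N) (hENval N) gcont
  have intG : ∀ N, Integrable (fun ω => g (EN N ω)) P :=
    fun N => aux_intP P (measG N) fun ω => gbound _ (hENval N ω)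
  -- the key limit
  have keyG : Tendsto (fun N => v N * ∫ ω, g (EN N ω) ∂P) atTop
      (𝓝 (∫ w in Ioi (-1 : ℝ), g w ∂νE)) := by
    rw [Metric.tendsto_atTop]
    intro η hη
    set D : ℝ := ℓ ^ 3 * (|βE| + 1 + I) + 1 with hDdef
    have hD0 : 0 < D := by positivity
    set ε : ℝ := min (r / 2) (η / (4 * D)) with hεdef
    have hεpos : 0 < ε := lt_min (by positivity) (by positivity)
    have hεr : 2 * ε ≤ r := by
      have := min_le_left (r / 2) (η / (4 * D)); linarith
    have hεη : ε * (4 * D) ≤ η := by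
      have h1 : ε ≤ η / (4 * D) := min_le_right _ _
      exact (le_div_iff₀ (by positivity)).mp h1
    -- cutoff
    set χ : ℝ → ℝ := fun w => min 1 (max (|w| / ε - 1) 0) with hχdef
    have χcont : Continuous χ :=
      continuous_const.min (((continuous_abs.div_const ε).sub continuous_const).max
        continuous_const)
    have χ0 : ∀ w : ℝ, |w| ≤ ε → χ w = 0 := by
      intro w hw
      have h1 : |w| / ε - 1 ≤ 0 := by rw [sub_nonpos, div_le_one hεpos]; exact hw
      simp only [hχdef]
      rw [max_eq_right h1, min_eq_right zero_le_one]
    have χ1 : ∀ w : ℝ, 2 * ε ≤ |w| → χ w = 1 := by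
      intro w hw
      have h2 : (2 : ℝ) ≤ |w| / ε := by rw [le_div_iff₀ hεpos]; linarith
      have h1 : (1 : ℝ) ≤ |w| / ε - 1 := by linarith
      simp only [hχdef]
      rw [min_eq_left (le_trans h1 (le_max_left _ _))]
    have χmem : ∀ w : ℝ, 0 ≤ χ w ∧ χ w ≤ 1 :=
      fun w => ⟨le_min zero_le_one (le_max_right _ _), min_le_left _ _⟩
    -- key pointwise bound
    have hkey : ∀ w ∈ Ioi (-1 : ℝ), |g w * (1 - χ w)| ≤ 2 * ℓ ^ 3 * ε * hE w ^ 2 := by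
      intro w hw
      rcases le_or_gt (2 * ε) (|w|) with h | h
      · rw [χ1 w h]; simp only [sub_self, mul_zero, abs_zero]; positivity
      · have hwr : |w| < r := lt_of_lt_of_le h hεr
        have hwδ : |w| < δ := hwr.trans_le (min_le_left _ _)
        have hg := gsmall w hwδ (hlw_of_lt_r w hwr)
        have hid := hδid w hwδ
        have hχb : |1 - χ w| ≤ 1 := by
          obtain ⟨a, b⟩ := χmem w; rw [abs_le]; constructor <;> linarith
        rw [abs_mul]
        calc |g w| * |1 - χ w| ≤ ℓ ^ 3 * |w| * w ^ 2 * 1 :=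
              mul_le_mul hg hχb (abs_nonneg _) (by positivity)
          _ ≤ 2 * ℓ ^ 3 * ε * hE w ^ 2 := by
              rw [hid]
              nlinarith [mul_le_mul_of_nonneg_left
                (mul_le_mul_of_nonneg_right h.le (sq_nonneg w)) (pow_nonneg hℓ0.le 3)]
    -- hA3 applied to g·χ
    have hGχ := hA3 (fun w => g w * χ w) (gcont.mul χcont.continuousOn)
      ⟨B, fun w hw => by
        rw [abs_mul]
        calc |g w| * |χ w| ≤ B * 1 :=
              mul_le_mul (gbound w hw)
                (by rw [abs_of_nonneg (χmem w).1]; exact (χmem w).2) (abs_nonneg _) hB0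
          _ = B := mul_one B⟩
      ⟨ε, hεpos, fun w hw => by show g w * χ w = 0; rw [χ0 w hw.le, mul_zero]⟩
    set Jε : ℝ := ∫ w in Ioi (-1 : ℝ), g w * χ w ∂νE with hJdef
    have gχK : ∀ w ∈ Ioi (-1 : ℝ), |g w * χ w| ≤
        max (ℓ ^ 2) (B / r ^ 2) * min (w ^ 2) 1 := by
      intro w hw
      refine le_trans ?_ (gK w hw)
      rw [abs_mul]
      calc |g w| * |χ w| ≤ |g w| * 1 :=
            mul_le_mul_of_nonneg_left
              (by rw [abs_of_nonneg (χmem w).1]; exact (χmem w).2) (abs_nonneg _)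
        _ = |g w| := mul_one _
    have Igχν : IntegrableOn (fun w => g w * χ w) (Ioi (-1)) νE :=
      aux_intNu hνEint (gcont.mul χcont.continuousOn) gχK
    -- ν-side error
    have hν_err : |(∫ w in Ioi (-1 : ℝ), g w ∂νE) - Jε| ≤ 2 * ℓ ^ 3 * ε * I := by
      rw [hJdef, ← integral_sub gnuInt Igχν]
      calc |∫ w in Ioi (-1 : ℝ), (g w - g w * χ w) ∂νE|
          ≤ ∫ w in Ioi (-1 : ℝ), |g w - g w * χ w| ∂νE := aux_absint _ _
        _ ≤ ∫ w in Ioi (-1 : ℝ), 2 * ℓ ^ 3 * ε * hE w ^ 2 ∂νE := by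
            refine integral_mono_ae (gnuInt.sub Igχν).abs (h2nuInt.const_mul _) ?_
            rw [EventuallyLE, ae_restrict_iff' measurableSet_Ioi]
            refine ae_of_all _ fun w hw => ?_
            rw [show g w - g w * χ w = g w * (1 - χ w) by ring]
            exact hkey w hw
        _ = 2 * ℓ ^ 3 * ε * I := by rw [integral_const_mul]
    -- Ω-side error
    have hΩ_err : ∀ N, |v N * ∫ ω, g (EN N ω) ∂P -
        v N * ∫ ω, g (EN N ω) * χ (EN N ω) ∂P|
        ≤ 2 * ℓ ^ 3 * ε * (v N * ∫ ω, hE (EN N ω) ^ 2 ∂P) := by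
      intro N
      have intGχ : Integrable (fun ω => g (EN N ω) * χ (EN N ω)) P :=
        aux_intP P ((measG N).mul (χcont.measurable.comp (hENmeas N)))
          (fun ω => by
            rw [abs_mul]
            calc |g (EN N ω)| * |χ (EN N ω)| ≤ B * 1 :=
                  mul_le_mul (gbound _ (hENval N ω))
                    (by rw [abs_of_nonneg (χmem _).1]; exact (χmem _).2) (abs_nonneg _) hB0
              _ = B := mul_one B)
      rw [← mul_sub, abs_mul, abs_of_pos (hvpos N), ← integral_sub (intG N) intGχ]
      have h1 : |∫ ω, (g (EN N ω) - g (EN N ω) * χ (EN N ω)) ∂P|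
          ≤ ∫ ω, 2 * ℓ ^ 3 * ε * hE (EN N ω) ^ 2 ∂P := by
        calc |∫ ω, (g (EN N ω) - g (EN N ω) * χ (EN N ω)) ∂P|
            ≤ ∫ ω, |g (EN N ω) - g (EN N ω) * χ (EN N ω)| ∂P := aux_absint _ _
          _ ≤ _ := by
              refine integral_mono ((intG N).sub intGχ).abs ((intH2 N).const_mul _)
                fun ω => ?_
              simp only
              rw [show g (EN N ω) - g (EN N ω) * χ (EN N ω)
                  = g (EN N ω) * (1 - χ (EN N ω)) by ring]
              exact hkey _ (hENval N ω)
      calc v N * |∫ ω, (g (EN N ω) - g (EN N ω) * χ (EN N ω)) ∂P|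
          ≤ v N * ∫ ω, 2 * ℓ ^ 3 * ε * hE (EN N ω) ^ 2 ∂P :=
            mul_le_mul_of_nonneg_left h1 (hvpos N).le
        _ = 2 * ℓ ^ 3 * ε * (v N * ∫ ω, hE (EN N ω) ^ 2 ∂P) := by
            rw [integral_const_mul]; ring
    -- eventual bounds, conclude
    have ev1 : ∀ᶠ N in atTop, v N * ∫ ω, hE (EN N ω) ^ 2 ∂P ≤ |βE| + 1 :=
      hA2.eventually (eventually_le_nhds (lt_of_le_of_lt (le_abs_self βE) (by linarith)))
    obtain ⟨N₁, hN₁⟩ := (Metric.tendsto_atTop.mp hGχ) (η / 4) (by positivity)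
    obtain ⟨N₂, hN₂⟩ := eventually_atTop.mp ev1
    refine ⟨max N₁ N₂, fun n hn => ?_⟩
    have h1 := hN₁ n (le_trans (le_max_left _ _) hn)
    have h2 := hN₂ n (le_trans (le_max_right _ _) hn)
    rw [Real.dist_eq] at h1 ⊢
    have hTΩ : |v n * ∫ ω, g (EN n ω) ∂P - v n * ∫ ω, g (EN n ω) * χ (EN n ω) ∂P|
        ≤ 2 * ℓ ^ 3 * ε * (|βE| + 1) :=
      le_trans (hΩ_err n) (mul_le_mul_of_nonneg_left h2 (by positivity))
    have habc := abs_sub_le (v n * ∫ ω, g (EN n ω) ∂P)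
      (v n * ∫ ω, g (EN n ω) * χ (EN n ω) ∂P) (∫ w in Ioi (-1 : ℝ), g w ∂νE)
    have hbcd := abs_sub_le (v n * ∫ ω, g (EN n ω) * χ (EN n ω) ∂P) Jε
      (∫ w in Ioi (-1 : ℝ), g w ∂νE)
    have hcd : |Jε - ∫ w in Ioi (-1 : ℝ), g w ∂νE| ≤ 2 * ℓ ^ 3 * ε * I := by
      rw [abs_sub_comm]; exact hν_err
    have hsum : 2 * ℓ ^ 3 * ε * (|βE| + 1) + 2 * ℓ ^ 3 * ε * I = 2 * ε * (D - 1) := by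
      rw [hDdef]; ring
    nlinarith [hεpos, hD0, hεη]
  -- decompose the main sequence
  have hdecomp : ∀ N, (∫ ω, (1 - Real.exp (-ℓ * EN N ω)) ∂P)
      = ℓ * (∫ ω, hE (EN N ω) ∂P) - ℓ ^ 2 / 2 * (∫ ω, hE (EN N ω) ^ 2 ∂P)
        + ∫ ω, g (EN N ω) ∂P := by
    intro N
    calc ∫ ω, (1 - Real.exp (-ℓ * EN N ω)) ∂P
        = ∫ ω, ((ℓ * hE (EN N ω) - ℓ ^ 2 / 2 * hE (EN N ω) ^ 2) + g (EN N ω)) ∂P := by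
          congr 1; funext ω; simp only [hgdef]; ring
      _ = (∫ ω, (ℓ * hE (EN N ω) - ℓ ^ 2 / 2 * hE (EN N ω) ^ 2) ∂P)
            + ∫ ω, g (EN N ω) ∂P :=
          integral_add (((intH N).const_mul ℓ).sub ((intH2 N).const_mul (ℓ ^ 2 / 2))) (intG N)
      _ = ((∫ ω, ℓ * hE (EN N ω) ∂P) - ∫ ω, ℓ ^ 2 / 2 * hE (EN N ω) ^ 2 ∂P)
            + ∫ ω, g (EN N ω) ∂P := by
          rw [integral_sub ((intH N).const_mul ℓ) ((intH2 N).const_mul (ℓ ^ 2 / 2))]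
      _ = ℓ * (∫ ω, hE (EN N ω) ∂P) - ℓ ^ 2 / 2 * (∫ ω, hE (EN N ω) ^ 2 ∂P)
            + ∫ ω, g (EN N ω) ∂P := by
          rw [integral_const_mul, integral_const_mul]
  have heq : (fun N : ℕ => v N * ∫ ω, (1 - Real.exp (-ℓ * EN N ω)) ∂P)
      = fun N => ℓ * (v N * ∫ ω, hE (EN N ω) ∂P)
          - ℓ ^ 2 / 2 * (v N * ∫ ω, hE (EN N ω) ^ 2 ∂P)
          + v N * ∫ ω, g (EN N ω) ∂P := by
    funext N; rw [hdecomp N]; ring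
  rw [heq]
  have hlim := ((hA1.const_mul ℓ).sub (hA2.const_mul (ℓ ^ 2 / 2))).add keyG
  have heqf : (fun w => 1 - Real.exp (-ℓ * w) - ℓ * hE w)
      = fun w => g w - ℓ ^ 2 / 2 * hE w ^ 2 := by
    funext w; simp only [hgdef]; ring
  have hval : αE * ℓ - 1 / 2 * σE ^ 2 * ℓ ^ 2
      + ∫ w in Ioi (-1 : ℝ), (1 - Real.exp (-ℓ * w) - ℓ * hE w) ∂νE
      = ℓ * αE - ℓ ^ 2 / 2 * βE + ∫ w in Ioi (-1 : ℝ), g w ∂νE := by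
    rw [heqf, integral_sub gnuInt (h2nuInt.const_mul (ℓ ^ 2 / 2)), integral_const_mul, hβE]
    ring
  rw [hval]
  exact hlim
end

section
/- Let g : [0,∞) → ℝ be any function. For every integer k ≥ 3 and all reals z ≥ 0, ℓ ≥ 0, the functions w ↦ e^{−ℓw}(1 − e^{−zw})^k and r ↦ (1 − e^{−r})^k are integrable with respect to ν_E and ν_D respectively, and Σ_{j=0}^{k} C(k,j) (−1)^{k−j} ( −j z g(z) − γ_j^D z + γ_ℓ^E − γ_{jz+ℓ}^E ) = (−1)^k ( ∫_{(−1,∞)} e^{−ℓ w} (1 − e^{−z w})^k dν_E(w) + z ∫_{(0,∞)} (1 − e^{−r})^k dν_D(r) ). -/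
open MeasureTheory Set

private lemma binom_exp (k : ℕ) (x : ℝ) :
    ∑ j ∈ Finset.range (k+1), (k.choose j : ℝ) * (-1) ^ (k-j) * x ^ j = (x - 1) ^ k := by
  have h := add_pow x (-1 : ℝ) k
  rw [← sub_eq_add_neg] at h
  rw [h]
  exact Finset.sum_congr rfl fun j _ => by ring

private lemma L1 (k : ℕ) (hk : 1 ≤ k) :
    ∑ j ∈ Finset.range (k+1), (k.choose j : ℝ) * (-1) ^ (k-j) = 0 := by
  have h := binom_exp k 1
  simp only [one_pow, mul_one, sub_self] at h
  rw [h, zero_pow (by omega)]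

private lemma L2 (k : ℕ) (hk : 2 ≤ k) :
    ∑ j ∈ Finset.range (k+1), (k.choose j : ℝ) * (-1) ^ (k-j) * (j : ℝ) = 0 := by
  obtain ⟨m, rfl⟩ : ∃ m, k = m + 1 := ⟨k - 1, by omega⟩
  rw [Finset.sum_range_succ']
  simp only [Nat.cast_zero, mul_zero, add_zero]
  push_cast
  have step : ∀ i ∈ Finset.range (m+1),
      ((m+1).choose (i+1) : ℝ) * (-1) ^ ((m+1) - (i+1)) * ((i : ℝ)+1)
      = ((m:ℝ)+1) * ((m.choose i : ℝ) * (-1) ^ (m - i)) := by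
    intro i _
    have h2 : ((m:ℝ)+1) * (m.choose i : ℝ) = ((m+1).choose (i+1) : ℝ) * ((i:ℝ)+1) := by
      exact_mod_cast congrArg (Nat.cast : ℕ → ℝ) (Nat.add_one_mul_choose_eq m i)
    rw [Nat.succ_sub_succ]
    linear_combination ((-1:ℝ)^(m-i)) * h2.symm
  calc ∑ i ∈ Finset.range (m+1), ((m+1).choose (i+1) : ℝ) * (-1) ^ (m - i) * ((i:ℕ)+1 : ℝ)
      = ∑ i ∈ Finset.range (m+1), ((m:ℝ)+1) * ((m.choose i : ℝ) * (-1) ^ (m - i)) := by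
        refine Finset.sum_congr rfl fun i hi => ?_
        rw [← step i hi]; push_cast; ring
    _ = ((m:ℝ)+1) * ∑ i ∈ Finset.range (m+1), (m.choose i : ℝ) * (-1) ^ (m - i) := by
        rw [Finset.mul_sum]
    _ = 0 := by rw [L1 m (by omega)]; ring

private lemma L3 (k : ℕ) (hk : 3 ≤ k) :
    ∑ j ∈ Finset.range (k+1), (k.choose j : ℝ) * (-1) ^ (k-j) * (j : ℝ)^2 = 0 := by
  obtain ⟨m, rfl⟩ : ∃ m, k = m + 1 := ⟨k - 1, by omega⟩
  rw [Finset.sum_range_succ']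
  simp only [Nat.cast_zero, add_zero, mul_zero, zero_pow, ne_eq, OfNat.ofNat_ne_zero,
    not_false_eq_true]
  push_cast
  have step : ∀ i ∈ Finset.range (m+1),
      ((m+1).choose (i+1) : ℝ) * (-1) ^ ((m+1) - (i+1)) * ((i : ℝ)+1)^2
      = ((m:ℝ)+1) * ((m.choose i : ℝ) * (-1) ^ (m - i) * (i:ℝ)
          + (m.choose i : ℝ) * (-1) ^ (m - i)) := by
    intro i _
    have h2 : ((m:ℝ)+1) * (m.choose i : ℝ) = ((m+1).choose (i+1) : ℝ) * ((i:ℝ)+1) := by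
      exact_mod_cast congrArg (Nat.cast : ℕ → ℝ) (Nat.add_one_mul_choose_eq m i)
    rw [Nat.succ_sub_succ]
    linear_combination (((i:ℝ)+1) * (-1:ℝ)^(m-i)) * h2.symm
  calc ∑ i ∈ Finset.range (m+1), ((m+1).choose (i+1) : ℝ) * (-1) ^ (m - i) * ((i:ℕ)+1 : ℝ)^2
      = ∑ i ∈ Finset.range (m+1), ((m:ℝ)+1) * ((m.choose i : ℝ) * (-1) ^ (m - i) * (i:ℝ)
          + (m.choose i : ℝ) * (-1) ^ (m - i)) := by
        refine Finset.sum_congr rfl fun i hi => ?_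
        rw [← step i hi]; push_cast; ring
    _ = ((m:ℝ)+1) * ((∑ i ∈ Finset.range (m+1), (m.choose i : ℝ) * (-1) ^ (m - i) * (i:ℝ))
          + ∑ i ∈ Finset.range (m+1), (m.choose i : ℝ) * (-1) ^ (m - i)) := by
        rw [mul_add, Finset.mul_sum, Finset.mul_sum, ← Finset.sum_add_distrib]
        exact Finset.sum_congr rfl fun i _ => by ring
    _ = 0 := by rw [L1 m (by omega), L2 m (by omega)]; ring

private lemma gen_sum (k : ℕ) (hk : 3 ≤ k) (a b s t : ℝ) :
    ∑ j ∈ Finset.range (k+1), (k.choose j : ℝ) * (-1) ^ (k-j) *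
      (a + b * (j:ℝ) - s * Real.exp (-(j:ℝ) * t)) =
    -s * (Real.exp (-t) - 1) ^ k := by
  have e1 : ∀ j : ℕ, Real.exp (-(j:ℝ) * t) = (Real.exp (-t)) ^ j := by
    intro j
    rw [← Real.exp_nat_mul]
    ring_nf
  have split : ∀ j ∈ Finset.range (k+1),
      (k.choose j : ℝ) * (-1) ^ (k-j) * (a + b * (j:ℝ) - s * Real.exp (-(j:ℝ) * t))
      = a * ((k.choose j : ℝ) * (-1) ^ (k-j))
        + b * ((k.choose j : ℝ) * (-1) ^ (k-j) * (j:ℝ))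
        + (-s) * ((k.choose j : ℝ) * (-1) ^ (k-j) * (Real.exp (-t)) ^ j) := by
    intro j _
    rw [e1 j]; ring
  rw [Finset.sum_congr rfl split, Finset.sum_add_distrib, Finset.sum_add_distrib,
    ← Finset.mul_sum, ← Finset.mul_sum, ← Finset.mul_sum,
    L1 k (by omega), L2 k (by omega), binom_exp]
  ring

private lemma one_sub_exp_le' (t : ℝ) : 1 - Real.exp (-t) ≤ t := by
  nlinarith [Real.add_one_le_exp (-t)]

private lemma exp_sub_one_le (s : ℝ) (hs : 0 ≤ s) : Real.exp s - 1 ≤ s * Real.exp s := by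
  have h1 : Real.exp s * Real.exp (-s) = 1 := by rw [← Real.exp_add]; simp
  have h2 := Real.add_one_le_exp (-s)
  nlinarith [Real.exp_pos s]

private lemma abs_one_sub_exp_le (z w : ℝ) (hz : 0 ≤ z) (hw : |w| ≤ 1) :
    |1 - Real.exp (-z * w)| ≤ z * |w| * Real.exp z := by
  have hez : (1:ℝ) ≤ Real.exp z := Real.one_le_exp hz
  rcases le_or_gt 0 w with hw0 | hw0
  · rw [abs_of_nonneg hw0] at *
    have h1 : 1 - Real.exp (-z * w) ≤ z * w := by
      have := one_sub_exp_le' (z * w)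
      rw [neg_mul]; linarith
    have h2 : Real.exp (-z * w) ≤ 1 := Real.exp_le_one_iff.mpr (by nlinarith)
    rw [abs_of_nonneg (by linarith)]
    nlinarith
  · rw [abs_of_neg hw0] at *
    have hs : 0 ≤ -z * w := by nlinarith
    have h1 : Real.exp (-z * w) - 1 ≤ (-z * w) * Real.exp (-z * w) := exp_sub_one_le _ hs
    have h2 : Real.exp (-z * w) ≤ Real.exp z := Real.exp_le_exp.mpr (by nlinarith)
    have h3 : (1:ℝ) ≤ Real.exp (-z * w) := Real.one_le_exp hs
    rw [abs_of_nonpos (by linarith)]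
    nlinarith

private lemma integrable_min_sq_bound {ν : Measure ℝ} {s : Set ℝ} (hs : MeasurableSet s)
    (hν : IntegrableOn (fun w => min (w ^ 2) 1) s ν)
    {f : ℝ → ℝ} (hf : AEStronglyMeasurable f (ν.restrict s))
    (C : ℝ) (hb : ∀ w ∈ s, |f w| ≤ C * min (w ^ 2) 1) :
    IntegrableOn f s ν := by
  apply Integrable.mono' (hν.const_mul C) hf
  exact (ae_restrict_iff' hs).mpr (ae_of_all _ fun w hw => by
    rw [Real.norm_eq_abs]; exact hb w hw)

private lemma integrable_gamma_aux (ν : Measure ℝ) (c : ℝ) (hc : -1 ≤ c)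
    (hν : IntegrableOn (fun w => min (w ^ 2) 1) (Ioi c) ν)
    (h : ℝ → ℝ) (hcont : ContinuousOn h (Ioi c))
    (M : ℝ) (hM : ∀ w ∈ Ioi c, |h w| ≤ M)
    (δ : ℝ) (hδ : 0 < δ) (hid : ∀ w ∈ Ioi c, |w| < δ → h w = w)
    (x : ℝ) (hx : 0 ≤ x) :
    IntegrableOn (fun w => 1 - Real.exp (-x * w) - x * h w) (Ioi c) ν := by
  have hM0 : 0 ≤ M := le_trans (abs_nonneg _) (hM (c+1) (by simp [mem_Ioi]))
  set δ₀ : ℝ := min δ (1/(x+1)) with hδ₀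
  have hx1 : (0:ℝ) < x + 1 := by linarith
  have hδ₀pos : 0 < δ₀ := lt_min hδ (by positivity)
  have hδ₀le1 : δ₀ ≤ 1 := le_trans (min_le_right _ _) (by rw [div_le_one hx1]; linarith)
  have hA : (0:ℝ) ≤ 1 + Real.exp x + x * M := by positivity
  refine integrable_min_sq_bound measurableSet_Ioi hν ?_
    (x^2 + (1 + Real.exp x + x * M)/δ₀^2) ?_
  · exact ((continuousOn_const.sub ((Real.continuous_exp.comp
      (continuous_const.mul continuous_id)).continuousOn)).sub
      (continuousOn_const.mul hcont)).aestronglyMeasurable measurableSet_Ioi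
  · intro w hw
    have hmin0 : 0 ≤ min (w^2) 1 := le_min (sq_nonneg w) zero_le_one
    rcases lt_or_ge |w| δ₀ with hsmall | hbig
    · rw [hid w hw (lt_of_lt_of_le hsmall (min_le_left _ _))]
      have hw1 : |w| ≤ 1 := le_of_lt (lt_of_lt_of_le hsmall hδ₀le1)
      have hxw : |(-x * w)| ≤ 1 := by
        rw [abs_mul, abs_neg, abs_of_nonneg hx]
        have h1 : |w| ≤ 1/(x+1) := le_of_lt (lt_of_lt_of_le hsmall (min_le_right _ _))
        have h2 : x * |w| ≤ x * (1/(x+1)) := mul_le_mul_of_nonneg_left h1 hx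
        have h3 : x * (1/(x+1)) ≤ 1 := by rw [mul_one_div, div_le_one hx1]; linarith
        linarith
      have key := Real.abs_exp_sub_one_sub_id_le hxw
      have heq : |1 - Real.exp (-x * w) - x * w| = |Real.exp (-x * w) - 1 - (-x * w)| := by
        rw [← abs_neg]; congr 1; ring
      have hmin : min (w^2) 1 = w^2 := min_eq_left (by nlinarith [sq_abs w, abs_nonneg w, hw1])
      rw [hmin, heq]
      have : (-x * w)^2 = x^2 * w^2 := by ring
      nlinarith [key, sq_nonneg w, div_nonneg hA (sq_nonneg δ₀)]
    · have hwgt : c < w := hw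
      have he : Real.exp (-x * w) ≤ Real.exp x := Real.exp_le_exp.mpr (by nlinarith)
      have hepos := Real.exp_pos (-x * w)
      have hhw : |h w| ≤ M := hM w hw
      have h1 : |1 - Real.exp (-x * w) - x * h w| ≤ 1 + Real.exp x + x * M := by
        have := abs_sub (1 - Real.exp (-x * w)) (x * h w)
        have ha : |1 - Real.exp (-x * w)| ≤ 1 + Real.exp x :=
          abs_le.mpr ⟨by linarith, by linarith⟩
        have hb : |x * h w| ≤ x * M := by
          rw [abs_mul, abs_of_nonneg hx]; exact mul_le_mul_of_nonneg_left hhw hx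
        calc |1 - Real.exp (-x * w) - x * h w|
            ≤ |1 - Real.exp (-x * w)| + |x * h w| := abs_sub _ _
          _ ≤ 1 + Real.exp x + x * M := by linarith
      have h2 : δ₀^2 ≤ min (w^2) 1 := by
        refine le_min ?_ (by nlinarith)
        nlinarith [sq_abs w, abs_nonneg w]
      have h3 : (1 + Real.exp x + x * M) ≤ ((1 + Real.exp x + x * M)/δ₀^2) * min (w^2) 1 := by
        rw [div_mul_eq_mul_div, le_div_iff₀ (by positivity)]
        nlinarith
      nlinarith [mul_nonneg (sq_nonneg x) hmin0]

private lemma part1_aux (νE : Measure ℝ)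
    (hνEint : IntegrableOn (fun w => min (w ^ 2) 1) (Ioi (-1)) νE)
    (k : ℕ) (hk : 2 ≤ k) (z : ℝ) (hz : 0 ≤ z) (ℓ : ℝ) (hℓ : 0 ≤ ℓ) :
    IntegrableOn (fun w => Real.exp (-ℓ * w) * (1 - Real.exp (-z * w)) ^ k)
      (Ioi (-1)) νE := by
  refine integrable_min_sq_bound measurableSet_Ioi hνEint ?_
    (Real.exp ℓ * ((z * Real.exp z)^k + 1)) ?_
  · exact (((Real.continuous_exp.comp (continuous_const.mul continuous_id)).mul
      ((continuous_const.sub (Real.continuous_exp.comp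
        (continuous_const.mul continuous_id))).pow k))).aestronglyMeasurable
  · intro w hw
    have hwgt : (-1:ℝ) < w := hw
    have hel : Real.exp (-ℓ * w) ≤ Real.exp ℓ := Real.exp_le_exp.mpr (by nlinarith)
    have help := (Real.exp_pos (-ℓ * w)).le
    have habs : |Real.exp (-ℓ * w) * (1 - Real.exp (-z * w)) ^ k|
        = Real.exp (-ℓ * w) * |1 - Real.exp (-z * w)| ^ k := by
      rw [abs_mul, abs_pow, abs_of_nonneg help]
    rw [habs]
    have hzez : 0 ≤ z * Real.exp z := mul_nonneg hz (Real.exp_pos z).le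
    rcases le_or_gt |w| 1 with hw1 | hw1
    · have hb1 : |1 - Real.exp (-z * w)| ≤ z * Real.exp z * |w| := by
        have := abs_one_sub_exp_le z w hz hw1
        linarith [this]
      have hb2 : |1 - Real.exp (-z * w)| ^ k ≤ (z * Real.exp z * |w|) ^ k :=
        pow_le_pow_left₀ (abs_nonneg _) hb1 k
      have hb3 : (z * Real.exp z * |w|) ^ k = (z * Real.exp z) ^ k * |w| ^ k := mul_pow _ _ _
      have hb4 : |w| ^ k ≤ |w| ^ 2 := pow_le_pow_of_le_one (abs_nonneg w) hw1 hk
      have hmin : min (w^2) 1 = w^2 := min_eq_left (by nlinarith [sq_abs w, abs_nonneg w, hw1])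
      rw [hmin]
      have hck : 0 ≤ (z * Real.exp z) ^ k := pow_nonneg hzez k
      have : Real.exp (-ℓ * w) * |1 - Real.exp (-z * w)| ^ k
          ≤ Real.exp ℓ * ((z * Real.exp z) ^ k * w^2) := by
        have e1 : |1 - Real.exp (-z * w)| ^ k ≤ (z * Real.exp z) ^ k * w^2 := by
          rw [← sq_abs w]
          calc |1 - Real.exp (-z * w)| ^ k ≤ (z * Real.exp z) ^ k * |w| ^ k := by
                rw [← hb3]; exact hb2
            _ ≤ (z * Real.exp z) ^ k * |w| ^ 2 := mul_le_mul_of_nonneg_left hb4 hck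
        calc Real.exp (-ℓ * w) * |1 - Real.exp (-z * w)| ^ k
            ≤ Real.exp ℓ * |1 - Real.exp (-z * w)| ^ k :=
              mul_le_mul_of_nonneg_right hel (pow_nonneg (abs_nonneg _) k)
          _ ≤ Real.exp ℓ * ((z * Real.exp z) ^ k * w^2) :=
              mul_le_mul_of_nonneg_left e1 (Real.exp_pos ℓ).le
      nlinarith [sq_nonneg w, (Real.exp_pos ℓ).le]
    · have hwgt1 : 1 < w := by
        rcases le_or_gt w 1 with h | h
        · exact absurd (abs_le.mpr ⟨by linarith, h⟩) (not_le.mpr hw1)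
        · exact h
      have he1 : Real.exp (-z * w) ≤ 1 := Real.exp_le_one_iff.mpr (by nlinarith)
      have h0 : 0 ≤ 1 - Real.exp (-z * w) := by linarith
      have hle1 : |1 - Real.exp (-z * w)| ≤ 1 := by
        rw [abs_of_nonneg h0]; linarith [Real.exp_pos (-z * w)]
      have hpk : |1 - Real.exp (-z * w)| ^ k ≤ 1 := pow_le_one₀ (abs_nonneg _) hle1
      have hmin : min (w^2) 1 = 1 := min_eq_right (by nlinarith)
      rw [hmin, mul_one]
      have hck : (1:ℝ) ≤ (z * Real.exp z) ^ k + 1 := by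
        nlinarith [pow_nonneg hzez k]
      calc Real.exp (-ℓ * w) * |1 - Real.exp (-z * w)| ^ k
          ≤ Real.exp ℓ * 1 := by
            exact mul_le_mul hel hpk (pow_nonneg (abs_nonneg _) k) (Real.exp_pos ℓ).le
        _ ≤ Real.exp ℓ * ((z * Real.exp z) ^ k + 1) :=
            mul_le_mul_of_nonneg_left hck (Real.exp_pos ℓ).le

private lemma part2_aux (νD : Measure ℝ)
    (hνDint : IntegrableOn (fun r => min (r ^ 2) 1) (Ioi 0) νD)
    (k : ℕ) (hk : 2 ≤ k) :
    IntegrableOn (fun r => (1 - Real.exp (-r)) ^ k) (Ioi 0) νD := by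
  refine integrable_min_sq_bound measurableSet_Ioi hνDint ?_ 1 ?_
  · exact ((continuous_const.sub
      (Real.continuous_exp.comp continuous_neg)).pow k).aestronglyMeasurable
  · intro r hr
    have hr0 : (0:ℝ) < r := hr
    have he1 : Real.exp (-r) ≤ 1 := Real.exp_le_one_iff.mpr (by linarith)
    have h0 : 0 ≤ 1 - Real.exp (-r) := by linarith
    have hepos := Real.exp_pos (-r)
    rw [one_mul, abs_pow, abs_of_nonneg h0]
    rcases le_or_gt r 1 with h1 | h1
    · have hmin : min (r^2) 1 = r^2 := min_eq_left (by nlinarith)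
      rw [hmin]
      have hub : 1 - Real.exp (-r) ≤ r := one_sub_exp_le' r
      calc (1 - Real.exp (-r))^k ≤ r^k := pow_le_pow_left₀ h0 hub k
        _ ≤ r^2 := pow_le_pow_of_le_one hr0.le h1 hk
    · have hmin : min (r^2) 1 = 1 := min_eq_right (by nlinarith)
      rw [hmin]
      exact pow_le_one₀ h0 (by linarith)

/-- Identity (4.18) for `k ≥ 3`: the alternating binomial sum of the limiting
characteristics reduces to the jump integrals. -/
theorem stmt13
    -- truncation function h_E on (-1, ∞) and Lévy triplet of the environment
    (hE : ℝ → ℝ) (hEcont : ContinuousOn hE (Ioi (-1 : ℝ)))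
    (hEbdd : ∃ M : ℝ, ∀ w ∈ Ioi (-1 : ℝ), |hE w| ≤ M)
    (hEid : ∃ δ > (0 : ℝ), ∀ w : ℝ, |w| < δ → hE w = w)
    (αE σE : ℝ) (hσE : 0 ≤ σE)
    (νE : Measure ℝ) (hνEint : IntegrableOn (fun w => min (w ^ 2) 1) (Ioi (-1)) νE)
    -- truncation function h_D on (0, ∞) and Lévy triplet of the demography
    (hD : ℝ → ℝ) (hDcont : ContinuousOn hD (Ioi (0 : ℝ)))
    (hDbdd : ∃ M : ℝ, ∀ r ∈ Ioi (0 : ℝ), |hD r| ≤ M)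
    (hDid : ∃ δ > (0 : ℝ), ∀ r ∈ Ioo (0 : ℝ) δ, hD r = r)
    (αD σD : ℝ) (hσD : 0 ≤ σD)
    (νD : Measure ℝ) (hνDint : IntegrableOn (fun r => min (r ^ 2) 1) (Ioi 0) νD)
    -- the γ functions
    (γE γD : ℝ → ℝ)
    (hγE : ∀ x : ℝ, γE x = αE * x - 1 / 2 * σE ^ 2 * x ^ 2 +
      ∫ w in Ioi (-1 : ℝ), (1 - Real.exp (-x * w) - x * hE w) ∂νE)
    (hγD : ∀ x : ℝ, γD x = αD * x - 1 / 2 * σD ^ 2 * x ^ 2 +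
      ∫ r in Ioi (0 : ℝ), (1 - Real.exp (-x * r) - x * hD r) ∂νD)
    -- interaction function
    (g : ℝ → ℝ)
    (k : ℕ) (hk : 3 ≤ k) (z : ℝ) (hz : 0 ≤ z) (ℓ : ℝ) (hℓ : 0 ≤ ℓ) :
    IntegrableOn (fun w => Real.exp (-ℓ * w) * (1 - Real.exp (-z * w)) ^ k)
      (Ioi (-1)) νE ∧
    IntegrableOn (fun r => (1 - Real.exp (-r)) ^ k) (Ioi 0) νD ∧
    (∑ j ∈ Finset.range (k + 1), (k.choose j : ℝ) * (-1 : ℝ) ^ (k - j) *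
        (-(j : ℝ) * z * g z - γD (j : ℝ) * z + γE ℓ - γE ((j : ℝ) * z + ℓ))) =
      (-1 : ℝ) ^ k *
        ((∫ w in Ioi (-1 : ℝ), Real.exp (-ℓ * w) * (1 - Real.exp (-z * w)) ^ k ∂νE) +
          z * ∫ r in Ioi (0 : ℝ), (1 - Real.exp (-r)) ^ k ∂νD) := by
  obtain ⟨ME, hME⟩ := hEbdd
  obtain ⟨δE, hδE, hidE⟩ := hEid
  obtain ⟨MD, hMD⟩ := hDbdd
  obtain ⟨δD, hδD, hidD⟩ := hDid
  refine ⟨part1_aux νE hνEint k (by omega) z hz ℓ hℓ, part2_aux νD hνDint k (by omega), ?_⟩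
  -- integrability of the γ-integrands
  have hIntE : ∀ x : ℝ, 0 ≤ x →
      IntegrableOn (fun w => 1 - Real.exp (-x * w) - x * hE w) (Ioi (-1)) νE :=
    fun x hx => integrable_gamma_aux νE (-1) le_rfl hνEint hE hEcont ME hME δE hδE
      (fun w _ hw2 => hidE w hw2) x hx
  have hIntD : ∀ x : ℝ, 0 ≤ x →
      IntegrableOn (fun r => 1 - Real.exp (-x * r) - x * hD r) (Ioi 0) νD :=
    fun x hx => integrable_gamma_aux νD 0 (by norm_num) hνDint hD hDcont MD hMD δD hδD
      (fun r hr hr2 => hidD r ⟨hr, by rwa [abs_of_pos hr] at hr2⟩) x hx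
  -- the D-side sum of integrals
  have sumID : ∑ j ∈ Finset.range (k + 1), (k.choose j : ℝ) * (-1 : ℝ) ^ (k - j) *
        (∫ r in Ioi (0:ℝ), (1 - Real.exp (-(j:ℝ) * r) - (j:ℝ) * hD r) ∂νD)
      = -(-1:ℝ)^k * ∫ r in Ioi (0:ℝ), (1 - Real.exp (-r)) ^ k ∂νD := by
    have hpt : ∀ r : ℝ, (∑ j ∈ Finset.range (k + 1), (k.choose j : ℝ) * (-1 : ℝ) ^ (k - j) *
          (1 - Real.exp (-(j:ℝ) * r) - (j:ℝ) * hD r))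
        = -(-1:ℝ)^k * (1 - Real.exp (-r)) ^ k := by
      intro r
      have hg := gen_sum k hk 1 (-(hD r)) 1 r
      have hcg : ∀ j ∈ Finset.range (k + 1),
          (k.choose j : ℝ) * (-1 : ℝ) ^ (k - j) * (1 - Real.exp (-(j:ℝ) * r) - (j:ℝ) * hD r)
          = (k.choose j : ℝ) * (-1 : ℝ) ^ (k - j) *
            (1 + -(hD r) * (j:ℝ) - 1 * Real.exp (-(j:ℝ) * r)) := fun j _ => by ring
      rw [Finset.sum_congr rfl hcg, hg]
      have hneg : (Real.exp (-r) - 1) ^ k = (-1:ℝ)^k * (1 - Real.exp (-r)) ^ k := by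
        rw [show Real.exp (-r) - 1 = -(1 - Real.exp (-r)) by ring, neg_pow]
      rw [hneg]; ring
    calc ∑ j ∈ Finset.range (k + 1), (k.choose j : ℝ) * (-1 : ℝ) ^ (k - j) *
          (∫ r in Ioi (0:ℝ), (1 - Real.exp (-(j:ℝ) * r) - (j:ℝ) * hD r) ∂νD)
        = ∑ j ∈ Finset.range (k + 1), ∫ r in Ioi (0:ℝ),
            (k.choose j : ℝ) * (-1 : ℝ) ^ (k - j) *
              (1 - Real.exp (-(j:ℝ) * r) - (j:ℝ) * hD r) ∂νD := by
          exact Finset.sum_congr rfl fun j _ => (MeasureTheory.integral_const_mul _ _).symm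
      _ = ∫ r in Ioi (0:ℝ), (∑ j ∈ Finset.range (k + 1),
            (k.choose j : ℝ) * (-1 : ℝ) ^ (k - j) *
              (1 - Real.exp (-(j:ℝ) * r) - (j:ℝ) * hD r)) ∂νD :=
          (integral_finset_sum _ (fun (j : ℕ) _ =>
            ((hIntD (j:ℝ) (Nat.cast_nonneg j)).const_mul _))).symm
      _ = ∫ r in Ioi (0:ℝ), -(-1:ℝ)^k * (1 - Real.exp (-r)) ^ k ∂νD := by
          simp only [hpt]
      _ = -(-1:ℝ)^k * ∫ r in Ioi (0:ℝ), (1 - Real.exp (-r)) ^ k ∂νD :=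
          MeasureTheory.integral_const_mul _ _
  -- the E-side sum of integrals
  have sumIE : ∑ j ∈ Finset.range (k + 1), (k.choose j : ℝ) * (-1 : ℝ) ^ (k - j) *
        (∫ w in Ioi (-1:ℝ),
          (1 - Real.exp (-((j:ℝ) * z + ℓ) * w) - ((j:ℝ) * z + ℓ) * hE w) ∂νE)
      = -(-1:ℝ)^k * ∫ w in Ioi (-1:ℝ),
          Real.exp (-ℓ * w) * (1 - Real.exp (-z * w)) ^ k ∂νE := by
    have hpt : ∀ w : ℝ, (∑ j ∈ Finset.range (k + 1), (k.choose j : ℝ) * (-1 : ℝ) ^ (k - j) *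
          (1 - Real.exp (-((j:ℝ) * z + ℓ) * w) - ((j:ℝ) * z + ℓ) * hE w))
        = -(-1:ℝ)^k * (Real.exp (-ℓ * w) * (1 - Real.exp (-z * w)) ^ k) := by
      intro w
      have hg := gen_sum k hk (1 - ℓ * hE w) (-(z * hE w)) (Real.exp (-ℓ * w)) (z * w)
      have hcg : ∀ j ∈ Finset.range (k + 1),
          (k.choose j : ℝ) * (-1 : ℝ) ^ (k - j) *
            (1 - Real.exp (-((j:ℝ) * z + ℓ) * w) - ((j:ℝ) * z + ℓ) * hE w)
          = (k.choose j : ℝ) * (-1 : ℝ) ^ (k - j) *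
            ((1 - ℓ * hE w) + -(z * hE w) * (j:ℝ)
              - Real.exp (-ℓ * w) * Real.exp (-(j:ℝ) * (z * w))) := by
        intro j _
        have hexp : Real.exp (-((j:ℝ) * z + ℓ) * w)
            = Real.exp (-ℓ * w) * Real.exp (-(j:ℝ) * (z * w)) := by
          rw [← Real.exp_add]; ring_nf
        rw [hexp]; ring
      rw [Finset.sum_congr rfl hcg, hg]
      have h1 : Real.exp (-(z * w)) = Real.exp (-z * w) := by rw [neg_mul]
      have hneg : (Real.exp (-(z * w)) - 1) ^ k
          = (-1:ℝ)^k * (1 - Real.exp (-z * w)) ^ k := by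
        rw [h1, show Real.exp (-z * w) - 1 = -(1 - Real.exp (-z * w)) by ring, neg_pow]
      rw [hneg]; ring
    calc ∑ j ∈ Finset.range (k + 1), (k.choose j : ℝ) * (-1 : ℝ) ^ (k - j) *
          (∫ w in Ioi (-1:ℝ),
            (1 - Real.exp (-((j:ℝ) * z + ℓ) * w) - ((j:ℝ) * z + ℓ) * hE w) ∂νE)
        = ∑ j ∈ Finset.range (k + 1), ∫ w in Ioi (-1:ℝ),
            (k.choose j : ℝ) * (-1 : ℝ) ^ (k - j) *
              (1 - Real.exp (-((j:ℝ) * z + ℓ) * w) - ((j:ℝ) * z + ℓ) * hE w) ∂νE := by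
          exact Finset.sum_congr rfl fun j _ => (MeasureTheory.integral_const_mul _ _).symm
      _ = ∫ w in Ioi (-1:ℝ), (∑ j ∈ Finset.range (k + 1),
            (k.choose j : ℝ) * (-1 : ℝ) ^ (k - j) *
              (1 - Real.exp (-((j:ℝ) * z + ℓ) * w) - ((j:ℝ) * z + ℓ) * hE w)) ∂νE :=
          (integral_finset_sum _ (fun (j : ℕ) _ =>
            ((hIntE ((j:ℝ) * z + ℓ) (by positivity)).const_mul _))).symm
      _ = ∫ w in Ioi (-1:ℝ),
            -(-1:ℝ)^k * (Real.exp (-ℓ * w) * (1 - Real.exp (-z * w)) ^ k) ∂νE := by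
          simp only [hpt]
      _ = -(-1:ℝ)^k * ∫ w in Ioi (-1:ℝ),
            Real.exp (-ℓ * w) * (1 - Real.exp (-z * w)) ^ k ∂νE :=
          MeasureTheory.integral_const_mul _ _
  -- expand the summand
  have expand : ∀ j ∈ Finset.range (k + 1),
      (k.choose j : ℝ) * (-1 : ℝ) ^ (k - j) *
        (-(j : ℝ) * z * g z - γD (j : ℝ) * z + γE ℓ - γE ((j : ℝ) * z + ℓ))
      = (∫ w in Ioi (-1:ℝ), (1 - Real.exp (-ℓ * w) - ℓ * hE w) ∂νE) *
          ((k.choose j : ℝ) * (-1 : ℝ) ^ (k - j))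
        + (-z * g z - αD * z + σE ^ 2 * z * ℓ - αE * z) *
          ((k.choose j : ℝ) * (-1 : ℝ) ^ (k - j) * (j : ℝ))
        + (1 / 2 * σD ^ 2 * z + 1 / 2 * σE ^ 2 * z ^ 2) *
          ((k.choose j : ℝ) * (-1 : ℝ) ^ (k - j) * (j : ℝ) ^ 2)
        + (-z) * ((k.choose j : ℝ) * (-1 : ℝ) ^ (k - j) *
            (∫ r in Ioi (0:ℝ), (1 - Real.exp (-(j:ℝ) * r) - (j:ℝ) * hD r) ∂νD))
        + (-1) * ((k.choose j : ℝ) * (-1 : ℝ) ^ (k - j) *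
            (∫ w in Ioi (-1:ℝ),
              (1 - Real.exp (-((j:ℝ) * z + ℓ) * w) - ((j:ℝ) * z + ℓ) * hE w) ∂νE)) := by
    intro j _
    rw [hγD (j:ℝ), hγE ℓ, hγE ((j:ℝ) * z + ℓ)]
    ring
  rw [Finset.sum_congr rfl expand, Finset.sum_add_distrib, Finset.sum_add_distrib,
    Finset.sum_add_distrib, Finset.sum_add_distrib,
    ← Finset.mul_sum, ← Finset.mul_sum, ← Finset.mul_sum, ← Finset.mul_sum, ← Finset.mul_sum,
    L1 k (by omega), L2 k (by omega), L3 k hk, sumID, sumIE]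
  ring
end

section
/- Let g : [0,∞) → ℝ be any function. For all reals z ≥ 0 and ℓ ≥ 0, the function w ↦ e^{−ℓw}(1 − e^{−zw})² − z² h_E(w)² is ν_E-integrable, the function r ↦ (1 − e^{−r})² − h_D(r)² is ν_D-integrable, and Σ_{j=0}^{2} C(2,j) (−1)^{2−j} ( −j z g(z) − γ_j^D z + γ_ℓ^E − γ_{jz+ℓ}^E ) = z² β_E + ∫_{(−1,∞)} ( e^{−ℓ w} (1 − e^{−z w})² − z² h_E(w)² ) dν_E(w) + z β_D + z ∫_{(0,∞)} ( (1 − e^{−r})² − h_D(r)² ) dν_D(r), where β_E = σ_E² + ∫ h_E(w)² dν_E(w) and β_D = σ_D² + ∫ h_D(r)² dν_D(r). -/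
open MeasureTheory Set

private lemma exp_ineq1 {t : ℝ} (ht : 0 ≤ t) : Real.exp t - 1 ≤ t * Real.exp t := by
  have hm : Real.exp t * Real.exp (-t) = 1 := by rw [← Real.exp_add]; simp
  nlinarith [Real.add_one_le_exp (-t), Real.exp_pos t]

private lemma abs_exp_sub_one (t : ℝ) : |Real.exp t - 1| ≤ |t| * Real.exp |t| := by
  rcases le_or_gt 0 t with h | h
  · rw [abs_of_nonneg h,
      abs_of_nonneg (by nlinarith [Real.add_one_le_exp t] : (0:ℝ) ≤ Real.exp t - 1)]
    exact exp_ineq1 h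
  · have h1 : Real.exp t < 1 := by
      rw [← Real.exp_zero]; exact Real.exp_lt_exp.mpr h
    rw [abs_of_neg h, abs_of_nonpos (by linarith)]
    have h2 := Real.add_one_le_exp t
    have h3 : (1:ℝ) ≤ Real.exp (-t) := by
      rw [← Real.exp_zero]; exact Real.exp_le_exp.mpr (by linarith)
    nlinarith [mul_nonneg (by linarith : (0:ℝ) ≤ -t) (by linarith : (0:ℝ) ≤ Real.exp (-t) - 1)]

private lemma abs_exp_sub_one_sub (t : ℝ) : |Real.exp t - 1 - t| ≤ t ^ 2 * Real.exp |t| := by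
  have hnn : 0 ≤ Real.exp t - 1 - t := by nlinarith [Real.add_one_le_exp t]
  rw [abs_of_nonneg hnn]
  rcases le_or_gt 0 t with h | h
  · rw [abs_of_nonneg h]
    have h1 := exp_ineq1 h
    nlinarith [mul_nonneg h (sub_nonneg.mpr h1)]
  · rw [abs_of_neg h]
    have h1 : Real.exp t < 1 := by
      rw [← Real.exp_zero]; exact Real.exp_lt_exp.mpr h
    have h3 : (1:ℝ) ≤ Real.exp (-t) := by
      rw [← Real.exp_zero]; exact Real.exp_le_exp.mpr (by linarith)
    rcases le_or_gt (-t) 1 with h2 | h2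
    · have h4 := Real.abs_exp_sub_one_sub_id_le (x := t) (by rw [abs_of_neg h]; exact h2)
      rw [abs_of_nonneg hnn] at h4
      nlinarith [sq_nonneg t]
    · nlinarith [sq_nonneg t]

/-- Domination lemma: a function bounded by `C₁ w²` near 0 and by `C₂` away from 0
is integrable against a measure integrating `min (w²) 1`. -/
private lemma integrable_cases {ν : Measure ℝ} {s : Set ℝ} (hs : MeasurableSet s)
    (hmin : IntegrableOn (fun w => min (w ^ 2) 1) s ν)
    {f : ℝ → ℝ} (hf : AEStronglyMeasurable f (ν.restrict s))
    {C1 C2 d : ℝ} (hd : 0 < d) (hd1 : d ≤ 1) (hC2 : 0 ≤ C2)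
    (h1 : ∀ w ∈ s, |w| < d → |f w| ≤ C1 * w ^ 2)
    (h2 : ∀ w ∈ s, d ≤ |w| → |f w| ≤ C2) :
    IntegrableOn f s ν := by
  refine Integrable.mono' (hmin.const_mul (max C1 (C2 / d ^ 2))) hf ?_
  rw [ae_restrict_iff' hs]
  refine Filter.Eventually.of_forall fun w hw => ?_
  have hmn : 0 ≤ min (w ^ 2) 1 := le_min (sq_nonneg w) zero_le_one
  rw [Real.norm_eq_abs]
  rcases lt_or_ge |w| d with h | h
  · have hmeq : min (w ^ 2) 1 = w ^ 2 :=
      min_eq_left (by nlinarith [sq_abs w, abs_nonneg w])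
    calc |f w| ≤ C1 * w ^ 2 := h1 w hw h
      _ ≤ max C1 (C2 / d ^ 2) * min (w ^ 2) 1 := by
          rw [hmeq]; exact mul_le_mul_of_nonneg_right (le_max_left _ _) (sq_nonneg w)
  · have hge : d ^ 2 ≤ min (w ^ 2) 1 :=
      le_min (by nlinarith [sq_abs w, abs_nonneg w]) (by nlinarith)
    have hc : 0 ≤ C2 / d ^ 2 := by positivity
    calc |f w| ≤ C2 := h2 w hw h
      _ = C2 / d ^ 2 * d ^ 2 := by field_simp
      _ ≤ C2 / d ^ 2 * min (w ^ 2) 1 := mul_le_mul_of_nonneg_left hge hc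
      _ ≤ max C1 (C2 / d ^ 2) * min (w ^ 2) 1 :=
          mul_le_mul_of_nonneg_right (le_max_right _ _) hmn

set_option maxHeartbeats 1000000 in
/-- Identity (4.19) for `k = 2`: the alternating binomial sum of the limiting
characteristics in terms of `β_E`, `β_D` and the jump integrals. -/
theorem stmt14
    -- truncation function h_E on (-1, ∞) and Lévy triplet of the environment
    (hE : ℝ → ℝ) (hEcont : ContinuousOn hE (Ioi (-1 : ℝ)))
    (hEbdd : ∃ M : ℝ, ∀ w ∈ Ioi (-1 : ℝ), |hE w| ≤ M)
    (hEid : ∃ δ > (0 : ℝ), ∀ w : ℝ, |w| < δ → hE w = w)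
    (αE σE : ℝ) (hσE : 0 ≤ σE)
    (νE : Measure ℝ) (hνEint : IntegrableOn (fun w => min (w ^ 2) 1) (Ioi (-1)) νE)
    -- truncation function h_D on (0, ∞) and Lévy triplet of the demography
    (hD : ℝ → ℝ) (hDcont : ContinuousOn hD (Ioi (0 : ℝ)))
    (hDbdd : ∃ M : ℝ, ∀ r ∈ Ioi (0 : ℝ), |hD r| ≤ M)
    (hDid : ∃ δ > (0 : ℝ), ∀ r ∈ Ioo (0 : ℝ) δ, hD r = r)
    (αD σD : ℝ) (hσD : 0 ≤ σD)
    (νD : Measure ℝ) (hνDint : IntegrableOn (fun r => min (r ^ 2) 1) (Ioi 0) νD)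
    -- the γ functions and the β coefficients
    (γE γD : ℝ → ℝ)
    (hγE : ∀ x : ℝ, γE x = αE * x - 1 / 2 * σE ^ 2 * x ^ 2 +
      ∫ w in Ioi (-1 : ℝ), (1 - Real.exp (-x * w) - x * hE w) ∂νE)
    (hγD : ∀ x : ℝ, γD x = αD * x - 1 / 2 * σD ^ 2 * x ^ 2 +
      ∫ r in Ioi (0 : ℝ), (1 - Real.exp (-x * r) - x * hD r) ∂νD)
    (βE βD : ℝ)
    (hβE : βE = σE ^ 2 + ∫ w in Ioi (-1 : ℝ), hE w ^ 2 ∂νE)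
    (hβD : βD = σD ^ 2 + ∫ r in Ioi (0 : ℝ), hD r ^ 2 ∂νD)
    -- interaction function
    (g : ℝ → ℝ)
    (z : ℝ) (hz : 0 ≤ z) (ℓ : ℝ) (hℓ : 0 ≤ ℓ) :
    IntegrableOn
      (fun w => Real.exp (-ℓ * w) * (1 - Real.exp (-z * w)) ^ 2 - z ^ 2 * hE w ^ 2)
      (Ioi (-1)) νE ∧
    IntegrableOn (fun r => (1 - Real.exp (-r)) ^ 2 - hD r ^ 2) (Ioi 0) νD ∧
    (∑ j ∈ Finset.range 3, ((2 : ℕ).choose j : ℝ) * (-1 : ℝ) ^ (2 - j) *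
        (-(j : ℝ) * z * g z - γD (j : ℝ) * z + γE ℓ - γE ((j : ℝ) * z + ℓ))) =
      z ^ 2 * βE +
        (∫ w in Ioi (-1 : ℝ),
          (Real.exp (-ℓ * w) * (1 - Real.exp (-z * w)) ^ 2 - z ^ 2 * hE w ^ 2) ∂νE) +
        z * βD +
        z * ∫ r in Ioi (0 : ℝ), ((1 - Real.exp (-r)) ^ 2 - hD r ^ 2) ∂νD := by
  obtain ⟨M, hM⟩ := hEbdd
  obtain ⟨δE, hδE, hδEid⟩ := hEid
  obtain ⟨N, hN⟩ := hDbdd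
  obtain ⟨δD, hδD, hδDid⟩ := hDid
  set dE := min δE 1 with hdE_def
  have hdE : 0 < dE := lt_min hδE one_pos
  have hdE1 : dE ≤ 1 := min_le_right _ _
  set dD := min δD 1 with hdD_def
  have hdD : 0 < dD := lt_min hδD one_pos
  have hdD1 : dD ≤ 1 := min_le_right _ _
  have hM0 : 0 ≤ M := le_trans (abs_nonneg _) (hM 0 (by norm_num))
  have hN0 : 0 ≤ N := le_trans (abs_nonneg _) (hN 1 (by norm_num))
  -- integrability of hE^2
  have intHE2 : IntegrableOn (fun w => hE w ^ 2) (Ioi (-1)) νE := by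
    refine integrable_cases measurableSet_Ioi hνEint
      ((hEcont.pow 2).aestronglyMeasurable measurableSet_Ioi)
      (C1 := 1) (C2 := M ^ 2) hdE hdE1
      (by positivity : (0:ℝ) ≤ M ^ 2) (fun w _ h => ?_) (fun w hw h => ?_)
    · have hid : hE w = w := hδEid w (lt_of_lt_of_le h (min_le_left _ _))
      rw [hid, abs_of_nonneg (sq_nonneg w), one_mul]
    · have h2 := hM w hw
      rw [abs_of_nonneg (sq_nonneg _)]
      nlinarith [abs_nonneg (hE w), sq_abs (hE w)]
  have intHD2 : IntegrableOn (fun r => hD r ^ 2) (Ioi 0) νD := by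
    refine integrable_cases measurableSet_Ioi hνDint
      ((hDcont.pow 2).aestronglyMeasurable measurableSet_Ioi)
      (C1 := 1) (C2 := N ^ 2) hdD hdD1
      (by positivity : (0:ℝ) ≤ N ^ 2) (fun r hr h => ?_) (fun r hr h => ?_)
    · have hid : hD r = r := hδDid r ⟨hr, lt_of_lt_of_le (lt_of_abs_lt h)
        (min_le_left _ _)⟩
      rw [hid, abs_of_nonneg (sq_nonneg r), one_mul]
    · have h2 := hN r hr
      rw [abs_of_nonneg (sq_nonneg _)]
      nlinarith [abs_nonneg (hD r), sq_abs (hD r)]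
  -- integrability of the ψ_x for the environment
  have intPsiE : ∀ x : ℝ, 0 ≤ x →
      IntegrableOn (fun w => 1 - Real.exp (-x * w) - x * hE w) (Ioi (-1)) νE := by
    intro x hx
    refine integrable_cases measurableSet_Ioi hνEint
      (((Continuous.continuousOn (by fun_prop)).sub
        (continuousOn_const.mul hEcont)).aestronglyMeasurable measurableSet_Ioi)
      (C1 := x ^ 2 * Real.exp x) (C2 := 1 + Real.exp x + x * M) hdE hdE1
      (by positivity) (fun w _ h => ?_) (fun w hw h => ?_)
    · have hid : hE w = w := hδEid w (lt_of_lt_of_le h (min_le_left _ _))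
      have key := abs_exp_sub_one_sub (-x * w)
      have habs : |(-x * w)| = x * |w| := by rw [abs_mul, abs_neg, abs_of_nonneg hx]
      have hxw : |(-x * w)| ≤ x := by
        rw [habs]; nlinarith [abs_nonneg w]
      have hexp : Real.exp |(-x * w)| ≤ Real.exp x := Real.exp_le_exp.mpr hxw
      have heq : |1 - Real.exp (-x * w) - x * hE w|
          = |Real.exp (-x * w) - 1 - (-x * w)| := by
        rw [hid, show (1 - Real.exp (-x * w) - x * w)
          = -(Real.exp (-x * w) - 1 - (-x * w)) by ring, abs_neg]
      rw [heq]
      calc |Real.exp (-x * w) - 1 - (-x * w)|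
          ≤ (-x * w) ^ 2 * Real.exp |(-x * w)| := key
        _ = x ^ 2 * w ^ 2 * Real.exp |(-x * w)| := by ring
        _ ≤ x ^ 2 * w ^ 2 * Real.exp x :=
            mul_le_mul_of_nonneg_left hexp (by positivity)
        _ = x ^ 2 * Real.exp x * w ^ 2 := by ring
    · have h1 : Real.exp (-x * w) ≤ Real.exp x := by
        refine Real.exp_le_exp.mpr ?_
        have : (-1 : ℝ) < w := hw
        nlinarith
      rcases abs_cases (1 - Real.exp (-x * w) - x * hE w) with ⟨he, _⟩ | ⟨he, _⟩ <;>
        rw [he] <;>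
        linarith [Real.exp_pos (-x * w), h1,
          mul_le_mul_of_nonneg_left (abs_le.mp (hM w hw)).2 hx,
          mul_le_mul_of_nonneg_left (neg_le_of_abs_le (hM w hw)) hx]
  -- integrability of the φ_x for the demography
  have intPsiD : ∀ x : ℝ, 0 ≤ x →
      IntegrableOn (fun r => 1 - Real.exp (-x * r) - x * hD r) (Ioi 0) νD := by
    intro x hx
    refine integrable_cases measurableSet_Ioi hνDint
      (((Continuous.continuousOn (by fun_prop)).sub
        (continuousOn_const.mul hDcont)).aestronglyMeasurable measurableSet_Ioi)
      (C1 := x ^ 2 * Real.exp x) (C2 := 1 + Real.exp x + x * N) hdD hdD1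
      (by positivity) (fun r hr h => ?_) (fun r hr h => ?_)
    · have hid : hD r = r := hδDid r ⟨hr, lt_of_lt_of_le (lt_of_abs_lt h)
        (min_le_left _ _)⟩
      have key := abs_exp_sub_one_sub (-x * r)
      have habs : |(-x * r)| = x * |r| := by rw [abs_mul, abs_neg, abs_of_nonneg hx]
      have hxw : |(-x * r)| ≤ x := by
        rw [habs]; nlinarith [abs_nonneg r]
      have hexp : Real.exp |(-x * r)| ≤ Real.exp x := Real.exp_le_exp.mpr hxw
      have heq : |1 - Real.exp (-x * r) - x * hD r|
          = |Real.exp (-x * r) - 1 - (-x * r)| := by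
        rw [hid, show (1 - Real.exp (-x * r) - x * r)
          = -(Real.exp (-x * r) - 1 - (-x * r)) by ring, abs_neg]
      rw [heq]
      calc |Real.exp (-x * r) - 1 - (-x * r)|
          ≤ (-x * r) ^ 2 * Real.exp |(-x * r)| := key
        _ = x ^ 2 * r ^ 2 * Real.exp |(-x * r)| := by ring
        _ ≤ x ^ 2 * r ^ 2 * Real.exp x :=
            mul_le_mul_of_nonneg_left hexp (by positivity)
        _ = x ^ 2 * Real.exp x * r ^ 2 := by ring
    · have h1 : Real.exp (-x * r) ≤ Real.exp x := by
        refine Real.exp_le_exp.mpr ?_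
        have : (0 : ℝ) < r := hr
        nlinarith
      rcases abs_cases (1 - Real.exp (-x * r) - x * hD r) with ⟨he, _⟩ | ⟨he, _⟩ <;>
        rw [he] <;>
        linarith [Real.exp_pos (-x * r), h1,
          mul_le_mul_of_nonneg_left (abs_le.mp (hN r hr)).2 hx,
          mul_le_mul_of_nonneg_left (neg_le_of_abs_le (hN r hr)) hx]
  -- integrability of the exponential part for the environment
  have intExpE : IntegrableOn
      (fun w => Real.exp (-ℓ * w) * (1 - Real.exp (-z * w)) ^ 2) (Ioi (-1)) νE := by
    refine integrable_cases measurableSet_Ioi hνEint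
      ((Continuous.continuousOn (by fun_prop : Continuous fun w : ℝ =>
        Real.exp (-ℓ * w) * (1 - Real.exp (-z * w)) ^ 2)).aestronglyMeasurable
        measurableSet_Ioi)
      (C1 := Real.exp ℓ * (z * Real.exp z) ^ 2) (C2 := 1)
      one_pos le_rfl zero_le_one (fun w _ h => ?_) (fun w hw h => ?_)
    · have hnn : 0 ≤ Real.exp (-ℓ * w) * (1 - Real.exp (-z * w)) ^ 2 := by positivity
      rw [abs_of_nonneg hnn]
      have ha : Real.exp (-ℓ * w) ≤ Real.exp ℓ := by
        refine Real.exp_le_exp.mpr ?_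
        nlinarith [le_abs_self (-w), abs_neg w]
      have hb : |1 - Real.exp (-z * w)| ≤ z * Real.exp z * |w| := by
        have h1 := abs_exp_sub_one (-z * w)
        have h2 : |(-z * w)| = z * |w| := by rw [abs_mul, abs_neg, abs_of_nonneg hz]
        have h3 : Real.exp (z * |w|) ≤ Real.exp z := by
          refine Real.exp_le_exp.mpr ?_
          nlinarith [abs_nonneg w]
        calc |1 - Real.exp (-z * w)| = |Real.exp (-z * w) - 1| := abs_sub_comm _ _
          _ ≤ |(-z * w)| * Real.exp |(-z * w)| := h1
          _ ≤ (z * |w|) * Real.exp z := by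
              rw [h2]
              exact mul_le_mul_of_nonneg_left h3 (by positivity)
          _ = z * Real.exp z * |w| := by ring
      have hb2 : (1 - Real.exp (-z * w)) ^ 2 ≤ (z * Real.exp z) ^ 2 * w ^ 2 := by
        have h4 := pow_le_pow_left₀ (abs_nonneg (1 - Real.exp (-z * w))) hb 2
        rw [sq_abs] at h4
        calc (1 - Real.exp (-z * w)) ^ 2 ≤ (z * Real.exp z * |w|) ^ 2 := h4
          _ = (z * Real.exp z) ^ 2 * |w| ^ 2 := by ring
          _ = (z * Real.exp z) ^ 2 * w ^ 2 := by rw [sq_abs]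
      calc Real.exp (-ℓ * w) * (1 - Real.exp (-z * w)) ^ 2
          ≤ Real.exp (-ℓ * w) * ((z * Real.exp z) ^ 2 * w ^ 2) :=
            mul_le_mul_of_nonneg_left hb2 (Real.exp_pos _).le
        _ ≤ Real.exp ℓ * ((z * Real.exp z) ^ 2 * w ^ 2) :=
            mul_le_mul_of_nonneg_right ha (by positivity)
        _ = Real.exp ℓ * (z * Real.exp z) ^ 2 * w ^ 2 := by ring
    · have hw1 : (1 : ℝ) ≤ w := by
        rcases abs_cases w with ⟨h1, _⟩ | ⟨h1, _⟩
        · linarith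
        · have : (-1 : ℝ) < w := hw
          linarith
      have h1 : Real.exp (-ℓ * w) ≤ 1 := by
        rw [← Real.exp_zero]
        exact Real.exp_le_exp.mpr (by nlinarith)
      have h2 : Real.exp (-z * w) ≤ 1 := by
        rw [← Real.exp_zero]
        exact Real.exp_le_exp.mpr (by nlinarith)
      have hnn : 0 ≤ Real.exp (-ℓ * w) * (1 - Real.exp (-z * w)) ^ 2 := by positivity
      rw [abs_of_nonneg hnn]
      nlinarith [Real.exp_pos (-ℓ * w), Real.exp_pos (-z * w)]
  -- integrability of the exponential part for the demography
  have intExpD : IntegrableOn (fun r => (1 - Real.exp (-r)) ^ 2) (Ioi 0) νD := by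
    refine integrable_cases measurableSet_Ioi hνDint
      ((Continuous.continuousOn (by fun_prop : Continuous fun r : ℝ =>
        (1 - Real.exp (-r)) ^ 2)).aestronglyMeasurable measurableSet_Ioi)
      (C1 := 1) (C2 := 1) one_pos le_rfl zero_le_one
      (fun r hr h => ?_) (fun r hr h => ?_) <;>
    · have hr0 : (0 : ℝ) < r := hr
      have h1 : Real.exp (-r) ≤ 1 := by
        rw [← Real.exp_zero]; exact Real.exp_le_exp.mpr (by linarith)
      have h2 : 1 - Real.exp (-r) ≤ r := by nlinarith [Real.add_one_le_exp (-r)]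
      rw [abs_of_nonneg (sq_nonneg _)]
      nlinarith [Real.exp_pos (-r)]
  have intP : IntegrableOn
      (fun w => Real.exp (-ℓ * w) * (1 - Real.exp (-z * w)) ^ 2 - z ^ 2 * hE w ^ 2)
      (Ioi (-1)) νE := intExpE.sub (intHE2.const_mul (z ^ 2))
  have intQ : IntegrableOn (fun r => (1 - Real.exp (-r)) ^ 2 - hD r ^ 2) (Ioi 0) νD :=
    intExpD.sub intHD2
  refine ⟨intP, intQ, ?_⟩
  -- integral combination identities
  have i0 := intPsiE ℓ hℓ
  have i1 := intPsiE (z + ℓ) (by linarith)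
  have i2 := intPsiE (2 * z + ℓ) (by linarith)
  have j1 := intPsiD 1 zero_le_one
  have j2 := intPsiD 2 (by norm_num)
  have combE : (∫ w in Ioi (-1:ℝ),
        (Real.exp (-ℓ * w) * (1 - Real.exp (-z * w)) ^ 2 - z ^ 2 * hE w ^ 2) ∂νE)
      = 2 * (∫ w in Ioi (-1:ℝ), (1 - Real.exp (-(z + ℓ) * w) - (z + ℓ) * hE w) ∂νE)
        - (∫ w in Ioi (-1:ℝ), (1 - Real.exp (-ℓ * w) - ℓ * hE w) ∂νE)
        - (∫ w in Ioi (-1:ℝ),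
            (1 - Real.exp (-(2 * z + ℓ) * w) - (2 * z + ℓ) * hE w) ∂νE)
        - z ^ 2 * (∫ w in Ioi (-1:ℝ), hE w ^ 2 ∂νE) := by
    have hfun : (fun w => Real.exp (-ℓ * w) * (1 - Real.exp (-z * w)) ^ 2
          - z ^ 2 * hE w ^ 2)
        = (fun w => (2 * (1 - Real.exp (-(z + ℓ) * w) - (z + ℓ) * hE w)
            - (1 - Real.exp (-ℓ * w) - ℓ * hE w)
            - (1 - Real.exp (-(2 * z + ℓ) * w) - (2 * z + ℓ) * hE w))
            - z ^ 2 * hE w ^ 2) := by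
      funext w
      rw [show (-(z + ℓ) * w) = (-z * w) + (-ℓ * w) by ring,
        show (-(2 * z + ℓ) * w) = ((-z * w) + (-z * w)) + (-ℓ * w) by ring]
      simp only [Real.exp_add]
      ring
    have iA : Integrable (fun w => 2 * (1 - Real.exp (-(z + ℓ) * w) - (z + ℓ) * hE w))
        (νE.restrict (Ioi (-1))) := i1.const_mul 2
    have iB : Integrable (fun w => 2 * (1 - Real.exp (-(z + ℓ) * w) - (z + ℓ) * hE w)
        - (1 - Real.exp (-ℓ * w) - ℓ * hE w)) (νE.restrict (Ioi (-1))) := iA.sub i0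
    have iC : Integrable (fun w => 2 * (1 - Real.exp (-(z + ℓ) * w) - (z + ℓ) * hE w)
        - (1 - Real.exp (-ℓ * w) - ℓ * hE w)
        - (1 - Real.exp (-(2 * z + ℓ) * w) - (2 * z + ℓ) * hE w))
        (νE.restrict (Ioi (-1))) := iB.sub i2
    have iD : Integrable (fun w => z ^ 2 * hE w ^ 2) (νE.restrict (Ioi (-1))) :=
      intHE2.const_mul (z ^ 2)
    rw [hfun, integral_sub iC iD, integral_sub iB i2, integral_sub iA i0,
      integral_const_mul, integral_const_mul]
  have combD : (∫ r in Ioi (0:ℝ), ((1 - Real.exp (-r)) ^ 2 - hD r ^ 2) ∂νD)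
      = 2 * (∫ r in Ioi (0:ℝ), (1 - Real.exp (-1 * r) - 1 * hD r) ∂νD)
        - (∫ r in Ioi (0:ℝ), (1 - Real.exp (-2 * r) - 2 * hD r) ∂νD)
        - (∫ r in Ioi (0:ℝ), hD r ^ 2 ∂νD) := by
    have hfun : (fun r => (1 - Real.exp (-r)) ^ 2 - hD r ^ 2)
        = (fun r => (2 * (1 - Real.exp (-1 * r) - 1 * hD r)
            - (1 - Real.exp (-2 * r) - 2 * hD r)) - hD r ^ 2) := by
      funext r
      rw [show ((-2 : ℝ) * r) = (-r) + (-r) by ring, show ((-1 : ℝ) * r) = -r by ring]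
      simp only [Real.exp_add]
      ring
    have jA : Integrable (fun r => 2 * (1 - Real.exp (-1 * r) - 1 * hD r))
        (νD.restrict (Ioi 0)) := j1.const_mul 2
    have jB : Integrable (fun r => 2 * (1 - Real.exp (-1 * r) - 1 * hD r)
        - (1 - Real.exp (-2 * r) - 2 * hD r)) (νD.restrict (Ioi 0)) := jA.sub j2
    rw [hfun, integral_sub jB intHD2, integral_sub jA j2, integral_const_mul]
  have hγD0 : γD 0 = 0 := by
    rw [hγD 0]
    norm_num
  simp only [Finset.sum_range_succ, Finset.sum_range_zero]
  push_cast
  norm_num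
  rw [hγD0]
  have hPP : (∫ w in Ioi (-1:ℝ),
        (Real.exp (-ℓ * w) * (1 - Real.exp (-z * w)) ^ 2 - z ^ 2 * hE w ^ 2) ∂νE)
      = (∫ w in Ioi (-1:ℝ),
        (Real.exp (-(ℓ * w)) * (1 - Real.exp (-(z * w))) ^ 2 - z ^ 2 * hE w ^ 2) ∂νE) := by
    norm_num
  simp only [hγE, hγD, hβE, hβD]
  linear_combination -combE - z * combD + hPP
end
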